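/- arXiv:2009.07125 — 6 statements merged into one kernel-verified Lean document; each statement's English description precedes it below -/
import Mathlib

section
/- Let f : B → A be a unital *-homomorphism of finite-dimensional unital C*-algebras and let ω be a state on A. Then f(P_{ω∘f}^⊥) ≤ P_ω^⊥ and f(P_{ω∘f}) ≥ P_ω, where for a projection P one sets P^⊥ := 1 − P. -/
open scoped ComplexOrder

section CStarDefs
variable {A : Type*} [Ring A] [StarRing A] [Algebra ℂ A]

/-- A state: a positive unital linear functional (positivity encoded via the order on `ℂ`). -/
def IsState (ω : A →ₗ[ℂ] ℂ) : Prop :=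
  ω 1 = 1 ∧ ∀ a : A, 0 ≤ ω (star a * a)

/-- A projection in a `*`-algebra. -/
def IsProjection (p : A) : Prop := star p * p = p

/-- The C*-algebraic order: `a ≤ b` iff `b - a` is positive, i.e. of the form `star x * x`. -/
def CStarLe (a b : A) : Prop := ∃ x : A, b - a = star x * x

/-- `P` is the support of `ω`: the smallest projection with
`ω (P * a) = ω (a * P) = ω a` for all `a`. -/
def IsSupportOf (ω : A →ₗ[ℂ] ℂ) (P : A) : Prop :=
  IsProjection P ∧ (∀ a : A, ω (P * a) = ω a ∧ ω (a * P) = ω a) ∧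
    ∀ Q : A, IsProjection Q → (∀ a : A, ω (Q * a) = ω a ∧ ω (a * Q) = ω a) → CStarLe P Q

/-- Two states are mutually orthogonal iff their supports multiply to zero. -/
def MutuallyOrthogonal (ω ξ : A →ₗ[ℂ] ℂ) : Prop :=
  ∃ P Q : A, IsSupportOf ω P ∧ IsSupportOf ξ Q ∧ P * Q = 0

/-- A pure state: a state that cannot be written as a nontrivial convex combination of two
distinct states. -/
def IsPureState (ω : A →ₗ[ℂ] ℂ) : Prop :=
  IsState ω ∧ ∀ (l : ℝ) (ω₁ ω₂ : A →ₗ[ℂ] ℂ), 0 < l → l < 1 →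
    IsState ω₁ → IsState ω₂ → ω = (l : ℂ) • ω₁ + ((1 - l : ℝ) : ℂ) • ω₂ → ω₁ = ω₂

end CStarDefs

section Aux
variable {A : Type*} [Ring A] [StarRing A] [Algebra ℂ A] [StarModule ℂ A]

omit [Algebra ℂ A] [StarModule ℂ A] in
lemma IsProjection.star_eq {p : A} (hp : IsProjection p) : star p = p := by
  calc star p = star (star p * p) := by rw [hp]
    _ = star p * star (star p) := star_mul _ _
    _ = star p * p := by rw [star_star]
    _ = p := hp

omit [StarModule ℂ A] in
lemma state_im (ω : A →ₗ[ℂ] ℂ) (hω : IsState ω) (z : A) : (ω (star z * z)).im = 0 := by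
  have h := hω.2 z
  rw [Complex.le_def] at h
  exact h.2.symm

lemma state_herm (ω : A →ₗ[ℂ] ℂ) (hω : IsState ω) (x y : A) :
    ω (star y * x) = starRingEnd ℂ (ω (star x * y)) := by
  have e1 : ω (star (x + y) * (x + y)) =
      ω (star x * x) + ω (star x * y) + ω (star y * x) + ω (star y * y) := by
    rw [star_add, add_mul, mul_add, mul_add, map_add, map_add, map_add]; ring
  have e2 : ω (star ((Complex.I) • x + y) * ((Complex.I) • x + y)) =
      ω (star x * x) + (-Complex.I) * ω (star x * y) + Complex.I * ω (star y * x)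
        + ω (star y * y) := by
    simp only [star_add, star_smul, add_mul, mul_add, smul_mul_assoc, mul_smul_comm,
      map_add, map_smul, smul_smul, Complex.star_def, Complex.conj_I, smul_eq_mul]
    ring_nf
    simp [Complex.I_sq]
  have i1 := state_im ω hω (x + y); rw [e1] at i1
  have i2 := state_im ω hω ((Complex.I) • x + y); rw [e2] at i2
  have hx := state_im ω hω x; have hy := state_im ω hω y
  apply Complex.ext <;>
    simp only [Complex.add_im, Complex.add_re, Complex.mul_im, Complex.mul_re,
      Complex.neg_re, Complex.neg_im, Complex.I_re, Complex.I_im, Complex.conj_re,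
      Complex.conj_im] at i1 i2 ⊢ <;> linarith

lemma state_star (ω : A →ₗ[ℂ] ℂ) (hω : IsState ω) (a : A) :
    ω (star a) = starRingEnd ℂ (ω a) := by
  have h := state_herm ω hω a 1
  rw [star_one, one_mul, mul_one] at h
  rw [h, Complex.conj_conj]

lemma state_vanish (ω : A →ₗ[ℂ] ℂ) (hω : IsState ω) {e : A} (he : IsProjection e)
    (h0 : ω e = 0) (a : A) : ω (e * a) = 0 ∧ ω (a * e) = 0 := by
  have hse : star e = e := he.star_eq
  have hee : e * e = e := by nth_rewrite 1 [← hse]; exact he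
  have key : ∀ b : A, ω (e * b) = 0 := by
    intro b
    set c := ω (e * b) with hc
    by_contra hne
    have hcsq : (0:ℝ) < Complex.normSq c := Complex.normSq_pos.mpr hne
    set K := ω (star b * b) with hK
    set s : ℝ := (K.re + 1) / (2 * Complex.normSq c) with hs
    have hcross : ω (star b * e) = starRingEnd ℂ c := by
      rw [← hse, ← star_mul]
      exact state_star ω hω (e * b)
    have hpos := hω.2 (b - ((s:ℂ) * c) • e)
    have hexp : ω (star (b - ((s:ℂ) * c) • e) * (b - ((s:ℂ) * c) • e)) =
        K - ((s:ℂ) * c) * starRingEnd ℂ c - starRingEnd ℂ ((s:ℂ) * c) * c := by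
      simp only [star_sub, star_smul, hse, sub_mul, mul_sub, smul_mul_assoc, mul_smul_comm,
        smul_smul, hee, map_sub, map_smul, smul_eq_mul, hcross, ← hc, h0, mul_zero,
        Complex.star_def, ← hK]
      ring
    rw [hexp, Complex.le_def] at hpos
    have hre := hpos.1
    have h1 : ((s:ℂ) * c * starRingEnd ℂ c).re = s * Complex.normSq c := by
      rw [mul_assoc, Complex.mul_conj]
      simp
    have h2 : (starRingEnd ℂ ((s:ℂ) * c) * c).re = s * Complex.normSq c := by
      rw [map_mul, Complex.conj_ofReal, mul_assoc, mul_comm (starRingEnd ℂ c) c,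
        Complex.mul_conj]
      simp
    simp only [Complex.sub_re, h1, h2, Complex.zero_re] at hre
    have hscalc : s * Complex.normSq c = (K.re + 1) / 2 := by
      rw [hs]; field_simp
    rw [hscalc] at hre
    linarith
  refine ⟨key a, ?_⟩
  have h3 : ω (star (e * star a)) = starRingEnd ℂ (ω (e * star a)) := state_star ω hω _
  rw [star_mul, star_star, hse] at h3
  rw [h3, key (star a), map_zero]

end Aux

/-- For a unital `*`-homomorphism `f : B → A` of finite-dimensional unital
C*-algebras and a state `ω` on `A`, with support projections `P'` of `ω ∘ f` and `P` of `ω`,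
one has `f (1 - P') ≤ 1 - P` and `P ≤ f P'`. -/
theorem image_of_support_le
    {A B : Type*}
    [NormedRing A] [StarRing A] [CStarRing A] [NormedAlgebra ℂ A]
    [StarModule ℂ A] [FiniteDimensional ℂ A]
    [NormedRing B] [StarRing B] [CStarRing B] [NormedAlgebra ℂ B]
    [StarModule ℂ B] [FiniteDimensional ℂ B]
    (f : B →⋆ₐ[ℂ] A) (ω : A →ₗ[ℂ] ℂ) (hω : IsState ω)
    (P : A) (hP : IsSupportOf ω P)
    (P' : B) (hP' : IsSupportOf (ω.comp f.toAlgHom.toLinearMap) P') :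
    CStarLe (f (1 - P')) (1 - P) ∧ CStarLe P (f P') := by
  obtain ⟨hPproj, hPsup, hPmin⟩ := hP
  obtain ⟨hP'proj, hP'sup, -⟩ := hP'
  set Q : A := f P' with hQ
  have hQproj : IsProjection Q := by
    show star Q * Q = Q
    rw [hQ, ← map_star, ← map_mul]
    exact congrArg f hP'proj
  have hωQ : ω Q = 1 := by
    have h := (hP'sup 1).1
    simp only [LinearMap.comp_apply, mul_one, AlgHom.toLinearMap_apply,
      StarAlgHom.coe_toAlgHom, map_one] at h
    rw [hω.1] at h
    exact h
  have hsQ : star Q = Q := hQproj.star_eq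
  have hQQ : Q * Q = Q := by nth_rewrite 1 [← hsQ]; exact hQproj
  have heproj : IsProjection (1 - Q) := by
    show star (1 - Q) * (1 - Q) = 1 - Q
    rw [star_sub, star_one, hsQ, sub_mul, mul_sub, mul_sub, one_mul, mul_one, hQQ, sub_self, sub_zero, one_mul]
  have hωe : ω (1 - Q) = 0 := by rw [map_sub, hω.1, hωQ, sub_self]
  have hvan := state_vanish ω hω heproj hωe
  have hQsup : ∀ a : A, ω (Q * a) = ω a ∧ ω (a * Q) = ω a := by
    intro a
    constructor
    · have h := (hvan a).1
      rw [sub_mul, one_mul, map_sub, sub_eq_zero] at h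
      exact h.symm
    · have h := (hvan a).2
      rw [mul_sub, mul_one, map_sub, sub_eq_zero] at h
      exact h.symm
  obtain ⟨x, hx⟩ := hPmin Q hQproj hQsup
  have hf1 : f (1 - P') = 1 - Q := by rw [map_sub, map_one]
  constructor
  · exact ⟨x, by rw [hf1, ← hx]; abel⟩
  · exact ⟨x, hx⟩
end

section
/- Let f : B → A be a unital *-homomorphism of finite-dimensional unital C*-algebras and let ω, ξ be states on A that are not mutually orthogonal (i.e., P_ω P_ξ ≠ 0). Then ω∘f and ξ∘f are not mutually orthogonal. -/
open scoped ComplexOrder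

section AuxLemmas

/-- In a C*-algebra, a sum of two positive elements vanishing forces each to vanish. -/
lemma aux_sum_star_mul_self_eq_zero {A : Type*} [CStarAlgebra A] {x y : A}
    (h : star x * x + star y * y = 0) : x = 0 := by
  have hx : SpectrumRestricts (star x * x) ContinuousMap.realToNNReal := by
    rw [SpectrumRestricts.nnreal_iff]; exact spectrum_star_mul_self_nonneg
  have hneg : -(star x * x) = star y * y := by
    rw [neg_eq_iff_add_eq_zero]; simpa [add_comm] using h
  have hy : SpectrumRestricts (-(star x * x)) ContinuousMap.realToNNReal := by
    rw [hneg, SpectrumRestricts.nnreal_iff]; exact spectrum_star_mul_self_nonneg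
  have := SpectrumRestricts.eq_zero_of_neg (.star_mul_self x) hx hy
  exact (CStarRing.star_mul_self_eq_zero_iff x).mp this

lemma aux_key_complex {K c : ℂ} (h : ∀ r : ℝ, 0 ≤ K + r * c) : c = 0 := by
  have him : ∀ r : ℝ, (K + r * c).im = 0 := fun r => ((Complex.le_def.mp (h r)).2).symm
  have hc_im : c.im = 0 := by
    have h0 := him 0
    have h1 := him 1
    simp [Complex.add_im, Complex.mul_im] at h0 h1
    linarith
  have hc_re : c.re = 0 := by
    by_contra hne
    have hr := (Complex.le_def.mp (h ((-K.re - 1) / c.re))).1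
    rw [Complex.add_re, Complex.mul_re] at hr
    simp [Complex.ofReal_re, Complex.ofReal_im, hc_im] at hr
    rw [div_mul_cancel₀ _ hne] at hr
    linarith
  exact Complex.ext hc_re hc_im

/-- If `s` is a self-adjoint idempotent annihilated by a state `ω`, then `s` is in the left and
right kernel of `ω`. -/
lemma aux_state_mul_zero {A : Type*} [Ring A] [StarRing A] [Algebra ℂ A] [StarModule ℂ A]
    {ω : A →ₗ[ℂ] ℂ} (hω : IsState ω) {s : A} (hs : star s = s) (hss : s * s = s)
    (h0 : ω s = 0) (a : A) : ω (star a * s) = 0 ∧ ω (s * a) = 0 := by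
  set c := ω (star a * s) with hc
  set d := ω (s * a) with hd
  set K := ω (star a * a) with hK
  have key : ∀ t : ℂ, 0 ≤ K + t * c + (starRingEnd ℂ) t * d := by
    intro t
    have expand : star (a + t • s) * (a + t • s)
        = star a * a + t • (star a * s) + ((starRingEnd ℂ) t) • (s * a)
          + ((starRingEnd ℂ) t * t) • (s * s) := by
      simp only [star_add, star_smul, hs, add_mul, mul_add, smul_mul_assoc, mul_smul_comm,
        smul_smul, smul_add, starRingEnd_apply, mul_comm]
      abel
    have h := hω.2 (a + t • s)
    rw [expand] at h
    simp only [map_add, map_smul, smul_eq_mul, hss, h0, mul_zero, add_zero] at h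
    exact h
  have hsum : c + d = 0 := by
    apply aux_key_complex (K := K)
    intro r
    have h2 : K + (r : ℂ) * (c + d) = K + (r:ℂ)*c + (r:ℂ)*d := by ring
    rw [h2]
    simpa [Complex.conj_ofReal] using key (r : ℂ)
  have hdiff : Complex.I * (c - d) = 0 := by
    apply aux_key_complex (K := K)
    intro r
    have h2 : K + (r : ℂ) * (Complex.I * (c - d))
        = K + ((r:ℂ) * Complex.I)*c + ((r:ℂ) * (-Complex.I))*d := by ring
    rw [h2]
    have := key ((r:ℂ) * Complex.I)
    simpa [map_mul, Complex.conj_ofReal, Complex.conj_I, mul_comm, mul_assoc, mul_left_comm,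
      neg_mul, mul_neg] using this
  have hcd : c = d := by
    rcases mul_eq_zero.mp hdiff with h | h
    · exact absurd h Complex.I_ne_zero
    · exact sub_eq_zero.mp h
  have hd0 : d = 0 := by
    rw [hcd] at hsum
    exact add_self_eq_zero.mp hsum
  exact ⟨hcd.trans hd0, hd0⟩

lemma aux_proj_selfAdjoint {A : Type*} [Ring A] [StarRing A] {P : A}
    (hP : IsProjection P) : star P = P :=
  calc star P = star (star P * P) := by rw [hP]
    _ = star P * P := by rw [star_mul, star_star]
    _ = P := hP

lemma aux_proj_idem {A : Type*} [Ring A] [StarRing A] {P : A}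
    (hP : IsProjection P) : P * P = P := by
  nth_rewrite 1 [← aux_proj_selfAdjoint hP]
  exact hP

/-- For projections, `P ≤ Q` in the C*-order implies `P * Q = P = Q * P`. -/
lemma aux_proj_le {A : Type*} [CStarAlgebra A] {P Q : A} (hP : IsProjection P)
    (hQ : IsProjection Q) (h : CStarLe P Q) : P * Q = P ∧ Q * P = P := by
  obtain ⟨x, hx⟩ := h
  have hPsa := aux_proj_selfAdjoint hP
  have hQsa := aux_proj_selfAdjoint hQ
  have hPid := aux_proj_idem hP
  have hQid := aux_proj_idem hQ
  have hEE : (1 - Q) * (1 - Q) = 1 - Q := by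
    rw [sub_mul, one_mul, mul_sub, mul_one, hQid]
    abel
  have key : star ((1 - Q) * P) * ((1 - Q) * P) + star (x * P) * (x * P) = 0 := by
    have h1 : star ((1 - Q) * P) * ((1 - Q) * P) = P - P * (Q * P) := by
      rw [star_mul, star_sub, star_one, hPsa, hQsa, mul_assoc, ← mul_assoc (1 - Q), hEE]
      rw [sub_mul, one_mul, mul_sub, hPid]
    have h2 : star (x * P) * (x * P) = P * (Q * P) - P := by
      rw [star_mul, hPsa, mul_assoc, ← mul_assoc (star x) x P, ← hx]
      rw [sub_mul, hPid, mul_sub, hPid]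
    rw [h1, h2]
    abel
  have hz : (1 - Q) * P = 0 := aux_sum_star_mul_self_eq_zero key
  have hQP : Q * P = P := by
    have := hz
    rw [sub_mul, one_mul, sub_eq_zero] at this
    exact this.symm
  refine ⟨?_, hQP⟩
  calc P * Q = star (Q * P) := by rw [star_mul, hPsa, hQsa]
    _ = star P := by rw [hQP]
    _ = P := hPsa

end AuxLemmas

/-- Let `f : B → A` be a unital `*`-homomorphism of finite-dimensional
unital C*-algebras and let `ω, ξ` be states on `A` that are not mutually orthogonal
(their supports satisfy `P_ω * P_ξ ≠ 0`). Then `ω ∘ f` and `ξ ∘ f` are not mutually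
orthogonal either. -/
theorem overlapping_states_stay_overlapping
    {A B : Type*}
    [NormedRing A] [StarRing A] [CStarRing A] [NormedAlgebra ℂ A]
    [StarModule ℂ A] [FiniteDimensional ℂ A]
    [NormedRing B] [StarRing B] [CStarRing B] [NormedAlgebra ℂ B]
    [StarModule ℂ B] [FiniteDimensional ℂ B]
    (f : B →⋆ₐ[ℂ] A) (ω ξ : A →ₗ[ℂ] ℂ) (hω : IsState ω) (hξ : IsState ξ)
    (Pω Pξ : A) (hPω : IsSupportOf ω Pω) (hPξ : IsSupportOf ξ Pξ)
    (hover : Pω * Pξ ≠ 0)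
    (Pω' Pξ' : B) (hPω' : IsSupportOf (ω.comp f.toAlgHom.toLinearMap) Pω')
    (hPξ' : IsSupportOf (ξ.comp f.toAlgHom.toLinearMap) Pξ') :
    Pω' * Pξ' ≠ 0 := by
  letI : CompleteSpace A := FiniteDimensional.complete ℂ A
  letI : CStarAlgebra A := { }
  intro hcontra
  set Q := f Pω' with hQdef
  set R := f Pξ' with hRdef
  have hQproj : IsProjection Q := by
    show star Q * Q = Q
    rw [hQdef, ← map_star, ← map_mul, hPω'.1]
  have hRproj : IsProjection R := by
    show star R * R = R
    rw [hRdef, ← map_star, ← map_mul, hPξ'.1]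
  -- a general claim: if a projection T = f T' where T' is the support of ω∘f, then ω T = 1
  have hωQ : ω Q = 1 := by
    have := (hPω'.2.1 1).1
    simpa [LinearMap.comp_apply, map_one, hω.1] using this
  have hξR : ξ R = 1 := by
    have := (hPξ'.2.1 1).1
    simpa [LinearMap.comp_apply, map_one, hξ.1] using this
  -- Q satisfies the support inequality for ω
  have hsupport : ∀ (ψ : A →ₗ[ℂ] ℂ) (T : A), IsState ψ → IsProjection T → ψ T = 1 →
      ∀ a : A, ψ (T * a) = ψ a ∧ ψ (a * T) = ψ a := by
    intro ψ T hψ hT hψT a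
    have hs : star (1 - T) = 1 - T := by rw [star_sub, star_one, aux_proj_selfAdjoint hT]
    have hss : (1 - T) * (1 - T) = 1 - T := by
      rw [sub_mul, one_mul, mul_sub, mul_one, aux_proj_idem hT]
      abel
    have h0 : ψ (1 - T) = 0 := by rw [map_sub, hψ.1, hψT, sub_self]
    have h1 := (aux_state_mul_zero hψ hs hss h0 a).2
    have h2 := (aux_state_mul_zero hψ hs hss h0 (star a)).1
    rw [star_star] at h2
    constructor
    · have : T * a = a - (1 - T) * a := by rw [sub_mul, one_mul]; abel
      rw [this, map_sub, h1, sub_zero]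
    · have : a * T = a - a * (1 - T) := by rw [mul_sub, mul_one]; abel
      rw [this, map_sub, h2, sub_zero]
  have hle1 : CStarLe Pω Q := hPω.2.2 Q hQproj (hsupport ω Q hω hQproj hωQ)
  have hle2 : CStarLe Pξ R := hPξ.2.2 R hRproj (hsupport ξ R hξ hRproj hξR)
  have h1 := (aux_proj_le hPω.1 hQproj hle1).1  -- Pω * Q = Pω
  have h2 := (aux_proj_le hPξ.1 hRproj hle2).2  -- R * Pξ = Pξ
  have hQR : Q * R = 0 := by rw [hQdef, hRdef, ← map_mul, hcontra, map_zero]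
  apply hover
  calc Pω * Pξ = (Pω * Q) * (R * Pξ) := by rw [h1, h2]
    _ = Pω * (Q * R) * Pξ := by rw [mul_assoc, mul_assoc, mul_assoc]
    _ = 0 := by rw [hQR, mul_zero, zero_mul]
end

section
/- Let X be a finite set, {ρ_x}_{x∈X} a family of density matrices in M_n(ℂ), and p a probability distribution on X. Then Σ_{x∈X} p_x S(ρ_x) ≤ S(Σ_{x∈X} p_x ρ_x) ≤ H(p) + Σ_{x∈X} p_x S(ρ_x). Furthermore, the second inequality is an equality if and only if ρ_x ρ_{x'} = 0 for all distinct x, x' ∈ X with p_x ≠ 0 and p_{x'} ≠ 0. -/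
open scoped ComplexOrder

/-- The von Neumann entropy of a (hermitian) matrix: `∑ -λ log λ` over its eigenvalues,
with the convention `0 log 0 = 0`. -/
noncomputable def vnEntropy {ι : Type*} [Fintype ι] [DecidableEq ι] (ρ : Matrix ι ι ℂ) : ℝ :=
  if h : ρ.IsHermitian then ∑ i, Real.negMulLog (h.eigenvalues i) else 0

/-- Shannon entropy of a finitely supported distribution (`0 log 0 = 0`). -/
noncomputable def shannonEntropy {X : Type*} [Fintype X] (p : X → ℝ) : ℝ :=
  ∑ x, Real.negMulLog (p x)

def IsProbDist {X : Type*} [Fintype X] (p : X → ℝ) : Prop :=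
  (∀ x, 0 ≤ p x) ∧ ∑ x, p x = 1

def IsDensityMatrix {ι : Type*} [Fintype ι] (ρ : Matrix ι ι ℂ) : Prop :=
  ρ.PosSemidef ∧ ρ.trace = 1

namespace VNAux

open Matrix Polynomial

variable {m k : Type*} [Fintype m] [DecidableEq m] [Fintype k] [DecidableEq k]

lemma charpoly_conj {R : Type*} [CommRing R] (U V A : Matrix m m R) (hUV : U * V = 1) :
    (U * A * V).charpoly = A.charpoly := by
  have hcm : charmatrix (U * A * V) = U.map C * charmatrix A * V.map C := by
    have hUV' : U.map C * V.map C = 1 := by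
      rw [← Matrix.map_mul, hUV, Matrix.map_one _ (map_zero C) (map_one C)]
    have hcomm : U.map C * Matrix.scalar m (X : R[X]) = Matrix.scalar m (X : R[X]) * U.map C :=
      ((Matrix.scalar_commute (X : R[X]) (fun r => Commute.all _ _) (U.map C))).symm.eq
    calc charmatrix (U * A * V)
        = Matrix.scalar m (X : R[X]) - (U * A * V).map C := rfl
      _ = Matrix.scalar m (X : R[X]) * (U.map C * V.map C)
            - U.map C * A.map C * V.map C := by
          rw [hUV', mul_one, Matrix.map_mul, Matrix.map_mul]
      _ = U.map C * charmatrix A * V.map C := by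
          rw [charmatrix, mul_sub, sub_mul]
          congr 1
          rw [← mul_assoc, hcomm]
  rw [Matrix.charpoly, hcm, det_mul, det_mul, Matrix.charpoly]
  have h5 : (U.map C).det * (V.map C).det = 1 := by
    rw [← det_mul, ← Matrix.map_mul, hUV, Matrix.map_one _ (map_zero C) (map_one C), det_one]
  calc (U.map C).det * A.charmatrix.det * (V.map C).det
      = (U.map C).det * (V.map C).det * A.charmatrix.det := by ring
    _ = A.charmatrix.det := by rw [h5, one_mul]

/-- `charpoly (A*B) = charpoly (B*A)` for square complex matrices. -/
lemma charpoly_mul_comm (A B : Matrix m m ℂ) : (A * B).charpoly = (B * A).charpoly := by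
  classical
  set K := FractionRing (Polynomial ℂ)
  let ι : Polynomial ℂ →+* K := algebraMap (Polynomial ℂ) K
  have hι : Function.Injective ι := IsFractionRing.injective (Polynomial ℂ) K
  set A₁ : Matrix m m (Polynomial ℂ) := charmatrix (-A) with hA₁
  set B₁ : Matrix m m (Polynomial ℂ) := B.map C with hB₁
  have hdet : A₁.det ≠ 0 := (Matrix.charpoly_monic (-A)).ne_zero
  have hdetK : IsUnit (A₁.map ι).det := by
    have hmd : (A₁.map ι).det = ι A₁.det := (RingHom.map_det ι A₁).symm
    rw [isUnit_iff_ne_zero, hmd]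
    exact fun h => hdet (hι (by rw [h, map_zero]))
  obtain ⟨U, hUeq⟩ := (Matrix.isUnit_iff_isUnit_det _).mpr hdetK
  have hconj : B₁.map ι * A₁.map ι
      = ((U⁻¹ : (Matrix m m K)ˣ) : Matrix m m K) * (A₁.map ι * B₁.map ι)
        * ((U : (Matrix m m K)ˣ) : Matrix m m K) := by
    rw [← hUeq, ← mul_assoc, Units.inv_mul, one_mul]
  have hK : (A₁.map ι * B₁.map ι).charpoly = (B₁.map ι * A₁.map ι).charpoly := by
    rw [hconj, charpoly_conj _ _ _ (Units.inv_mul U)]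
  have hR : (A₁ * B₁).charpoly = (B₁ * A₁).charpoly := by
    apply Polynomial.map_injective ι hι
    rw [← Matrix.charpoly_map (A₁ * B₁) ι, ← Matrix.charpoly_map (B₁ * A₁) ι,
      Matrix.map_mul, Matrix.map_mul, hK]
  let ev : Polynomial ℂ →+* ℂ := Polynomial.evalRingHom 0
  have hAe : A₁.map ev = A := by
    ext i j
    by_cases h : i = j
    · subst h; simp [hA₁, charmatrix_apply_eq, ev]
    · simp [hA₁, charmatrix_apply_ne _ _ _ h, ev]
  have hBe : B₁.map ev = B := by
    ext i j; simp [hB₁, ev]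
  calc (A * B).charpoly = ((A₁ * B₁).map ev).charpoly := by
        rw [Matrix.map_mul, hAe, hBe]
    _ = ((B₁ * A₁).map ev).charpoly := by
        rw [Matrix.charpoly_map, Matrix.charpoly_map, hR]
    _ = (B * A).charpoly := by rw [Matrix.map_mul, hAe, hBe]

lemma charpoly_diagonal {R : Type*} [CommRing R] (d : m → R) :
    (diagonal d).charpoly = ∏ i, (X - C (d i)) := by
  rw [Matrix.charpoly]
  have : charmatrix (diagonal d) = diagonal (fun i => X - C (d i)) := by
    ext i j
    by_cases h : i = j
    · subst h; simp
    · simp [charmatrix_apply, diagonal_apply_ne _ h]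
  rw [this, det_diagonal]

lemma vnEntropy_eq {A : Matrix m m ℂ} (hA : A.IsHermitian) :
    vnEntropy A = ∑ i, Real.negMulLog (hA.eigenvalues i) := by
  rw [vnEntropy, dif_pos hA]

lemma sum_negMulLog_eq_of_prod_eq {s t : Multiset ℝ}
    (h : (s.map (fun a : ℝ => X - C (a : ℂ))).prod = (t.map (fun a : ℝ => X - C (a : ℂ))).prod) :
    (s.map Real.negMulLog).sum = (t.map Real.negMulLog).sum := by
  have h3 := congrArg Polynomial.roots h
  rw [show (fun a : ℝ => X - C (a : ℂ)) = (fun z : ℂ => X - C z) ∘ (fun a : ℝ => (a : ℂ)) from rfl,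
    ← Multiset.map_map, ← Multiset.map_map, roots_multiset_prod_X_sub_C,
    roots_multiset_prod_X_sub_C] at h3
  rw [Multiset.map_injective (Complex.ofReal_injective) h3]

lemma charpoly_isHermitian {A : Matrix m m ℂ} (hA : A.IsHermitian) :
    A.charpoly = ∏ i, (X - C ((hA.eigenvalues i : ℝ) : ℂ)) := by
  conv_lhs => rw [hA.spectral_theorem, Unitary.conjStarAlgAut_apply]
  rw [charpoly_conj _ _ _ (Matrix.mem_unitaryGroup_iff.mp hA.eigenvectorUnitary.2),
    charpoly_diagonal]
  congr 1

lemma charpoly_hermitian_multiset {A : Matrix m m ℂ} (hA : A.IsHermitian) :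
    A.charpoly = ((Finset.univ.val.map hA.eigenvalues).map (fun a : ℝ => X - C (a : ℂ))).prod := by
  rw [charpoly_isHermitian hA, Multiset.map_map, Finset.prod]
  rfl

lemma vnEntropy_mul_conjTranspose (M : Matrix m k ℂ) :
    vnEntropy (M * Mᴴ) = vnEntropy (Mᴴ * M) := by
  have h1 : (M * Mᴴ).IsHermitian := isHermitian_mul_conjTranspose_self M
  have h2 : (Mᴴ * M).IsHermitian := isHermitian_conjTranspose_mul_self M
  set A' : Matrix (m ⊕ k) (m ⊕ k) ℂ := fromBlocks 0 M 0 0 with hA'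
  set B' : Matrix (m ⊕ k) (m ⊕ k) ℂ := fromBlocks 0 0 Mᴴ 0 with hB'
  have hAB : A' * B' = fromBlocks (M * Mᴴ) 0 0 0 := by
    rw [hA', hB', fromBlocks_multiply]; simp
  have hBA : B' * A' = fromBlocks 0 0 0 (Mᴴ * M) := by
    rw [hA', hB', fromBlocks_multiply]; simp
  have hzk : (0 : Matrix k k ℂ).charpoly = X ^ (Fintype.card k) := by
    rw [← diagonal_zero, charpoly_diagonal]; simp [Finset.card_univ]
  have hzm : (0 : Matrix m m ℂ).charpoly = X ^ (Fintype.card m) := by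
    rw [← diagonal_zero, charpoly_diagonal]; simp [Finset.card_univ]
  have hcp : (M * Mᴴ).charpoly * X ^ (Fintype.card k)
      = (Mᴴ * M).charpoly * X ^ (Fintype.card m) := by
    have := charpoly_mul_comm A' B'
    rw [hAB, hBA, charpoly_fromBlocks_zero₂₁, charpoly_fromBlocks_zero₂₁, hzk, hzm] at this
    rw [this, mul_comm]
  have hms : ((Finset.univ.val.map h1.eigenvalues + Multiset.replicate (Fintype.card k) (0:ℝ)).map
        (fun a : ℝ => X - C (a : ℂ))).prod
      = ((Finset.univ.val.map h2.eigenvalues + Multiset.replicate (Fintype.card m) (0:ℝ)).map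
        (fun a : ℝ => X - C (a : ℂ))).prod := by
    rw [Multiset.map_add, Multiset.map_add, Multiset.prod_add, Multiset.prod_add,
      Multiset.map_replicate, Multiset.map_replicate]
    simp only [Complex.ofReal_zero, map_zero, sub_zero, Multiset.prod_replicate]
    rw [← charpoly_hermitian_multiset h1, ← charpoly_hermitian_multiset h2, hcp]
  have := sum_negMulLog_eq_of_prod_eq hms
  rw [Multiset.map_add, Multiset.map_add, Multiset.sum_add, Multiset.sum_add,
    Multiset.map_replicate, Multiset.map_replicate] at this
  simp only [Real.negMulLog_zero, Multiset.sum_replicate, smul_zero, add_zero] at this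
  rw [Multiset.map_map, Multiset.map_map] at this
  rw [vnEntropy_eq h1, vnEntropy_eq h2]
  exact this

lemma vnEntropy_eq_of_conj {A U : Matrix m m ℂ} (hU : U ∈ Matrix.unitaryGroup m ℂ) (d : m → ℝ)
    (h : A = U * diagonal (fun i => (d i : ℂ)) * star U) :
    vnEntropy A = ∑ i, Real.negMulLog (d i) := by
  have hA : A.IsHermitian := by
    rw [h]
    have : (diagonal (fun i => ((d i : ℝ) : ℂ))).IsHermitian :=
      isHermitian_diagonal_of_self_adjoint _ (by funext i; exact Complex.conj_ofReal _)
    exact Matrix.isHermitian_mul_mul_conjTranspose U this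
  have hch : A.charpoly = ∏ i, (X - C ((d i : ℝ) : ℂ)) := by
    rw [h, charpoly_conj _ _ _ (Matrix.mem_unitaryGroup_iff.mp hU), charpoly_diagonal]
  have hms : ((Finset.univ.val.map hA.eigenvalues).map (fun a : ℝ => X - C (a : ℂ))).prod
      = ((Finset.univ.val.map d).map (fun a : ℝ => X - C (a : ℂ))).prod := by
    rw [← charpoly_hermitian_multiset hA, hch, Multiset.map_map, Finset.prod]
    rfl
  have := sum_negMulLog_eq_of_prod_eq hms
  rw [Multiset.map_map, Multiset.map_map] at this
  rw [vnEntropy_eq hA]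
  exact this

lemma conj_diag_apply (V : Matrix m m ℂ) (d : m → ℝ) (i j : m) :
    (V * diagonal (fun a => (d a : ℂ)) * Vᴴ) i j
      = ∑ a, (d a : ℂ) * (V i a * (starRingEnd ℂ) (V j a)) := by
  rw [Matrix.mul_apply]
  refine Finset.sum_congr rfl fun a _ => ?_
  rw [Matrix.mul_diagonal, Matrix.conjTranspose_apply, Complex.star_def]
  ring

lemma spectral_theorem' {A : Matrix m m ℂ} (hA : A.IsHermitian) :
    A = (hA.eigenvectorUnitary : Matrix m m ℂ)
        * diagonal (fun i => ((hA.eigenvalues i : ℝ) : ℂ))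
        * (hA.eigenvectorUnitary : Matrix m m ℂ)ᴴ := by
  conv_lhs => rw [hA.spectral_theorem]
  rfl

lemma star_spectral_theorem' {A : Matrix m m ℂ} (hA : A.IsHermitian) :
    (hA.eigenvectorUnitary : Matrix m m ℂ)ᴴ * A * (hA.eigenvectorUnitary : Matrix m m ℂ)
      = diagonal (fun i => ((hA.eigenvalues i : ℝ) : ℂ)) :=
  by
    have := hA.conjStarAlgAut_star_eigenvectorUnitary
    simpa [Unitary.conjStarAlgAut_apply, Function.comp_def, Matrix.star_eq_conjTranspose] using this

lemma unitary_row_sum {V : Matrix m m ℂ} (hV : V ∈ Matrix.unitaryGroup m ℂ) (i : m) :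
    ∑ j, Complex.normSq (V i j) = 1 := by
  have h := Matrix.mem_unitaryGroup_iff.mp hV
  have h2 := congrFun (congrFun h i) i
  rw [Matrix.mul_apply, Matrix.one_apply_eq] at h2
  have h3 : ∑ j, ((Complex.normSq (V i j) : ℝ) : ℂ) = 1 := by
    rw [← h2]
    exact Finset.sum_congr rfl fun j _ => (Complex.mul_conj _).symm
  rw [← Complex.ofReal_sum] at h3
  exact_mod_cast h3

lemma unitary_col_sum {V : Matrix m m ℂ} (hV : V ∈ Matrix.unitaryGroup m ℂ) (j : m) :
    ∑ i, Complex.normSq (V i j) = 1 := by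
  have h := Matrix.mem_unitaryGroup_iff'.mp hV
  have h2 := congrFun (congrFun h j) j
  rw [Matrix.mul_apply, Matrix.one_apply_eq] at h2
  have h3 : ∑ i, ((Complex.normSq (V i j) : ℝ) : ℂ) = 1 := by
    rw [← h2]
    exact Finset.sum_congr rfl fun i _ => ((mul_comm _ _).trans (Complex.mul_conj _)).symm
  rw [← Complex.ofReal_sum] at h3
  exact_mod_cast h3

/-- von Neumann entropy is at most the Shannon entropy of the diagonal, with equality iff
the matrix is diagonal. -/
lemma vnEntropy_le_diag {σ : Matrix m m ℂ} (hσ : σ.PosSemidef) (d : m → ℝ)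
    (hd : ∀ i, σ i i = (d i : ℂ)) :
    vnEntropy σ ≤ ∑ i, Real.negMulLog (d i)
    ∧ (vnEntropy σ = ∑ i, Real.negMulLog (d i) ↔ σ = diagonal (fun i => (d i : ℂ))) := by
  classical
  have hA : σ.IsHermitian := hσ.1
  set W : Matrix m m ℂ := (hA.eigenvectorUnitary : Matrix m m ℂ) with hW
  have hWmem : W ∈ Matrix.unitaryGroup m ℂ := hA.eigenvectorUnitary.2
  set lam : m → ℝ := hA.eigenvalues with hlam
  have hspec : σ = W * diagonal (fun i => ((lam i : ℝ) : ℂ)) * Wᴴ := spectral_theorem' hA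
  set B : m → m → ℝ := fun i j => Complex.normSq (W i j) with hB
  have hBnn : ∀ i j, 0 ≤ B i j := fun i j => Complex.normSq_nonneg _
  have hrow : ∀ i, ∑ j, B i j = 1 := fun i => unitary_row_sum hWmem i
  have hcol : ∀ j, ∑ i, B i j = 1 := fun j => unitary_col_sum hWmem j
  have hlnn : ∀ j, 0 ≤ lam j := hσ.eigenvalues_nonneg
  have hdi : ∀ i, d i = ∑ j, B i j * lam j := by
    intro i
    have h1 : ((d i : ℝ) : ℂ) = ∑ a, ((lam a : ℝ) : ℂ) * (W i a * (starRingEnd ℂ) (W i a)) := by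
      rw [← hd i]
      conv_lhs => rw [hspec]
      exact conj_diag_apply W lam i i
    have h2 : ((d i : ℝ) : ℂ) = ∑ a, ((B i a * lam a : ℝ) : ℂ) := by
      rw [h1]
      exact Finset.sum_congr rfl fun a _ => by
        rw [Complex.mul_conj]
        push_cast
        ring
    rw [← Complex.ofReal_sum] at h2
    exact Complex.ofReal_injective h2
  have hJle : ∀ i, ∑ j, B i j * Real.negMulLog (lam j) ≤ Real.negMulLog (d i) := by
    intro i
    have := Real.concaveOn_negMulLog.le_map_sum (t := Finset.univ) (w := B i) (p := lam)
      (fun j _ => hBnn i j) (hrow i) (fun j _ => hlnn j)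
    simpa [smul_eq_mul, ← hdi i] using this
  have hJeq : ∀ i, (Real.negMulLog (d i) = ∑ j, B i j * Real.negMulLog (lam j)
      ↔ ∀ j, B i j ≠ 0 → lam j = d i) := by
    intro i
    have := Real.strictConcaveOn_negMulLog.map_sum_eq_iff' (t := Finset.univ) (w := B i) (p := lam)
      (fun j _ => hBnn i j) (hrow i) (fun j _ => hlnn j)
    simp only [smul_eq_mul, ← hdi i] at this
    constructor
    · intro he j hj
      exact (this.mp he) j (Finset.mem_univ j) hj
    · intro hc
      exact this.mpr fun j _ hj => hc j hj
  have hSE : vnEntropy σ = ∑ i, ∑ j, B i j * Real.negMulLog (lam j) := by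
    rw [vnEntropy_eq hA, Finset.sum_comm]
    exact Finset.sum_congr rfl fun j _ => by
      rw [← Finset.sum_mul, hcol j, one_mul]
  constructor
  · rw [hSE]
    exact Finset.sum_le_sum fun i _ => hJle i
  constructor
  · intro heq
    rw [hSE] at heq
    have hterm : ∀ i ∈ Finset.univ, ∑ j, B i j * Real.negMulLog (lam j) = Real.negMulLog (d i) :=
      (Finset.sum_eq_sum_iff_of_le (fun i _ => hJle i)).mp heq
    have hc : ∀ i j, B i j ≠ 0 → lam j = d i :=
      fun i => (hJeq i).mp (hterm i (Finset.mem_univ i)).symm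
    ext i j
    rw [hspec, conj_diag_apply]
    have hterm2 : ∀ a, ((lam a : ℝ) : ℂ) * (W i a * (starRingEnd ℂ) (W j a))
        = ((d i : ℝ) : ℂ) * (W i a * (starRingEnd ℂ) (W j a)) := by
      intro a
      by_cases hw : W i a = 0
      · rw [hw]; ring
      · have : B i a ≠ 0 := fun hz => hw (Complex.normSq_eq_zero.mp hz)
        rw [hc i a this]
    rw [Finset.sum_congr rfl fun a _ => hterm2 a, ← Finset.mul_sum]
    have hWW : ∑ a, W i a * (starRingEnd ℂ) (W j a) = (1 : Matrix m m ℂ) i j := by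
      have h := Matrix.mem_unitaryGroup_iff.mp hWmem
      have h2 := congrFun (congrFun h i) j
      rw [Matrix.mul_apply] at h2
      rw [← h2]
      rfl
    rw [hWW]
    by_cases hij : i = j
    · subst hij; rw [Matrix.one_apply_eq, diagonal_apply_eq, mul_one]
    · rw [Matrix.one_apply_ne hij, diagonal_apply_ne _ hij, mul_zero]
  · intro hdiag
    refine vnEntropy_eq_of_conj (Submonoid.one_mem _) d ?_
    rw [hdiag]
    simp

end VNAux

open Matrix in
/-- Concavity bounds for the von Neumann entropy of a convex combination of
density matrices: `∑ₓ pₓ S(ρₓ) ≤ S(∑ₓ pₓ ρₓ) ≤ H(p) + ∑ₓ pₓ S(ρₓ)`, with equality in the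
second inequality iff the `ρₓ` with nonzero weights have mutually orthogonal supports
(`ρₓ ρₓ' = 0`). -/
theorem vnEntropy_convex_combination
    {X : Type*} [Fintype X] {n : ℕ}
    (ρ : X → Matrix (Fin n) (Fin n) ℂ)
    (hρ : ∀ x, IsDensityMatrix (ρ x))
    (p : X → ℝ) (hp : IsProbDist p) :
    (∑ x, p x * vnEntropy (ρ x)) ≤ vnEntropy (∑ x, (p x : ℂ) • ρ x) ∧
    vnEntropy (∑ x, (p x : ℂ) • ρ x) ≤ shannonEntropy p + ∑ x, p x * vnEntropy (ρ x) ∧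
    (vnEntropy (∑ x, (p x : ℂ) • ρ x) = shannonEntropy p + ∑ x, p x * vnEntropy (ρ x) ↔
      ∀ x x' : X, x ≠ x' → p x ≠ 0 → p x' ≠ 0 → ρ x * ρ x' = 0) := by
  classical
  obtain ⟨hpnn, hpsum⟩ := hp
  have hH : ∀ x, (ρ x).IsHermitian := fun x => (hρ x).1.1
  set U : X → Matrix (Fin n) (Fin n) ℂ :=
    fun x => ((hH x).eigenvectorUnitary : Matrix (Fin n) (Fin n) ℂ) with hU
  set μ : X → Fin n → ℝ := fun x => (hH x).eigenvalues with hμ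
  have hUmem : ∀ x, U x ∈ Matrix.unitaryGroup (Fin n) ℂ := fun x => (hH x).eigenvectorUnitary.2
  have hspec : ∀ x, ρ x = U x * Matrix.diagonal (fun j => ((μ x j : ℝ) : ℂ)) * (U x)ᴴ :=
    fun x => VNAux.spectral_theorem' (hH x)
  have hμnn : ∀ x j, 0 ≤ μ x j := fun x j => (hρ x).1.eigenvalues_nonneg j
  have hUU : ∀ x, (U x)ᴴ * U x = 1 := fun x => Matrix.mem_unitaryGroup_iff'.mp (hUmem x)
  have hμsum : ∀ x, ∑ j, μ x j = 1 := by
    intro x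
    have h1 : (ρ x).trace = ∑ j, ((μ x j : ℝ) : ℂ) := by
      conv_lhs => rw [hspec x]
      rw [Matrix.trace_mul_cycle, hUU x, Matrix.one_mul, Matrix.trace_diagonal]
    rw [(hρ x).2, ← Complex.ofReal_sum] at h1
    exact_mod_cast h1.symm
  have hvn : ∀ x, vnEntropy (ρ x) = ∑ j, Real.negMulLog (μ x j) :=
    fun x => VNAux.vnEntropy_eq (hH x)
  -- the purification matrix
  set M : Matrix (Fin n) (X × Fin n) ℂ :=
    Matrix.of fun k q => ((Real.sqrt (p q.1 * μ q.1 q.2) : ℝ) : ℂ) * U q.1 k q.2 with hM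
  have hMMH : M * Mᴴ = ∑ x, (p x : ℂ) • ρ x := by
    ext k k'
    rw [Matrix.mul_apply]
    have hterm : ∀ q : X × Fin n, M k q * Mᴴ q k'
        = (p q.1 : ℂ) * ((μ q.1 q.2 : ℂ) * (U q.1 k q.2 * (starRingEnd ℂ) (U q.1 k' q.2))) := by
      intro q
      rw [Matrix.conjTranspose_apply, hM]
      simp only [Matrix.of_apply]
      rw [star_mul', Complex.star_def, Complex.conj_ofReal]
      have hsq : ((Real.sqrt (p q.1 * μ q.1 q.2) : ℝ) : ℂ)
          * ((Real.sqrt (p q.1 * μ q.1 q.2) : ℝ) : ℂ) = (p q.1 : ℂ) * (μ q.1 q.2 : ℂ) := by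
        rw [← Complex.ofReal_mul, Real.mul_self_sqrt (mul_nonneg (hpnn q.1) (hμnn q.1 q.2))]
        push_cast
        ring
      linear_combination (U q.1 k q.2 * (starRingEnd ℂ) (U q.1 k' q.2)) * hsq
    rw [Finset.sum_congr rfl fun q _ => hterm q, Fintype.sum_prod_type]
    rw [Matrix.sum_apply]
    refine Finset.sum_congr rfl fun x _ => ?_
    dsimp only
    rw [Matrix.smul_apply, smul_eq_mul, ← Finset.mul_sum]
    congr 1
    conv_rhs => rw [hspec x]
    rw [VNAux.conj_diag_apply]
  set σ : Matrix (X × Fin n) (X × Fin n) ℂ := Mᴴ * M with hσdef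
  have hσps : σ.PosSemidef := Matrix.posSemidef_conjTranspose_mul_self M
  set d : X × Fin n → ℝ := fun q => p q.1 * μ q.1 q.2 with hd
  have hσoff : ∀ q q' : X × Fin n, σ q q' = ((Real.sqrt (p q.1 * μ q.1 q.2) : ℝ) : ℂ)
      * ((Real.sqrt (p q'.1 * μ q'.1 q'.2) : ℝ) : ℂ) * ((U q.1)ᴴ * U q'.1) q.2 q'.2 := by
    intro q q'
    rw [hσdef, Matrix.mul_apply]
    have hterm : ∀ a, Mᴴ q a * M a q'
        = ((Real.sqrt (p q.1 * μ q.1 q.2) : ℝ) : ℂ)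
          * ((Real.sqrt (p q'.1 * μ q'.1 q'.2) : ℝ) : ℂ)
          * ((starRingEnd ℂ) (U q.1 a q.2) * U q'.1 a q'.2) := by
      intro a
      rw [Matrix.conjTranspose_apply, hM]
      simp only [Matrix.of_apply]
      rw [star_mul', Complex.star_def, Complex.conj_ofReal]
      ring
    rw [Finset.sum_congr rfl fun a _ => hterm a, ← Finset.mul_sum, Matrix.mul_apply]
    rfl
  have hσdiag : ∀ q, σ q q = ((d q : ℝ) : ℂ) := by
    intro q
    rw [hσoff q q, hUU q.1, Matrix.one_apply_eq, mul_one, ← Complex.ofReal_mul,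
      Real.mul_self_sqrt (mul_nonneg (hpnn q.1) (hμnn q.1 q.2))]
  obtain ⟨hle, hiffd⟩ := VNAux.vnEntropy_le_diag hσps d hσdiag
  have hSbar : vnEntropy (∑ x, (p x : ℂ) • ρ x) = vnEntropy σ := by
    rw [← hMMH, VNAux.vnEntropy_mul_conjTranspose]
  have hHdiag : ∑ q : X × Fin n, Real.negMulLog (d q)
      = shannonEntropy p + ∑ x, p x * vnEntropy (ρ x) := by
    rw [Fintype.sum_prod_type, shannonEntropy, ← Finset.sum_add_distrib]
    refine Finset.sum_congr rfl fun x _ => ?_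
    have : ∀ j, Real.negMulLog (d (x, j))
        = μ x j * Real.negMulLog (p x) + p x * Real.negMulLog (μ x j) := by
      intro j
      rw [hd]
      exact Real.negMulLog_mul (p x) (μ x j)
    rw [Finset.sum_congr rfl fun j _ => this j, Finset.sum_add_distrib, ← Finset.sum_mul,
      hμsum x, one_mul, ← Finset.mul_sum, hvn x]
  -- relating the product of two density matrices to the "middle" matrix
  have hprod : ∀ x x' : X, ρ x * ρ x'
      = U x * (Matrix.diagonal (fun j => ((μ x j : ℝ) : ℂ)) * ((U x)ᴴ * U x')
          * Matrix.diagonal (fun j => ((μ x' j : ℝ) : ℂ))) * (U x')ᴴ := by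
    intro x x'
    rw [hspec x, hspec x']
    simp only [Matrix.mul_assoc]
  have hmid : ∀ x x' : X, Matrix.diagonal (fun j => ((μ x j : ℝ) : ℂ)) * ((U x)ᴴ * U x')
      * Matrix.diagonal (fun j => ((μ x' j : ℝ) : ℂ)) = (U x)ᴴ * (ρ x * ρ x') * U x' := by
    intro x x'
    rw [hprod x x']
    calc Matrix.diagonal (fun j => ((μ x j : ℝ) : ℂ)) * ((U x)ᴴ * U x')
          * Matrix.diagonal (fun j => ((μ x' j : ℝ) : ℂ))
        = ((U x)ᴴ * U x) * (Matrix.diagonal (fun j => ((μ x j : ℝ) : ℂ)) * ((U x)ᴴ * U x')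
            * Matrix.diagonal (fun j => ((μ x' j : ℝ) : ℂ))) * (((U x')ᴴ * U x')) := by
          rw [hUU x, hUU x', Matrix.one_mul, Matrix.mul_one]
      _ = (U x)ᴴ * (U x * (Matrix.diagonal (fun j => ((μ x j : ℝ) : ℂ)) * ((U x)ᴴ * U x')
            * Matrix.diagonal (fun j => ((μ x' j : ℝ) : ℂ))) * (U x')ᴴ) * U x' := by
          simp only [Matrix.mul_assoc]
  have horth : σ = Matrix.diagonal (fun q => ((d q : ℝ) : ℂ)) ↔
      ∀ x x' : X, x ≠ x' → p x ≠ 0 → p x' ≠ 0 → ρ x * ρ x' = 0 := by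
    constructor
    · intro hdg x x' hxx hpx hpx'
      have hmid0 : Matrix.diagonal (fun j => ((μ x j : ℝ) : ℂ)) * ((U x)ᴴ * U x')
          * Matrix.diagonal (fun j => ((μ x' j : ℝ) : ℂ)) = 0 := by
        ext j j'
        rw [Matrix.mul_diagonal, Matrix.diagonal_mul, Matrix.zero_apply]
        have hz : σ (x, j) (x', j') = 0 := by
          rw [hdg, Matrix.diagonal_apply_ne]
          exact fun hc => hxx (congrArg Prod.fst hc)
        rw [hσoff] at hz
        rcases eq_or_ne (μ x j) 0 with hm | hm
        · simp [hm]
        rcases eq_or_ne (μ x' j') 0 with hm' | hm'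
        · simp [hm']
        have hK : ((U x)ᴴ * U x') j j' = 0 := by
          have h1 : ((Real.sqrt (p x * μ x j) : ℝ) : ℂ) ≠ 0 := by
            simp only [ne_eq, Complex.ofReal_eq_zero]
            exact (Real.sqrt_pos.mpr (mul_pos (lt_of_le_of_ne (hpnn x) (Ne.symm hpx))
              (lt_of_le_of_ne (hμnn x j) (Ne.symm hm)))).ne'
          have h2 : ((Real.sqrt (p x' * μ x' j') : ℝ) : ℂ) ≠ 0 := by
            simp only [ne_eq, Complex.ofReal_eq_zero]
            exact (Real.sqrt_pos.mpr (mul_pos (lt_of_le_of_ne (hpnn x') (Ne.symm hpx'))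
              (lt_of_le_of_ne (hμnn x' j') (Ne.symm hm')))).ne'
          rcases mul_eq_zero.mp hz with h | h
          · rcases mul_eq_zero.mp h with h' | h'
            · exact absurd h' h1
            · exact absurd h' h2
          · exact h
        rw [hK, mul_zero, zero_mul]
      rw [hprod x x', hmid0, Matrix.mul_zero, Matrix.zero_mul]
    · intro hor
      ext q q'
      rcases q with ⟨x, j⟩
      rcases q' with ⟨x', j'⟩
      by_cases hq : ((x, j) : X × Fin n) = (x', j')
      · rw [hq, Matrix.diagonal_apply_eq]
        rw [← hq]
        exact hσdiag (x, j) |>.trans (by rw [hq])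
      · rw [Matrix.diagonal_apply_ne _ hq, hσoff]
        rcases eq_or_ne x x' with rfl | hxx
        · have hjj : j ≠ j' := fun h => hq (by rw [h])
          rw [hUU x, Matrix.one_apply_ne hjj, mul_zero]
        rcases eq_or_ne (p x) 0 with hp0 | hp0
        · simp [hp0]
        rcases eq_or_ne (p x') 0 with hp0' | hp0'
        · simp [hp0']
        have h0 := hor x x' hxx hp0 hp0'
        have hmid0 : Matrix.diagonal (fun a => ((μ x a : ℝ) : ℂ)) * ((U x)ᴴ * U x')
            * Matrix.diagonal (fun a => ((μ x' a : ℝ) : ℂ)) = 0 := by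
          rw [hmid x x', h0, Matrix.mul_zero, Matrix.zero_mul]
        have hent := congrFun (congrFun hmid0 j) j'
        rw [Matrix.mul_diagonal, Matrix.diagonal_mul, Matrix.zero_apply] at hent
        rcases eq_or_ne (μ x j) 0 with hm | hm
        · rw [show p x * μ x j = 0 by rw [hm, mul_zero], Real.sqrt_zero]
          simp
        rcases eq_or_ne (μ x' j') 0 with hm' | hm'
        · rw [show p x' * μ x' j' = 0 by rw [hm', mul_zero], Real.sqrt_zero]
          simp
        have hK : ((U x)ᴴ * U x') j j' = 0 := by
          have h1 : ((μ x j : ℝ) : ℂ) ≠ 0 := by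
            simpa only [ne_eq, Complex.ofReal_eq_zero] using hm
          have h2 : ((μ x' j' : ℝ) : ℂ) ≠ 0 := by
            simpa only [ne_eq, Complex.ofReal_eq_zero] using hm'
          rcases mul_eq_zero.mp hent with h | h
          · rcases mul_eq_zero.mp h with h' | h'
            · exact absurd h' h1
            · exact h'
          · exact absurd h h2
        rw [hK, mul_zero]
  refine ⟨?_, ?_, ?_⟩
  · -- concavity
    have hbarH : (∑ x, (p x : ℂ) • ρ x).IsHermitian := by
      rw [← hMMH]; exact Matrix.isHermitian_mul_conjTranspose_self M
    set W : Matrix (Fin n) (Fin n) ℂ := (hbarH.eigenvectorUnitary : Matrix (Fin n) (Fin n) ℂ)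
      with hW
    have hWmem : W ∈ Matrix.unitaryGroup (Fin n) ℂ := hbarH.eigenvectorUnitary.2
    set lam : Fin n → ℝ := hbarH.eigenvalues with hlam
    set V : X → Matrix (Fin n) (Fin n) ℂ := fun x => Wᴴ * U x with hV
    have hVmem : ∀ x, V x ∈ Matrix.unitaryGroup (Fin n) ℂ := fun x =>
      mul_mem (Unitary.star_mem hWmem) (hUmem x)
    have hdiagbar : Matrix.diagonal (fun i => ((lam i : ℝ) : ℂ))
        = ∑ x, (p x : ℂ) • (V x * Matrix.diagonal (fun j => ((μ x j : ℝ) : ℂ)) * (V x)ᴴ) := by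
      rw [← VNAux.star_spectral_theorem' hbarH]
      rw [Matrix.mul_sum, Matrix.sum_mul]
      refine Finset.sum_congr rfl fun x _ => ?_
      rw [Matrix.mul_smul, Matrix.smul_mul]
      congr 1
      have hVH : (V x)ᴴ = (U x)ᴴ * W := by
        rw [hV]
        simp only
        rw [Matrix.conjTranspose_mul, Matrix.conjTranspose_conjTranspose]
      conv_lhs => rw [hspec x]
      rw [hVH, hV]
      simp only [Matrix.mul_assoc]
      rfl
    have hlamk : ∀ kk : Fin n,
        lam kk = ∑ x, p x * ∑ j, μ x j * Complex.normSq (V x kk j) := by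
      intro kk
      have h1 : ((lam kk : ℝ) : ℂ)
          = ∑ x, (p x : ℂ)
            * ((V x * Matrix.diagonal (fun j => ((μ x j : ℝ) : ℂ)) * (V x)ᴴ) kk kk) := by
        have h0 := congrFun (congrFun hdiagbar kk) kk
        rw [Matrix.diagonal_apply_eq] at h0
        rw [h0, Matrix.sum_apply]
        exact Finset.sum_congr rfl fun x _ => by rw [Matrix.smul_apply, smul_eq_mul]
      have h2 : ((lam kk : ℝ) : ℂ)
          = ∑ x, ((p x * ∑ j, μ x j * Complex.normSq (V x kk j) : ℝ) : ℂ) := by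
        rw [h1]
        refine Finset.sum_congr rfl fun x _ => ?_
        rw [VNAux.conj_diag_apply, Complex.ofReal_mul, Complex.ofReal_sum]
        congr 1
        refine Finset.sum_congr rfl fun a _ => ?_
        rw [Complex.mul_conj, Complex.ofReal_mul]
      rw [← Complex.ofReal_sum] at h2
      exact Complex.ofReal_injective h2
    rw [VNAux.vnEntropy_eq hbarH]
    have hrhs : ∑ x, p x * vnEntropy (ρ x)
        = ∑ kk : Fin n, ∑ q : X × Fin n,
            (p q.1 * Complex.normSq (V q.1 kk q.2)) * Real.negMulLog (μ q.1 q.2) := by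
      rw [Finset.sum_comm]
      rw [Fintype.sum_prod_type]
      refine Finset.sum_congr rfl fun x _ => ?_
      dsimp only
      rw [hvn x, Finset.mul_sum]
      refine Finset.sum_congr rfl fun j _ => ?_
      rw [← Finset.sum_mul]
      have : ∑ kk : Fin n, p x * Complex.normSq (V x kk j) = p x := by
        rw [← Finset.mul_sum, VNAux.unitary_col_sum (hVmem x) j, mul_one]
      rw [this]
    rw [hrhs]
    apply Finset.sum_le_sum
    intro kk _
    have hws : ∑ q : X × Fin n, p q.1 * Complex.normSq (V q.1 kk q.2) = 1 := by
      rw [Fintype.sum_prod_type]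
      calc ∑ x, ∑ j, p (x, j).1 * Complex.normSq (V (x, j).1 kk (x, j).2)
          = ∑ x, p x := by
            refine Finset.sum_congr rfl fun x _ => ?_
            dsimp only
            rw [← Finset.mul_sum, VNAux.unitary_row_sum (hVmem x) kk, mul_one]
        _ = 1 := hpsum
    have hjen := Real.concaveOn_negMulLog.le_map_sum (t := Finset.univ)
      (w := fun q : X × Fin n => p q.1 * Complex.normSq (V q.1 kk q.2))
      (p := fun q : X × Fin n => μ q.1 q.2)
      (fun q _ => mul_nonneg (hpnn q.1) (Complex.normSq_nonneg _)) hws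
      (fun q _ => hμnn q.1 q.2)
    have hsum : ∑ q : X × Fin n, (p q.1 * Complex.normSq (V q.1 kk q.2)) • μ q.1 q.2
        = lam kk := by
      simp only [smul_eq_mul]
      rw [Fintype.sum_prod_type, hlamk kk]
      refine Finset.sum_congr rfl fun x _ => ?_
      dsimp only
      rw [Finset.mul_sum]
      exact Finset.sum_congr rfl fun j _ => by ring
    rw [hsum] at hjen
    simpa only [smul_eq_mul] using hjen
  · rw [hSbar, ← hHdiag]; exact hle
  · rw [hSbar, ← hHdiag]; exact hiffd.trans horth
end

section
/- Let H be an orthogonally affine fibred functor on finite-dimensional unital C*-algebras such that H_A(ω) ≥ 0 for every state ω on every finite-dimensional C*-algebra A, with H_A(ω) = 0 whenever ω is pure. Then H_f(ω) ≥ 0 for every unital *-homomorphism f : B → A between commutative finite-dimensional C*-algebras and every state ω on A. -/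
open scoped ComplexOrder

/-- The unique unital `*`-homomorphism `ℂ → A`, `z ↦ z • 1`. -/
noncomputable def unitalHom (A : Type*) [Semiring A] [StarMul A] [Algebra ℂ A]
    [StarModule ℂ A] : ℂ →⋆ₐ[ℂ] A :=
  { Algebra.ofId ℂ A with
    map_star' := fun z => by
      simpa [Algebra.ofId] using algebraMap_star_comm (R := ℂ) (A := A) z }

/-- A fibred functor on finite-dimensional unital C*-algebras: an assignment of a real
number `H A B f ω` to every unital `*`-homomorphism `f : B →⋆ₐ[ℂ] A` of finite-dimensional
unital C*-algebras and every functional `ω` on `A`, which is functorial on states: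
`H_id (ω) = 0` and `H_{f∘g}(ω) = H_f(ω) + H_g(ω ∘ f)`. -/
structure EntropyFunctor : Type 1 where
  H : ∀ (A : Type) [NormedRing A] [StarRing A] [CStarRing A] [NormedAlgebra ℂ A]
        [StarModule ℂ A] [FiniteDimensional ℂ A]
      (B : Type) [NormedRing B] [StarRing B] [CStarRing B] [NormedAlgebra ℂ B]
        [StarModule ℂ B] [FiniteDimensional ℂ B],
      (B →⋆ₐ[ℂ] A) → (A →ₗ[ℂ] ℂ) → ℝ
  H_id : ∀ (A : Type) [NormedRing A] [StarRing A] [CStarRing A] [NormedAlgebra ℂ A]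
        [StarModule ℂ A] [FiniteDimensional ℂ A] (ω : A →ₗ[ℂ] ℂ), IsState ω →
      H A A (StarAlgHom.id ℂ A) ω = 0
  H_comp : ∀ (A : Type) [NormedRing A] [StarRing A] [CStarRing A] [NormedAlgebra ℂ A]
        [StarModule ℂ A] [FiniteDimensional ℂ A]
      (B : Type) [NormedRing B] [StarRing B] [CStarRing B] [NormedAlgebra ℂ B]
        [StarModule ℂ B] [FiniteDimensional ℂ B]
      (C : Type) [NormedRing C] [StarRing C] [CStarRing C] [NormedAlgebra ℂ C]
        [StarModule ℂ C] [FiniteDimensional ℂ C]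
      (f : B →⋆ₐ[ℂ] A) (g : C →⋆ₐ[ℂ] B) (ω : A →ₗ[ℂ] ℂ), IsState ω →
      H A C (f.comp g) ω = H A B f ω + H B C g (ω.comp f.toAlgHom.toLinearMap)

/-- `H` is orthogonally affine: it is affine on convex combinations of mutually orthogonal
states whose orthogonality is preserved by `f`. -/
def EntropyFunctor.OrthAffine (E : EntropyFunctor) : Prop :=
  ∀ (A : Type) [NormedRing A] [StarRing A] [CStarRing A] [NormedAlgebra ℂ A]
      [StarModule ℂ A] [FiniteDimensional ℂ A]
    (B : Type) [NormedRing B] [StarRing B] [CStarRing B] [NormedAlgebra ℂ B]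
      [StarModule ℂ B] [FiniteDimensional ℂ B]
    (f : B →⋆ₐ[ℂ] A) (ω ξ : A →ₗ[ℂ] ℂ), IsState ω → IsState ξ →
    MutuallyOrthogonal ω ξ →
    MutuallyOrthogonal (ω.comp f.toAlgHom.toLinearMap) (ξ.comp f.toAlgHom.toLinearMap) →
    ∀ l : ℝ, 0 ≤ l → l ≤ 1 →
      E.H A B f ((l : ℂ) • ω + ((1 - l : ℝ) : ℂ) • ξ)
        = l * E.H A B f ω + (1 - l) * E.H A B f ξ

/-- `H` is continuous: for each fixed `f`, `ω ↦ H_f(ω)` is continuous on the state space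
(w.r.t. pointwise convergence of states). -/
def EntropyFunctor.ContinuousOnStates (E : EntropyFunctor) : Prop :=
  ∀ (A : Type) [NormedRing A] [StarRing A] [CStarRing A] [NormedAlgebra ℂ A]
      [StarModule ℂ A] [FiniteDimensional ℂ A]
    (B : Type) [NormedRing B] [StarRing B] [CStarRing B] [NormedAlgebra ℂ B]
      [StarModule ℂ B] [FiniteDimensional ℂ B]
    (f : B →⋆ₐ[ℂ] A) (ωseq : ℕ → (A →ₗ[ℂ] ℂ)) (ω : A →ₗ[ℂ] ℂ),
    (∀ k, IsState (ωseq k)) → IsState ω →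
    (∀ a, Filter.Tendsto (fun k => ωseq k a) Filter.atTop (nhds (ω a))) →
    Filter.Tendsto (fun k => E.H A B f (ωseq k)) Filter.atTop (nhds (E.H A B f ω))

/-- `H_A(ω) ≥ 0` for all states `ω`, with equality on pure states, on every
finite-dimensional unital C*-algebra `A`. -/
def EntropyFunctor.NonnegVanishingOnPure (E : EntropyFunctor) : Prop :=
  ∀ (A : Type) [NormedRing A] [StarRing A] [CStarRing A] [NormedAlgebra ℂ A]
      [StarModule ℂ A] [FiniteDimensional ℂ A] (ω : A →ₗ[ℂ] ℂ), IsState ω →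
    0 ≤ E.H A ℂ (unitalHom A) ω ∧ (IsPureState ω → E.H A ℂ (unitalHom A) ω = 0)

set_option linter.unusedSectionVars false
set_option maxHeartbeats 1000000

namespace EFAux

section Concrete
variable {X : Type} [Fintype X] [DecidableEq X]

noncomputable def del (x : X) : X → ℂ := Pi.single x 1

lemma sum_del : ∑ x : X, del x = 1 := by
  funext y
  simp [del, Finset.sum_apply, Pi.single_apply]

lemma del_mul_del (x y : X) : del x * del y = if x = y then del x else 0 := by
  funext z
  by_cases h : x = y
  · subst h; simp [del, Pi.single_apply]
  · simp [del, Pi.single_apply, h]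
    intro h1 h2
    exact absurd (h2.symm.trans h1) h

lemma star_del (x : X) : star (del x) = del x := by
  funext z
  simp [del, Pi.single_apply]

lemma lin_apply (F : (X → ℂ) →ₗ[ℂ] ℂ) (a : X → ℂ) : F a = ∑ x, a x * F (del x) := by
  have : a = ∑ x, a x • del x := by
    funext y
    simp [del, Pi.single_apply, Finset.sum_apply]
  conv_lhs => rw [this]
  rw [map_sum]
  simp [smul_eq_mul]

lemma lin_ext {F G : (X → ℂ) →ₗ[ℂ] ℂ} (h : ∀ x, F (del x) = G (del x)) : F = G := by
  refine LinearMap.ext fun a => ?_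
  rw [lin_apply F, lin_apply G]
  simp [h]

/-- values of a state on the basis are nonnegative -/
lemma state_del_nonneg {ω : (X → ℂ) →ₗ[ℂ] ℂ} (hω : IsState ω) (x : X) : 0 ≤ ω (del x) := by
  have := hω.2 (del x)
  rwa [star_del, del_mul_del, if_pos rfl] at this

lemma state_sum_del {ω : (X → ℂ) →ₗ[ℂ] ℂ} (hω : IsState ω) : ∑ x, ω (del x) = 1 := by
  rw [← map_sum, sum_del, hω.1]

/-- a linear functional with nonneg basis values summing to 1 is a state -/
lemma isState_of_del {ω : (X → ℂ) →ₗ[ℂ] ℂ} (h1 : ∀ x, 0 ≤ ω (del x))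
    (h2 : ∑ x, ω (del x) = 1) : IsState ω := by
  constructor
  · rw [← sum_del, map_sum, h2]
  · intro a
    rw [lin_apply ω (star a * a)]
    refine Finset.sum_nonneg fun x _ => mul_nonneg ?_ (h1 x)
    show (0:ℂ) ≤ (star a * a) x
    have : (star a * a) x = star (a x) * a x := rfl
    rw [this]
    exact star_mul_self_nonneg (a x)

end Concrete
end EFAux
namespace EFAux
section Concrete
variable {X : Type} [Fintype X] [DecidableEq X]

noncomputable def supp (ω : (X → ℂ) →ₗ[ℂ] ℂ) : X → ℂ :=
  fun x => if ω (del x) = 0 then 0 else 1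

lemma lin_mulL (ω : (X → ℂ) →ₗ[ℂ] ℂ) (P a : X → ℂ) :
    ω (P * a) = ∑ x, P x * a x * ω (del x) := by
  rw [lin_apply ω (P * a)]
  rfl

lemma isSupportOf_supp {ω : (X → ℂ) →ₗ[ℂ] ℂ} (hω : IsState ω) : IsSupportOf ω (supp ω) := by
  refine ⟨?_, ?_, ?_⟩
  · funext x
    show star (supp ω x) * supp ω x = supp ω x
    simp only [supp]
    split_ifs <;> simp
  · intro a
    constructor
    · rw [lin_mulL, lin_apply ω a]
      refine Finset.sum_congr rfl fun x _ => ?_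
      by_cases h : ω (del x) = 0
      · simp [h]
      · simp [supp, h]
    · rw [show a * supp ω = supp ω * a from mul_comm a _, lin_mulL, lin_apply ω a]
      refine Finset.sum_congr rfl fun x _ => ?_
      by_cases h : ω (del x) = 0
      · simp [h]
      · simp [supp, h]
  · intro Q hQ hQω
    have hQ01 : ∀ x, star (Q x) * Q x = Q x := fun x => congrFun hQ x
    have hQ1 : ∀ x, ω (del x) ≠ 0 → Q x = 1 := by
      intro x hx
      have h1 : ω (Q * del x) = ω (del x) := (hQω (del x)).1
      rw [lin_mulL] at h1
      have h2 : ∀ y, Q y * del x y * ω (del y) = if y = x then Q x * ω (del x) else 0 := by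
        intro y
        by_cases h : y = x
        · subst h; simp [del, Pi.single_apply]
        · simp [del, Pi.single_apply, h]
      rw [Finset.sum_congr rfl fun y _ => h2 y, Finset.sum_ite_eq' Finset.univ x
        (fun _ => Q x * ω (del x)), if_pos (Finset.mem_univ x)] at h1
      have h3 : (Q x - 1) * ω (del x) = 0 := by rw [sub_mul, one_mul, h1, sub_self]
      rcases mul_eq_zero.mp h3 with h | h
      · exact sub_eq_zero.mp h
      · exact absurd h hx
    refine ⟨Q - supp ω, ?_⟩
    funext x
    show (Q - supp ω) x = (star (Q - supp ω) * (Q - supp ω)) x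
    have : (star (Q - supp ω) * (Q - supp ω)) x
        = star (Q x - supp ω x) * (Q x - supp ω x) := rfl
    rw [this]
    show Q x - supp ω x = _
    by_cases h : ω (del x) = 0
    · simp only [supp, if_pos h, sub_zero]
      exact (hQ01 x).symm
    · simp [supp, if_neg h, hQ1 x h]

lemma mutuallyOrthogonal_of_disjoint {ω ξ : (X → ℂ) →ₗ[ℂ] ℂ}
    (hω : IsState ω) (hξ : IsState ξ)
    (h : ∀ x, ω (del x) = 0 ∨ ξ (del x) = 0) : MutuallyOrthogonal ω ξ := by
  refine ⟨supp ω, supp ξ, isSupportOf_supp hω, isSupportOf_supp hξ, ?_⟩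
  funext x
  show supp ω x * supp ξ x = 0
  rcases h x with h | h <;> simp [supp, h]

noncomputable def evS (x : X) : (X → ℂ) →ₗ[ℂ] ℂ := LinearMap.proj x

lemma evS_del (x y : X) : evS x (del y) = if y = x then 1 else 0 := by
  simp [evS, del, Pi.single_apply, eq_comm]

lemma isState_evS (x : X) : IsState (evS (X := X) x) := by
  refine isState_of_del (fun y => ?_) ?_
  · rw [evS_del]; split_ifs <;> simp
  · simp [evS_del]

lemma isPureState_evS (x : X) : IsPureState (evS (X := X) x) := by
  refine ⟨isState_evS x, ?_⟩
  intro l ω₁ ω₂ hl0 hl1 hω₁ hω₂ heq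
  have key : ∀ y, ω₁ (del y) = ω₂ (del y) := by
    have hvals : ∀ y, y ≠ x → ω₁ (del y) = 0 ∧ ω₂ (del y) = 0 := by
      intro y hy
      have h0 : (l : ℂ) * ω₁ (del y) + ((1 - l : ℝ) : ℂ) * ω₂ (del y) = 0 := by
        have := congrArg (fun F => F (del y)) heq
        simp only [LinearMap.add_apply, LinearMap.smul_apply, smul_eq_mul] at this
        rw [← this, evS_del, if_neg hy]
      have ha : 0 ≤ (l : ℂ) * ω₁ (del y) :=
        mul_nonneg (by exact_mod_cast hl0.le) (state_del_nonneg hω₁ y)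
      have hb : 0 ≤ ((1 - l : ℝ) : ℂ) * ω₂ (del y) :=
        mul_nonneg (by exact_mod_cast (by linarith : (0:ℝ) ≤ 1 - l)) (state_del_nonneg hω₂ y)
      have h1 : (l : ℂ) * ω₁ (del y) = 0 ∧ ((1 - l : ℝ) : ℂ) * ω₂ (del y) = 0 := by
        constructor
        · exact le_antisymm (by rw [← h0]; exact le_add_of_nonneg_right hb) ha
        · exact le_antisymm (by rw [← h0]; exact le_add_of_nonneg_left ha) hb
      constructor
      · rcases mul_eq_zero.mp h1.1 with h | h
        · exact absurd h (by exact_mod_cast hl0.ne')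
        · exact h
      · rcases mul_eq_zero.mp h1.2 with h | h
        · have : (1 - l : ℝ) = 0 := by exact_mod_cast h
          linarith
        · exact h
    intro y
    by_cases hy : y = x
    · subst hy
      have h₁ : ω₁ (del y) = 1 := by
        have := state_sum_del hω₁
        rwa [Finset.sum_eq_single y (fun b _ hb => (hvals b hb).1) (by simp)] at this
      have h₂ : ω₂ (del y) = 1 := by
        have := state_sum_del hω₂
        rwa [Finset.sum_eq_single y (fun b _ hb => (hvals b hb).2) (by simp)] at this
      rw [h₁, h₂]
    · rw [(hvals y hy).1, (hvals y hy).2]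
  exact lin_ext key

end Concrete
end EFAux
namespace EFAux

section Pull
variable {A : Type} [Ring A] [StarRing A] [Algebra ℂ A] [StarModule ℂ A]
variable {B : Type} [Ring B] [StarRing B] [Algebra ℂ B] [StarModule ℂ B]

/-- pull a functional back along a star algebra hom, in the exact form used in the statement -/
noncomputable def pullState (g : B →⋆ₐ[ℂ] A) (ω : A →ₗ[ℂ] ℂ) : B →ₗ[ℂ] ℂ :=
  ω.comp g.toAlgHom.toLinearMap

lemma pullState_apply (g : B →⋆ₐ[ℂ] A) (ω : A →ₗ[ℂ] ℂ) (b : B) :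
    pullState g ω b = ω (g b) := rfl

lemma isState_pull (g : B →⋆ₐ[ℂ] A) {ω : A →ₗ[ℂ] ℂ} (hω : IsState ω) :
    IsState (pullState g ω) := by
  constructor
  · rw [pullState_apply, map_one g, hω.1]
  · intro b
    rw [pullState_apply, map_mul g, map_star g]
    exact hω.2 (g b)

lemma pullState_coe_apply (e : A ≃⋆ₐ[ℂ] B) (ω : B →ₗ[ℂ] ℂ) (a : A) :
    pullState (e : A →⋆ₐ[ℂ] B) ω a = ω (e a) := rfl

end Pull

section PullRing
variable {A : Type} [Ring A] [StarRing A] [Algebra ℂ A] [StarModule ℂ A]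
variable {B : Type} [Ring B] [StarRing B] [Algebra ℂ B] [StarModule ℂ B]

lemma isSupportOf_pull (e : A ≃⋆ₐ[ℂ] B) {ω : B →ₗ[ℂ] ℂ} {P : B}
    (h : IsSupportOf ω P) : IsSupportOf (pullState (e : A →⋆ₐ[ℂ] B) ω) (e.symm P) := by
  obtain ⟨hproj, hcond, hmin⟩ := h
  refine ⟨?_, ?_, ?_⟩
  · show star (e.symm P) * e.symm P = e.symm P
    have := congrArg e.symm hproj
    rwa [map_mul e.symm, map_star e.symm] at this
  · intro a
    constructor
    · rw [pullState_coe_apply, pullState_coe_apply, map_mul, e.apply_symm_apply]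
      exact (hcond (e a)).1
    · rw [pullState_coe_apply, pullState_coe_apply, map_mul, e.apply_symm_apply]
      exact (hcond (e a)).2
  · intro Q hQ hQω
    have h1 : IsProjection (e Q) := by
      show star (e Q) * e Q = e Q
      have := congrArg e hQ
      rwa [map_mul e, map_star e] at this
    have h2 : ∀ b : B, ω (e Q * b) = ω b ∧ ω (b * e Q) = ω b := by
      intro b
      have ha := hQω (e.symm b)
      rw [pullState_coe_apply, pullState_coe_apply, pullState_coe_apply, map_mul e, map_mul e,
        e.apply_symm_apply] at ha
      exact ha
    obtain ⟨x, hx⟩ := hmin (e Q) h1 h2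
    refine ⟨e.symm x, ?_⟩
    have := congrArg e.symm hx
    rwa [map_sub e.symm, map_mul e.symm, map_star e.symm, e.symm_apply_apply] at this

lemma mutuallyOrthogonal_pull (e : A ≃⋆ₐ[ℂ] B) {ω ξ : B →ₗ[ℂ] ℂ}
    (h : MutuallyOrthogonal ω ξ) :
    MutuallyOrthogonal (pullState (e : A →⋆ₐ[ℂ] B) ω) (pullState (e : A →⋆ₐ[ℂ] B) ξ) := by
  obtain ⟨P, Q, hP, hQ, hPQ⟩ := h
  refine ⟨e.symm P, e.symm Q, isSupportOf_pull e hP, isSupportOf_pull e hQ, ?_⟩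
  have := congrArg e.symm hPQ
  rwa [map_mul e.symm, map_zero e.symm] at this

lemma comp_equiv_cancel (e : A ≃⋆ₐ[ℂ] B) (ω : A →ₗ[ℂ] ℂ) :
    pullState (e : A →⋆ₐ[ℂ] B) (pullState (e.symm : B →⋆ₐ[ℂ] A) ω) = ω := by
  refine LinearMap.ext fun a => ?_
  rw [pullState_coe_apply, pullState_coe_apply, e.symm_apply_apply]

lemma comp_equiv_cancel' (e : A ≃⋆ₐ[ℂ] B) (ω : B →ₗ[ℂ] ℂ) :
    pullState (e.symm : B →⋆ₐ[ℂ] A) (pullState (e : A →⋆ₐ[ℂ] B) ω) = ω := by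
  refine LinearMap.ext fun b => ?_
  rw [pullState_coe_apply, pullState_coe_apply, e.apply_symm_apply]

lemma isPureState_pull (e : A ≃⋆ₐ[ℂ] B) {ω : B →ₗ[ℂ] ℂ} (h : IsPureState ω) :
    IsPureState (pullState (e : A →⋆ₐ[ℂ] B) ω) := by
  refine ⟨isState_pull _ h.1, ?_⟩
  intro l ω₁ ω₂ hl0 hl1 hω₁ hω₂ heq
  have key : ω = (l : ℂ) • pullState (e.symm : B →⋆ₐ[ℂ] A) ω₁
      + ((1 - l : ℝ) : ℂ) • pullState (e.symm : B →⋆ₐ[ℂ] A) ω₂ := by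
    rw [← comp_equiv_cancel' e ω, heq]
    rfl
  have := h.2 l _ _ hl0 hl1 (isState_pull _ hω₁) (isState_pull _ hω₂) key
  calc ω₁ = pullState (e : A →⋆ₐ[ℂ] B) (pullState (e.symm : B →⋆ₐ[ℂ] A) ω₁) :=
        (comp_equiv_cancel e ω₁).symm
    _ = pullState (e : A →⋆ₐ[ℂ] B) (pullState (e.symm : B →⋆ₐ[ℂ] A) ω₂) := by rw [this]
    _ = ω₂ := comp_equiv_cancel e ω₂

end PullRing
end EFAux
namespace EFAux
section Hlem
variable (E : EntropyFunctor)
variable (A : Type) [NormedRing A] [StarRing A] [CStarRing A] [NormedAlgebra ℂ A]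
  [StarModule ℂ A] [FiniteDimensional ℂ A]
variable (B : Type) [NormedRing B] [StarRing B] [CStarRing B] [NormedAlgebra ℂ B]
  [StarModule ℂ B] [FiniteDimensional ℂ B]

lemma unitalHom_comp (f : B →⋆ₐ[ℂ] A) : f.comp (unitalHom B) = unitalHom A := by
  refine StarAlgHom.ext fun z => ?_
  show f ((unitalHom B) z) = (unitalHom A) z
  show f (algebraMap ℂ B z) = algebraMap ℂ A z
  exact f.toAlgHom.commutes z

lemma H_split (f : B →⋆ₐ[ℂ] A) (ω : A →ₗ[ℂ] ℂ) (hω : IsState ω) :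
    E.H A B f ω = E.H A ℂ (unitalHom A) ω - E.H B ℂ (unitalHom B) (pullState f ω) := by
  have h := E.H_comp A B ℂ f (unitalHom B) ω hω
  rw [unitalHom_comp] at h
  have : pullState f ω = ω.comp f.toAlgHom.toLinearMap := rfl
  rw [this]
  linarith

lemma H_base (hpos : E.NonnegVanishingOnPure) (f : B →⋆ₐ[ℂ] A) (ω : A →ₗ[ℂ] ℂ)
    (hω : IsState ω) (hpure : IsPureState (pullState f ω)) : 0 ≤ E.H A B f ω := by
  rw [H_split E A B f ω hω]
  have h1 := (hpos A ω hω).1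
  have h2 := (hpos B _ (isState_pull f hω)).2 hpure
  linarith

end Hlem
end EFAux
namespace EFAux

lemma complex_idem {c : ℂ} (h : star c * c = c) : c = 0 ∨ c = 1 := by
  have h' := congrArg star h
  rw [star_mul, star_star] at h'
  have hcc : star c = c := h'.symm.trans h
  rw [hcc] at h
  have h2 : c * (c - 1) = 0 := by rw [mul_sub, mul_one, h, sub_self]
  rcases mul_eq_zero.mp h2 with h3 | h3
  · exact Or.inl h3
  · exact Or.inr (sub_eq_zero.mp h3)

section Concrete2
variable {X : Type} [Fintype X] [DecidableEq X]

lemma lin_mul_del (F : (X → ℂ) →ₗ[ℂ] ℂ) (v : X → ℂ) (x : X) :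
    F (v * del x) = v x * F (del x) := by
  rw [lin_mulL]
  rw [Finset.sum_eq_single x (fun y _ hy => ?_) (by simp)]
  · simp [del, Pi.single_apply]
  · simp [del, Pi.single_apply, hy]

end Concrete2
end EFAux
namespace EFAux
section Core
variable (E : EntropyFunctor)
variable {A : Type} [NormedRing A] [StarRing A] [CStarRing A] [NormedAlgebra ℂ A]
  [StarModule ℂ A] [FiniteDimensional ℂ A]
variable {B : Type} [NormedRing B] [StarRing B] [CStarRing B] [NormedAlgebra ℂ B]
  [StarModule ℂ B] [FiniteDimensional ℂ B]
variable {X Y : Type} [Fintype X] [DecidableEq X] [Fintype Y] [DecidableEq Y]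

lemma zero_le_ofReal {r : ℝ} (h : 0 ≤ r) : (0:ℂ) ≤ (r:ℂ) := by
  rw [Complex.nonneg_iff]
  simp [h]

lemma core (haff : E.OrthAffine) (hpos : E.NonnegVanishingOnPure)
    (f : B →⋆ₐ[ℂ] A) (eA : A ≃⋆ₐ[ℂ] (X → ℂ)) (eB : B ≃⋆ₐ[ℂ] (Y → ℂ))
    (s : Finset Y) :
    ∀ ω : A →ₗ[ℂ] ℂ, IsState ω →
      (∀ y ∉ s, ω (f (eB.symm (del y))) = 0) → 0 ≤ E.H A B f ω := by
  classical
  set m : Y → A := fun y => f (eB.symm (del y)) with hm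
  have hm_star : ∀ y, star (m y) = m y := by
    intro y
    simp only [hm]
    rw [← map_star f, ← map_star eB.symm, star_del]
  have hm_mul : ∀ y y', m y * m y' = if y = y' then m y else 0 := by
    intro y y'
    simp only [hm]
    rw [← map_mul f, ← map_mul eB.symm, del_mul_del]
    split_ifs
    · rfl
    · rw [map_zero eB.symm, map_zero f]
  have hm_sum : ∑ y, m y = 1 := by
    simp only [hm]
    rw [← map_sum, ← map_sum, sum_del, map_one eB.symm, map_one f]
  induction s using Finset.induction_on with
  | empty =>
      intro ω hω hvan
      exfalso
      have h1 : (1 : ℂ) = 0 := by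
        calc (1:ℂ) = ω 1 := hω.1.symm
          _ = ∑ y, ω (m y) := by rw [← hm_sum, map_sum]
          _ = 0 := Finset.sum_eq_zero fun y _ => hvan y (Finset.notMem_empty y)
      exact one_ne_zero h1
  | @insert y₀ t hy₀t ih =>
      intro ω hω hvan
      have hq0 : ∀ y, (0:ℂ) ≤ ω (m y) := by
        intro y
        have h2 := hω.2 (m y)
        rwa [hm_star, hm_mul, if_pos rfl] at h2
      have hq_sum : ∑ y, ω (m y) = 1 := by
        rw [← map_sum, hm_sum, hω.1]
      by_cases h0 : ω (m y₀) = 0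
      · refine ih ω hω fun y hy => ?_
        by_cases hyy : y = y₀
        · subst hyy; exact h0
        · exact hvan y (by simp [Finset.mem_insert, hyy, hy])
      by_cases h1 : ∀ y, y ≠ y₀ → ω (m y) = 0
      · -- pushforward is the pure state at y₀
        have hq1 : ω (m y₀) = 1 := by
          rw [← hq_sum, Finset.sum_eq_single y₀ (fun b _ hb => h1 b hb) (by simp)]
        have hν : pullState ((eB.symm : (Y → ℂ) ≃⋆ₐ[ℂ] B) : (Y → ℂ) →⋆ₐ[ℂ] B)
            (pullState f ω) = evS y₀ := by
          refine lin_ext fun y => ?_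
          rw [pullState_coe_apply, pullState_apply, evS_del]
          by_cases hyy : y = y₀
          · subst hyy; rw [if_pos rfl]; exact hq1
          · rw [if_neg hyy]; exact h1 y hyy
        have hpure : IsPureState (pullState f ω) := by
          have heq2 : pullState f ω
              = pullState ((eB : B ≃⋆ₐ[ℂ] (Y → ℂ)) : B →⋆ₐ[ℂ] (Y → ℂ)) (evS y₀) := by
            rw [← comp_equiv_cancel eB (pullState f ω), hν]
          rw [heq2]
          exact isPureState_pull eB (isPureState_evS y₀)
        exact H_base E A B hpos f ω hω hpure
      · push_neg at h1
        obtain ⟨y₁, hy₁ne, hy₁0⟩ := h1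
        -- real coefficients
        have hqr : ∀ y, ω (m y) = (((ω (m y)).re : ℝ) : ℂ) := by
          intro y
          have h2 := Complex.nonneg_iff.mp (hq0 y)
          exact Complex.ext (by simp) (by simp [← h2.2])
        have hrnn : ∀ y, 0 ≤ (ω (m y)).re := fun y => (Complex.nonneg_iff.mp (hq0 y)).1
        have hr_sum : ∑ y, (ω (m y)).re = 1 := by
          have h2 := congrArg Complex.re hq_sum
          rwa [Complex.re_sum, Complex.one_re] at h2
        set l : ℝ := (ω (m y₀)).re with hldef
        have hl0 : 0 < l := by
          rcases lt_or_eq_of_le (hrnn y₀) with h | h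
          · exact h
          · exact absurd (by rw [hqr y₀, ← h, Complex.ofReal_zero]) h0
        have hr1pos : 0 < (ω (m y₁)).re := by
          rcases lt_or_eq_of_le (hrnn y₁) with h | h
          · exact h
          · exact absurd (by rw [hqr y₁, ← h, Complex.ofReal_zero]) hy₁0
        have hl1 : l < 1 := by
          have hsub : ({y₀, y₁} : Finset Y) ⊆ Finset.univ := Finset.subset_univ _
          have hle : (ω (m y₀)).re + (ω (m y₁)).re ≤ 1 := by
            have hps := Finset.sum_pair (f := fun y => (ω (m y)).re)
              (fun h : y₀ = y₁ => hy₁ne h.symm)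
            have hmono := Finset.sum_le_sum_of_subset_of_nonneg hsub fun i _ _ => hrnn i
            rw [hps, hr_sum] at hmono
            exact hmono
          linarith [hle, hldef]
        have hlC : ((l:ℝ):ℂ) ≠ 0 := by
          exact_mod_cast hl0.ne'
        have hl1R : (1 - l : ℝ) ≠ 0 := by linarith
        have hlC1 : (((1 - l : ℝ)):ℂ) ≠ 0 := by exact_mod_cast hl1R
        set P : A := m y₀ with hPdef
        have hPP : P * P = P := by
          rw [hPdef, hm_mul, if_pos rfl]
        have hPstar : star P = P := hm_star y₀
        have hωP : ω P = ((l:ℝ):ℂ) := by rw [hPdef, hqr y₀]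
        set ω₁ : A →ₗ[ℂ] ℂ := ((l:ℝ):ℂ)⁻¹ • (ω.comp (LinearMap.mulLeft ℂ P)) with hω₁def
        set ω₂ : A →ₗ[ℂ] ℂ :=
          (((1 - l : ℝ)):ℂ)⁻¹ • (ω.comp (LinearMap.mulLeft ℂ (1 - P))) with hω₂def
        have hω₁app : ∀ a, ω₁ a = ((l:ℝ):ℂ)⁻¹ * ω (P * a) := fun a => rfl
        have hω₂app : ∀ a, ω₂ a = (((1 - l : ℝ)):ℂ)⁻¹ * ω ((1 - P) * a) := fun a => rfl
        have hsplit : ω = ((l:ℝ) : ℂ) • ω₁ + ((1 - l : ℝ) : ℂ) • ω₂ := by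
          refine LinearMap.ext fun a => ?_
          simp only [LinearMap.add_apply, LinearMap.smul_apply, smul_eq_mul]
          rw [hω₁app, hω₂app, ← mul_assoc, mul_inv_cancel₀ hlC, one_mul, ← mul_assoc,
            mul_inv_cancel₀ hlC1, one_mul, sub_mul, one_mul, map_sub, add_sub_cancel]
        -- concrete pullbacks
        have hωc_state : IsState (pullState ((eA.symm : (X → ℂ) ≃⋆ₐ[ℂ] A) : (X → ℂ) →⋆ₐ[ℂ] A) ω) :=
          isState_pull _ hω
        have hPc01 : ∀ x, eA P x = 0 ∨ eA P x = 1 := by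
          intro x
          apply complex_idem
          have h3 : star (eA P) * eA P = eA P := by
            rw [← map_star eA, ← map_mul eA, hPstar, hPP]
          exact congrFun h3 x
        have hω₁c : ∀ x, pullState ((eA.symm : (X → ℂ) ≃⋆ₐ[ℂ] A) : (X → ℂ) →⋆ₐ[ℂ] A) ω₁ (del x)
            = ((l:ℝ):ℂ)⁻¹ * (eA P x *
              pullState ((eA.symm : (X → ℂ) ≃⋆ₐ[ℂ] A) : (X → ℂ) →⋆ₐ[ℂ] A) ω (del x)) := by
          intro x
          rw [pullState_coe_apply, hω₁app]
          have h3 : P * eA.symm (del x) = eA.symm (eA P * del x) := by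
            rw [map_mul eA.symm, eA.symm_apply_apply]
          rw [h3, show ω (eA.symm (eA P * del x)) = pullState
            ((eA.symm : (X → ℂ) ≃⋆ₐ[ℂ] A) : (X → ℂ) →⋆ₐ[ℂ] A) ω (eA P * del x) from rfl,
            lin_mul_del]
        have hω₂c : ∀ x, pullState ((eA.symm : (X → ℂ) ≃⋆ₐ[ℂ] A) : (X → ℂ) →⋆ₐ[ℂ] A) ω₂ (del x)
            = (((1 - l : ℝ)):ℂ)⁻¹ * ((1 - eA P x) *
              pullState ((eA.symm : (X → ℂ) ≃⋆ₐ[ℂ] A) : (X → ℂ) →⋆ₐ[ℂ] A) ω (del x)) := by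
          intro x
          rw [pullState_coe_apply, hω₂app]
          have h3 : (1 - P) * eA.symm (del x) = eA.symm ((1 - eA P) * del x) := by
            rw [map_mul eA.symm, map_sub eA.symm, map_one eA.symm, eA.symm_apply_apply]
          rw [h3, show ω (eA.symm ((1 - eA P) * del x)) = pullState
            ((eA.symm : (X → ℂ) ≃⋆ₐ[ℂ] A) : (X → ℂ) →⋆ₐ[ℂ] A) ω ((1 - eA P) * del x) from rfl,
            lin_mul_del]
          norm_num
        have hinvnn : (0:ℂ) ≤ ((l:ℝ):ℂ)⁻¹ := by
          rw [← Complex.ofReal_inv]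
          exact zero_le_ofReal (inv_nonneg.mpr hl0.le)
        have hinvnn1 : (0:ℂ) ≤ (((1 - l : ℝ)):ℂ)⁻¹ := by
          rw [← Complex.ofReal_inv]
          exact zero_le_ofReal (inv_nonneg.mpr (by linarith))
        have hω₁c_state : IsState
            (pullState ((eA.symm : (X → ℂ) ≃⋆ₐ[ℂ] A) : (X → ℂ) →⋆ₐ[ℂ] A) ω₁) := by
          refine isState_of_del (fun x => ?_) ?_
          · rw [hω₁c x]
            rcases hPc01 x with h | h
            · rw [h, zero_mul, mul_zero]
            · rw [h, one_mul]
              exact mul_nonneg hinvnn (state_del_nonneg hωc_state x)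
          · calc ∑ x, pullState ((eA.symm : (X → ℂ) ≃⋆ₐ[ℂ] A) : (X → ℂ) →⋆ₐ[ℂ] A) ω₁ (del x)
                = pullState ((eA.symm : (X → ℂ) ≃⋆ₐ[ℂ] A) : (X → ℂ) →⋆ₐ[ℂ] A) ω₁
                    (∑ x, del x) := (map_sum _ _ _).symm
              _ = ω₁ 1 := by rw [sum_del, pullState_coe_apply, map_one eA.symm]
              _ = 1 := by rw [hω₁app, mul_one, hωP, inv_mul_cancel₀ hlC]
        have hω₂c_state : IsState
            (pullState ((eA.symm : (X → ℂ) ≃⋆ₐ[ℂ] A) : (X → ℂ) →⋆ₐ[ℂ] A) ω₂) := by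
          refine isState_of_del (fun x => ?_) ?_
          · rw [hω₂c x]
            rcases hPc01 x with h | h
            · rw [h, sub_zero, one_mul]
              exact mul_nonneg hinvnn1 (state_del_nonneg hωc_state x)
            · rw [h, sub_self, zero_mul, mul_zero]
          · calc ∑ x, pullState ((eA.symm : (X → ℂ) ≃⋆ₐ[ℂ] A) : (X → ℂ) →⋆ₐ[ℂ] A) ω₂ (del x)
                = pullState ((eA.symm : (X → ℂ) ≃⋆ₐ[ℂ] A) : (X → ℂ) →⋆ₐ[ℂ] A) ω₂
                    (∑ x, del x) := (map_sum _ _ _).symm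
              _ = ω₂ 1 := by rw [sum_del, pullState_coe_apply, map_one eA.symm]
              _ = 1 := by
                  rw [hω₂app, mul_one, map_sub, hω.1, hωP,
                    show (1:ℂ) - ((l:ℝ):ℂ) = (((1 - l : ℝ)):ℂ) by push_cast; ring,
                    inv_mul_cancel₀ hlC1]
        have hω₁_state : IsState ω₁ := by
          have h3 := isState_pull ((eA : A ≃⋆ₐ[ℂ] (X → ℂ)) : A →⋆ₐ[ℂ] (X → ℂ)) hω₁c_state
          rwa [comp_equiv_cancel eA ω₁] at h3
        have hω₂_state : IsState ω₂ := by
          have h3 := isState_pull ((eA : A ≃⋆ₐ[ℂ] (X → ℂ)) : A →⋆ₐ[ℂ] (X → ℂ)) hω₂c_state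
          rwa [comp_equiv_cancel eA ω₂] at h3
        have hmorthA : MutuallyOrthogonal ω₁ ω₂ := by
          have hdisj : ∀ x,
              pullState ((eA.symm : (X → ℂ) ≃⋆ₐ[ℂ] A) : (X → ℂ) →⋆ₐ[ℂ] A) ω₁ (del x) = 0 ∨
              pullState ((eA.symm : (X → ℂ) ≃⋆ₐ[ℂ] A) : (X → ℂ) →⋆ₐ[ℂ] A) ω₂ (del x) = 0 := by
            intro x
            rcases hPc01 x with h | h
            · left; rw [hω₁c x, h, zero_mul, mul_zero]
            · right; rw [hω₂c x, h, sub_self, zero_mul, mul_zero]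
          have h3 := mutuallyOrthogonal_pull eA
            (mutuallyOrthogonal_of_disjoint hω₁c_state hω₂c_state hdisj)
          rwa [comp_equiv_cancel eA ω₁, comp_equiv_cancel eA ω₂] at h3
        -- pushforward values
        have hPm : ∀ y, P * m y = if y = y₀ then P else 0 := by
          intro y
          rw [hPdef, hm_mul y₀ y]
          by_cases h : y = y₀
          · subst h; simp
          · simp [h, Ne.symm h, fun hh : y₀ = y => h hh.symm]
        have hν₁ : ∀ y, pullState ((eB.symm : (Y → ℂ) ≃⋆ₐ[ℂ] B) : (Y → ℂ) →⋆ₐ[ℂ] B)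
            (pullState f ω₁) (del y) = if y = y₀ then 1 else 0 := by
          intro y
          rw [pullState_coe_apply, pullState_apply, show f (eB.symm (del y)) = m y from rfl,
            hω₁app, hPm y]
          by_cases h : y = y₀
          · rw [if_pos h, if_pos h, hωP, inv_mul_cancel₀ hlC]
          · rw [if_neg h, if_neg h, map_zero, mul_zero]
        have hν₂ : ∀ y, pullState ((eB.symm : (Y → ℂ) ≃⋆ₐ[ℂ] B) : (Y → ℂ) →⋆ₐ[ℂ] B)
            (pullState f ω₂) (del y)
            = if y = y₀ then 0 else (((1 - l : ℝ)):ℂ)⁻¹ * ω (m y) := by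
          intro y
          rw [pullState_coe_apply, pullState_apply, show f (eB.symm (del y)) = m y from rfl,
            hω₂app, sub_mul, one_mul, hPm y, map_sub]
          by_cases h : y = y₀
          · rw [if_pos h, if_pos h]
            subst h
            rw [← hPdef, hωP, sub_self, mul_zero]
          · rw [if_neg h, if_neg h, map_zero, sub_zero]
        have hν₁_state : IsState (pullState ((eB.symm : (Y → ℂ) ≃⋆ₐ[ℂ] B) : (Y → ℂ) →⋆ₐ[ℂ] B)
            (pullState f ω₁)) := isState_pull _ (isState_pull f hω₁_state)
        have hν₂_state : IsState (pullState ((eB.symm : (Y → ℂ) ≃⋆ₐ[ℂ] B) : (Y → ℂ) →⋆ₐ[ℂ] B)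
            (pullState f ω₂)) := isState_pull _ (isState_pull f hω₂_state)
        have hmorthB : MutuallyOrthogonal (pullState f ω₁) (pullState f ω₂) := by
          have hdisj : ∀ y,
              pullState ((eB.symm : (Y → ℂ) ≃⋆ₐ[ℂ] B) : (Y → ℂ) →⋆ₐ[ℂ] B)
                (pullState f ω₁) (del y) = 0 ∨
              pullState ((eB.symm : (Y → ℂ) ≃⋆ₐ[ℂ] B) : (Y → ℂ) →⋆ₐ[ℂ] B)
                (pullState f ω₂) (del y) = 0 := by
            intro y
            by_cases h : y = y₀
            · right; rw [hν₂ y, if_pos h]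
            · left; rw [hν₁ y, if_neg h]
          have h3 := mutuallyOrthogonal_pull eB
            (mutuallyOrthogonal_of_disjoint hν₁_state hν₂_state hdisj)
          rwa [comp_equiv_cancel eB (pullState f ω₁), comp_equiv_cancel eB (pullState f ω₂)] at h3
        -- apply orthogonal affinity
        have heq := haff A B f ω₁ ω₂ hω₁_state hω₂_state hmorthA hmorthB l hl0.le hl1.le
        rw [← hsplit] at heq
        have hH1 : 0 ≤ E.H A B f ω₁ := by
          refine H_base E A B hpos f ω₁ hω₁_state ?_
          have heq2 : pullState f ω₁
              = pullState ((eB : B ≃⋆ₐ[ℂ] (Y → ℂ)) : B →⋆ₐ[ℂ] (Y → ℂ)) (evS y₀) := by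
            rw [← comp_equiv_cancel eB (pullState f ω₁)]
            congr 1
            refine lin_ext fun y => ?_
            rw [hν₁ y, evS_del]
          rw [heq2]
          exact isPureState_pull eB (isPureState_evS y₀)
        have hH2 : 0 ≤ E.H A B f ω₂ := by
          refine ih ω₂ hω₂_state fun y hy => ?_
          have h3 := hν₂ y
          rw [pullState_coe_apply, pullState_apply] at h3
          by_cases h : y = y₀
          · rw [show ω₂ (f (eB.symm (del y))) = _ from h3, if_pos h]
          · rw [show ω₂ (f (eB.symm (del y))) = _ from h3, if_neg h,
              hvan y (by simp [Finset.mem_insert, h, hy]), mul_zero]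
        rw [heq]
        have : 0 ≤ l * E.H A B f ω₁ := mul_nonneg hl0.le hH1
        have : 0 ≤ (1 - l) * E.H A B f ω₂ := mul_nonneg (by linarith) hH2
        linarith

end Core
end EFAux
namespace EFAux

/-- The star-algebra equivalence between continuous functions on a finite discrete space
and plain functions. -/
noncomputable def discreteFunEquiv (X : Type) [TopologicalSpace X] [DiscreteTopology X] :
    C(X, ℂ) ≃⋆ₐ[ℂ] (X → ℂ) where
  toFun g := ⇑g
  invFun g := ⟨g, continuous_of_discreteTopology⟩
  left_inv g := rfl
  right_inv g := rfl
  map_add' g h := rfl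
  map_mul' g h := rfl
  map_star' g := rfl
  map_smul' c g := rfl

/-- A packaged concrete model of a finite-dimensional commutative C*-algebra. -/
structure ConcreteModel (A : Type) [NormedRing A] [StarRing A] [CStarRing A]
    [NormedAlgebra ℂ A] [StarModule ℂ A] [FiniteDimensional ℂ A] : Type 1 where
  X : Type
  fin : Fintype X
  equiv : A ≃⋆ₐ[ℂ] (X → ℂ)

lemma exists_model (A : Type) [NormedRing A] [StarRing A] [CStarRing A]
    [NormedAlgebra ℂ A] [StarModule ℂ A] [FiniteDimensional ℂ A]
    (hcomm : ∀ a b : A, a * b = b * a) :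
    Nonempty (ConcreteModel A) := by
  classical
  letI : NormedCommRing A := { ‹NormedRing A› with mul_comm := hcomm }
  letI : CompleteSpace A := FiniteDimensional.complete ℂ A
  letI : CStarAlgebra A := { }
  letI : CommCStarAlgebra A := { mul_comm := hcomm }
  -- the character space is finite
  haveI hfin : Finite (WeakDual.characterSpace ℂ A) := by
    let toLin : WeakDual.characterSpace ℂ A → (A →ₗ[ℂ] ℂ) :=
      fun χ => ((χ : WeakDual ℂ A) : A →ₗ[ℂ] ℂ)
    let LM : (A →ₗ[ℂ] ℂ) →ₗ[ℂ] (A → ℂ) :=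
      { toFun := fun F => ⇑F
        map_add' := fun F G => rfl
        map_smul' := fun c F => rfl }
    have hmon : Function.Injective
        (fun χ : WeakDual.characterSpace ℂ A =>
          ((WeakDual.CharacterSpace.equivAlgHom χ : A →ₐ[ℂ] ℂ) : A →* ℂ)) := by
      intro χ₁ χ₂ h
      apply WeakDual.CharacterSpace.equivAlgHom.injective
      exact AlgHom.ext fun a => congrFun (congrArg (fun g : A →* ℂ => ⇑g) h) a
    have hli0 := (linearIndependent_monoidHom A ℂ).comp _ hmon
    have hli : LinearIndependent ℂ toLin := by
      apply LinearIndependent.of_comp LM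
      convert hli0 using 1 <;> rfl
    haveI : IsNoetherian ℂ (A →ₗ[ℂ] ℂ) := IsNoetherian.iff_fg.mpr inferInstance
    exact hli.finite_of_isNoetherian
  letI : Fintype (WeakDual.characterSpace ℂ A) := Fintype.ofFinite _
  exact ⟨⟨WeakDual.characterSpace ℂ A, inferInstance,
    (gelfandStarTransform A).trans (discreteFunEquiv _)⟩⟩

end EFAux
/-- If `H` is an orthogonally affine fibred functor with `H_A(ω) ≥ 0` on
all states and `H_A(ω) = 0` on pure states, then `H_f(ω) ≥ 0` for all unital
`*`-homomorphisms `f : B → A` between *commutative* finite-dimensional C*-algebras and all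
states `ω` on `A`. -/
theorem entropyFunctor_nonneg_on_commutative (E : EntropyFunctor)
    (haff : E.OrthAffine)
    (hpos : E.NonnegVanishingOnPure)
    (A : Type) [NormedRing A] [StarRing A] [CStarRing A] [NormedAlgebra ℂ A]
      [StarModule ℂ A] [FiniteDimensional ℂ A]
    (B : Type) [NormedRing B] [StarRing B] [CStarRing B] [NormedAlgebra ℂ B]
      [StarModule ℂ B] [FiniteDimensional ℂ B]
    (hAcomm : ∀ a b : A, a * b = b * a)
    (hBcomm : ∀ a b : B, a * b = b * a)
    (f : B →⋆ₐ[ℂ] A) (ω : A →ₗ[ℂ] ℂ) (hω : IsState ω) :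
    0 ≤ E.H A B f ω := by
  classical
  obtain ⟨MA⟩ := EFAux.exists_model A hAcomm
  obtain ⟨MB⟩ := EFAux.exists_model B hBcomm
  letI := MA.fin
  letI := MB.fin
  letI : DecidableEq MA.X := Classical.decEq _
  letI : DecidableEq MB.X := Classical.decEq _
  exact EFAux.core E haff hpos f MA.equiv MB.equiv Finset.univ ω hω
    (fun y hy => absurd (Finset.mem_univ y) hy)
end

section
/- Let H be a continuous, orthogonally affine fibred functor on finite-dimensional unital C*-algebras such that H_A(ω) ≥ 0 for every state ω on every finite-dimensional C*-algebra A, with H_A(ω) = 0 whenever ω is pure. Then there exists a constant c ≥ 0 such that for every unital *-homomorphism f : B → A between commutative finite-dimensional C*-algebras and every state ω on A, H_f(ω) = c(H(p) − H(q)), where p and q are the probability distributions corresponding to ω and ω∘f respectively and H(·) denotes Shannon entropy. -/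
open scoped ComplexOrder

open scoped ComplexOrder

/-- The state on `ℂ^X` corresponding to a probability distribution `p`. -/
noncomputable def classicalState {X : Type*} [Fintype X] (p : X → ℝ) :
    (X → ℂ) →ₗ[ℂ] ℂ where
  toFun g := ∑ x, (p x : ℂ) * g x
  map_add' a b := by simp [mul_add, Finset.sum_add_distrib]
  map_smul' c a := by
    simp only [Pi.smul_apply, smul_eq_mul, RingHom.id_apply, Finset.mul_sum]
    exact Finset.sum_congr rfl fun x _ => by ring

namespace EFC
open Finset

noncomputable section
open Classical

variable {X Y Z : Type}

/-- Complex delta function. -/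
def delC (x₀ : X) : X → ℂ := fun x => if x = x₀ then 1 else 0

/-- Real point mass. -/
def dirac (x₀ : X) : X → ℝ := fun x => if x = x₀ then 1 else 0

/-- Pushforward of a distribution along a map. -/
def pushf [Fintype X] (φ : X → Y) (p : X → ℝ) : Y → ℝ :=
  fun y => ∑ x, if φ x = y then p x else 0

lemma classicalState_apply [Fintype X] (p : X → ℝ) (g : X → ℂ) :
    classicalState p g = ∑ x, (p x : ℂ) * g x := rfl

lemma star_mul_self_apply (a : X → ℂ) (x : X) :
    (star a * a) x = ((Complex.normSq (a x) : ℝ) : ℂ) := by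
  simp only [Pi.mul_apply, Pi.star_apply, RCLike.star_def]
  rw [mul_comm, Complex.mul_conj]

lemma isState_classicalState [Fintype X] {p : X → ℝ} (hp : IsProbDist p) :
    IsState (classicalState p) := by
  constructor
  · simp only [classicalState_apply, Pi.one_apply, mul_one]
    rw [← Complex.ofReal_sum, hp.2, Complex.ofReal_one]
  · intro a
    simp only [classicalState_apply, star_mul_self_apply]
    have : ∑ x, (p x : ℂ) * ((Complex.normSq (a x) : ℝ) : ℂ)
        = ((∑ x, p x * Complex.normSq (a x) : ℝ) : ℂ) := by
      push_cast; ring_nf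
    rw [this, Complex.zero_le_real]
    exact Finset.sum_nonneg fun x _ => mul_nonneg (hp.1 x) (Complex.normSq_nonneg _)

lemma classicalState_delC [Fintype X] (p : X → ℝ) (x₀ : X) :
    classicalState p (delC x₀) = ((p x₀ : ℝ) : ℂ) := by
  simp only [classicalState_apply, delC, mul_ite, mul_one, mul_zero]
  rw [Finset.sum_ite_eq' Finset.univ x₀ (fun x => ((p x : ℝ) : ℂ))]
  simp

lemma eq_sum_delC [Fintype X] (a : X → ℂ) : a = ∑ x, a x • delC x := by
  funext x'
  simp only [Finset.sum_apply, Pi.smul_apply, delC, smul_eq_mul, mul_ite, mul_one, mul_zero]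
  rw [Finset.sum_ite_eq Finset.univ x' a]
  simp

/-- Two linear functionals on `ℂ^X` agreeing on delta functions are equal. -/
lemma funct_ext [Fintype X] {ω ξ : (X → ℂ) →ₗ[ℂ] ℂ}
    (h : ∀ x, ω (delC x) = ξ (delC x)) : ω = ξ := by
  refine LinearMap.ext fun a => ?_
  rw [eq_sum_delC a, map_sum, map_sum]
  exact Finset.sum_congr rfl fun x _ => by rw [map_smul, map_smul, h x]

/-- Every state on `ℂ^X` is classical. -/
lemma exists_dist_of_state [Fintype X] {ω : (X → ℂ) →ₗ[ℂ] ℂ} (hω : IsState ω) :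
    ∃ p : X → ℝ, IsProbDist p ∧ ω = classicalState p := by
  have hdel : ∀ x : X, star (delC x) * delC x = delC x := by
    intro x; funext x'
    simp only [Pi.mul_apply, Pi.star_apply, delC]
    split_ifs <;> simp
  have hpos : ∀ x : X, 0 ≤ ω (delC x) := fun x => by
    have := hω.2 (delC x); rwa [hdel x] at this
  refine ⟨fun x => (ω (delC x)).re, ⟨fun x => ?_, ?_⟩, ?_⟩
  · exact (Complex.le_def.1 (hpos _)).1
  · have h1 : (1 : X → ℂ) = ∑ x, delC x := by
      funext x'
      simp only [Finset.sum_apply, delC, Pi.one_apply]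
      rw [Finset.sum_ite_eq Finset.univ x' (fun _ => (1:ℂ))]; simp
    have := hω.1
    rw [h1, map_sum] at this
    have := congrArg Complex.re this
    simpa using this
  · apply funct_ext
    intro x
    rw [classicalState_delC]
    have him : (ω (delC x)).im = 0 := ((Complex.le_def.1 (hpos x)).2).symm
    exact (Complex.ext_iff.2 ⟨by simp, by simp [him]⟩)

lemma classicalState_inj [Fintype X] {p q : X → ℝ} (h : classicalState p = classicalState q) :
    p = q := by
  funext x
  have := congrArg (fun ω => ω (delC x)) h
  simp only [classicalState_delC] at this
  exact_mod_cast this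

end
end EFC

namespace EFC
open Finset

noncomputable section
open Classical

variable {X Y Z : Type}

/-- Complex indicator of the support of `p`. -/
def suppInd (p : X → ℝ) : X → ℂ := fun x => if p x = 0 then 0 else 1

lemma isProjection_suppInd (p : X → ℝ) : IsProjection (suppInd p) := by
  funext x
  simp only [Pi.mul_apply, Pi.star_apply, suppInd]
  split_ifs <;> simp

/-- Values of a projection in `ℂ^X` are `0` or `1`. -/
lemma proj_values {Q : X → ℂ} (hQ : IsProjection Q) (x : X) : Q x = 0 ∨ Q x = 1 := by
  have h := congrFun hQ x
  simp only [Pi.mul_apply, Pi.star_apply, RCLike.star_def] at h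
  rw [mul_comm, Complex.mul_conj] at h
  set r : ℝ := Complex.normSq (Q x) with hr
  have hQx : Q x = (r : ℂ) := h.symm
  have hnr : Complex.normSq ((r : ℂ)) = r := by rw [← hQx]
  rw [Complex.normSq_ofReal] at hnr
  have hor : r = 0 ∨ r = 1 := by
    rcases mul_eq_zero.mp (show r * (r - 1) = 0 by nlinarith) with h' | h'
    · left; exact h'
    · right; linarith
  rcases hor with h' | h'
  · left; rw [hQx, h']; simp
  · right; rw [hQx, h']; simp

lemma isSupportOf_classicalState [Fintype X] {p : X → ℝ} (hp : IsProbDist p) :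
    IsSupportOf (classicalState p) (suppInd p) := by
  refine ⟨isProjection_suppInd p, fun a => ⟨?_, ?_⟩, ?_⟩
  · -- absorption left
    simp only [classicalState_apply, Pi.mul_apply, suppInd]
    refine Finset.sum_congr rfl fun x _ => ?_
    by_cases hx : p x = 0 <;> simp [hx]
  · simp only [classicalState_apply, Pi.mul_apply, suppInd]
    refine Finset.sum_congr rfl fun x _ => ?_
    by_cases hx : p x = 0 <;> simp [hx]
  · -- minimality
    intro Q hQproj hQabs
    have hQ1 : ∀ x, p x ≠ 0 → Q x = 1 := by
      intro x hx
      have habs := (hQabs (delC x)).1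
      rw [classicalState_delC] at habs
      have hL : classicalState p (Q * delC x) = (p x : ℂ) * Q x := by
        rw [classicalState_apply, Finset.sum_eq_single x]
        · simp [Pi.mul_apply, delC]
        · intro b _ hb; simp [delC, hb]
        · intro hmem; exact absurd (Finset.mem_univ x) hmem
      rw [hL] at habs
      have hpx : (p x : ℂ) ≠ 0 := by exact_mod_cast hx
      have := mul_left_cancel₀ hpx (habs.trans (mul_one ((p x : ℝ) : ℂ)).symm)
      exact this
    refine ⟨Q - suppInd p, ?_⟩
    funext x
    simp only [Pi.sub_apply, Pi.mul_apply, Pi.star_apply, suppInd]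
    by_cases hx : p x = 0
    · simp only [hx, if_pos rfl, sub_zero]
      rcases proj_values hQproj x with h' | h' <;> simp [h']
    · rw [hQ1 x hx, if_neg hx]; simp

lemma mutuallyOrthogonal_classical [Fintype X] {p q : X → ℝ}
    (hp : IsProbDist p) (hq : IsProbDist q)
    (hdisj : ∀ x, p x = 0 ∨ q x = 0) :
    MutuallyOrthogonal (classicalState p) (classicalState q) := by
  refine ⟨suppInd p, suppInd q, isSupportOf_classicalState hp, isSupportOf_classicalState hq, ?_⟩
  funext x
  simp only [Pi.mul_apply, suppInd, Pi.zero_apply]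
  rcases hdisj x with h | h <;> simp [h]

/-- A point mass gives a pure state. -/
lemma isPureState_dirac [Fintype X] (x₀ : X) : IsPureState (classicalState (dirac x₀)) := by
  have hprob : IsProbDist (dirac x₀) := by
    constructor
    · intro x; unfold dirac; split_ifs <;> norm_num
    · unfold dirac; rw [Finset.sum_ite_eq' Finset.univ x₀ (fun _ => (1:ℝ))]; simp
  refine ⟨isState_classicalState hprob, ?_⟩
  intro l ω₁ ω₂ hl0 hl1 hs1 hs2 heq
  obtain ⟨p₁, hp₁, rfl⟩ := exists_dist_of_state hs1
  obtain ⟨p₂, hp₂, rfl⟩ := exists_dist_of_state hs2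
  have hval : ∀ x, dirac x₀ x = l * p₁ x + (1 - l) * p₂ x := by
    intro x
    have := congrArg (fun ω => ω (delC x)) heq
    simp only [LinearMap.add_apply, LinearMap.smul_apply, classicalState_delC,
      smul_eq_mul] at this
    have : ((dirac x₀ x : ℝ) : ℂ) = ((l * p₁ x + (1 - l) * p₂ x : ℝ) : ℂ) := by
      rw [this]; push_cast; ring
    exact_mod_cast this
  have hzero : ∀ x, x ≠ x₀ → p₁ x = 0 ∧ p₂ x = 0 := by
    intro x hx
    have h := hval x
    have : dirac x₀ x = 0 := by unfold dirac; simp [hx]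
    rw [this] at h
    have h1 : 0 ≤ l * p₁ x := mul_nonneg hl0.le (hp₁.1 x)
    have h2 : 0 ≤ (1 - l) * p₂ x := mul_nonneg (by linarith) (hp₂.1 x)
    constructor
    · by_contra hne
      have : 0 < l * p₁ x := mul_pos hl0 (lt_of_le_of_ne (hp₁.1 x) (Ne.symm hne))
      linarith
    · by_contra hne
      have : 0 < (1 - l) * p₂ x := mul_pos (by linarith) (lt_of_le_of_ne (hp₂.1 x) (Ne.symm hne))
      linarith
  have hp₁x₀ : p₁ = dirac x₀ := by
    funext x
    by_cases hx : x = x₀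
    · subst hx
      have hsum := hp₁.2
      rw [Finset.sum_eq_single x] at hsum
      · rw [hsum]; unfold dirac; simp
      · intro b _ hb; exact (hzero b hb).1
      · intro h; exact absurd (Finset.mem_univ x) h
    · rw [(hzero x hx).1]; unfold dirac; simp [hx]
  have hp₂x₀ : p₂ = dirac x₀ := by
    funext x
    by_cases hx : x = x₀
    · subst hx
      have hsum := hp₂.2
      rw [Finset.sum_eq_single x] at hsum
      · rw [hsum]; unfold dirac; simp
      · intro b _ hb; exact (hzero b hb).2
      · intro h; exact absurd (Finset.mem_univ x) h
    · rw [(hzero x hx).2]; unfold dirac; simp [hx]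
  rw [hp₁x₀, hp₂x₀]

end
end EFC

namespace EFC
open Finset

noncomputable section
open Classical

variable {X Y Z : Type}

/-- The `*`-homomorphism `ℂ^Y → ℂ^X` induced by `φ : X → Y`. -/
def cmap (φ : X → Y) : (Y → ℂ) →⋆ₐ[ℂ] (X → ℂ) :=
  { toFun := fun g => g ∘ φ
    map_one' := rfl
    map_mul' := fun _ _ => rfl
    map_zero' := rfl
    map_add' := fun _ _ => rfl
    commutes' := fun _ => rfl
    map_star' := fun _ => rfl }

lemma cmap_apply (φ : X → Y) (g : Y → ℂ) : cmap φ g = g ∘ φ := rfl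

lemma pullback_cmap [Fintype X] [Fintype Y] (φ : X → Y) (p : X → ℝ) :
    (classicalState p).comp (cmap φ).toAlgHom.toLinearMap = classicalState (pushf φ p) := by
  refine LinearMap.ext fun g => ?_
  have hy : ∀ y, ((pushf φ p y : ℝ) : ℂ) * g y
      = ∑ x, if φ x = y then (p x : ℂ) * g y else 0 := by
    intro y
    rw [pushf]; push_cast; rw [Finset.sum_mul]
    exact Finset.sum_congr rfl fun x _ => by split_ifs <;> simp
  calc (classicalState p) ((cmap φ).toAlgHom.toLinearMap g)
      = ∑ x, (p x : ℂ) * g (φ x) := rfl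
    _ = ∑ x, ∑ y, if φ x = y then (p x : ℂ) * g y else 0 := by
        refine Finset.sum_congr rfl fun x _ => ?_
        rw [Finset.sum_ite_eq Finset.univ (φ x) (fun y => (p x : ℂ) * g y)]
        simp
    _ = ∑ y, ∑ x, if φ x = y then (p x : ℂ) * g y else 0 := Finset.sum_comm
    _ = ∑ y, ((pushf φ p y : ℝ) : ℂ) * g y := by
        exact Finset.sum_congr rfl fun y _ => (hy y).symm
    _ = classicalState (pushf φ p) g := rfl

lemma isProbDist_pushf [Fintype X] [Fintype Y] (φ : X → Y) {p : X → ℝ}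
    (hp : IsProbDist p) : IsProbDist (pushf φ p) := by
  constructor
  · intro y
    exact Finset.sum_nonneg fun x _ => by split_ifs; exacts [hp.1 x, le_refl 0]
  · rw [show ∑ y, pushf φ p y = ∑ y, ∑ x, if φ x = y then p x else 0 from rfl,
      Finset.sum_comm]
    rw [← hp.2]
    refine Finset.sum_congr rfl fun x _ => ?_
    rw [Finset.sum_ite_eq Finset.univ (φ x) (fun _ => p x)]; simp

lemma pushf_dirac [Fintype X] [Fintype Y] (φ : X → Y) (x₀ : X) :
    pushf φ (dirac x₀) = dirac (φ x₀) := by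
  funext y
  rw [pushf, Finset.sum_eq_single x₀]
  · unfold dirac; simp only [if_pos rfl]
    by_cases h : φ x₀ = y
    · simp [h]
    · rw [if_neg h, if_neg (Ne.symm h)]
  · intro b _ hb; unfold dirac; simp [hb]
  · intro h; exact absurd (Finset.mem_univ x₀) h

lemma pushf_mix [Fintype X] [Fintype Y] (φ : X → Y) (r s : X → ℝ) (l : ℝ) :
    pushf φ (fun x => l * r x + (1 - l) * s x)
      = fun y => l * pushf φ r y + (1 - l) * pushf φ s y := by
  funext y
  rw [pushf, pushf, pushf, Finset.mul_sum, Finset.mul_sum, ← Finset.sum_add_distrib]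
  refine Finset.sum_congr rfl fun x _ => ?_
  split_ifs <;> simp

lemma isProbDist_dirac [Fintype X] (x₀ : X) : IsProbDist (dirac x₀) := by
  constructor
  · intro x; unfold dirac; split_ifs <;> norm_num
  · unfold dirac; rw [Finset.sum_ite_eq' Finset.univ x₀ (fun _ => (1:ℝ))]; simp

lemma isProbDist_mix [Fintype X] {r s : X → ℝ} (hr : IsProbDist r) (hs : IsProbDist s)
    {l : ℝ} (hl0 : 0 ≤ l) (hl1 : l ≤ 1) :
    IsProbDist (fun x => l * r x + (1 - l) * s x) := by
  constructor
  · intro x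
    exact add_nonneg (mul_nonneg hl0 (hr.1 x)) (mul_nonneg (by linarith) (hs.1 x))
  · rw [Finset.sum_add_distrib, ← Finset.mul_sum, ← Finset.mul_sum, hr.2, hs.2]; ring

lemma mix_state [Fintype X] (r s : X → ℝ) (l : ℝ) :
    (l : ℂ) • classicalState r + ((1 - l : ℝ) : ℂ) • classicalState s
      = classicalState (fun x => l * r x + (1 - l) * s x) := by
  refine LinearMap.ext fun g => ?_
  simp only [LinearMap.add_apply, LinearMap.smul_apply, classicalState_apply, smul_eq_mul,
    Finset.mul_sum]
  rw [← Finset.sum_add_distrib]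
  refine Finset.sum_congr rfl fun x _ => ?_
  push_cast; ring

/-- Composing any unital `*`-homomorphism with the unique map from `ℂ` gives the
unique map from `ℂ`. -/
lemma unitalHom_comp {A B : Type} [Ring A] [StarRing A] [Algebra ℂ A] [StarModule ℂ A]
    [Ring B] [StarRing B] [Algebra ℂ B] [StarModule ℂ B] (f : B →⋆ₐ[ℂ] A) :
    f.comp (unitalHom B) = unitalHom A := by
  refine StarAlgHom.ext fun z => ?_
  show f ((Algebra.ofId ℂ B) z) = (Algebra.ofId ℂ A) z
  rw [Algebra.ofId_apply, Algebra.ofId_apply]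
  exact AlgHomClass.commutes f z

variable (E : EntropyFunctor)

/-- `F_X(p) = H_{!}(classicalState p)`. -/
def Fd (X : Type) [Fintype X] (p : X → ℝ) : ℝ :=
  E.H (X → ℂ) ℂ (unitalHom _) (classicalState p)

lemma lemA {X Y : Type} [Fintype X] [Fintype Y] (f : (Y → ℂ) →⋆ₐ[ℂ] (X → ℂ))
    {p : X → ℝ} {q : Y → ℝ} (hp : IsProbDist p)
    (hpull : (classicalState p).comp f.toAlgHom.toLinearMap = classicalState q) :
    E.H (X → ℂ) (Y → ℂ) f (classicalState p) = Fd E X p - Fd E Y q := by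
  have hcomp := E.H_comp (X → ℂ) (Y → ℂ) ℂ f (unitalHom _) (classicalState p)
    (isState_classicalState hp)
  rw [unitalHom_comp, hpull] at hcomp
  unfold Fd
  linarith [hcomp]

lemma Fd_dirac [Fintype X] (hpos : E.NonnegVanishingOnPure) (x₀ : X) :
    Fd E X (dirac x₀) = 0 :=
  (hpos _ (classicalState (dirac x₀)) (isState_classicalState (isProbDist_dirac x₀))).2
    (isPureState_dirac x₀)

lemma Fd_nonneg [Fintype X] (hpos : E.NonnegVanishingOnPure) {p : X → ℝ}
    (hp : IsProbDist p) : 0 ≤ Fd E X p :=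
  (hpos _ (classicalState p) (isState_classicalState hp)).1

/-- The `(★)` identity: affinity of the "entropy change" under a map `φ` preserving
orthogonality. -/
lemma starAffine [Fintype X] [Fintype Y] (haff : E.OrthAffine) (φ : X → Y) {r s : X → ℝ}
    (hr : IsProbDist r) (hs : IsProbDist s)
    (hdisj : ∀ x, r x = 0 ∨ s x = 0)
    (hdisj' : ∀ y, pushf φ r y = 0 ∨ pushf φ s y = 0)
    {l : ℝ} (hl0 : 0 ≤ l) (hl1 : l ≤ 1) :
    Fd E X (fun x => l * r x + (1 - l) * s x)
        - Fd E Y (pushf φ (fun x => l * r x + (1 - l) * s x))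
      = l * (Fd E X r - Fd E Y (pushf φ r))
        + (1 - l) * (Fd E X s - Fd E Y (pushf φ s)) := by
  have horth2 : MutuallyOrthogonal
      ((classicalState r).comp (cmap φ).toAlgHom.toLinearMap)
      ((classicalState s).comp (cmap φ).toAlgHom.toLinearMap) := by
    rw [pullback_cmap, pullback_cmap]
    exact mutuallyOrthogonal_classical (isProbDist_pushf φ hr) (isProbDist_pushf φ hs) hdisj'
  have haffapp := haff _ _ (cmap φ) (classicalState r) (classicalState s)
    (isState_classicalState hr) (isState_classicalState hs)
    (mutuallyOrthogonal_classical hr hs hdisj) horth2 l hl0 hl1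
  rw [mix_state] at haffapp
  rw [lemA E (cmap φ) (isProbDist_mix hr hs hl0 hl1) (pullback_cmap φ _),
      lemA E (cmap φ) hr (pullback_cmap φ r),
      lemA E (cmap φ) hs (pullback_cmap φ s)] at haffapp
  linarith [haffapp]

/-- `G(l) = F(l, 1-l)` on `Bool`. -/
def Gf (l : ℝ) : ℝ := Fd E Bool (fun b => if b then l else 1 - l)

/-- The binary grouping law `(◇)`. -/
lemma grouping [Fintype X] (haff : E.OrthAffine) (hpos : E.NonnegVanishingOnPure)
    {r s : X → ℝ} (hr : IsProbDist r) (hs : IsProbDist s)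
    (hdisj : ∀ x, r x = 0 ∨ s x = 0)
    {l : ℝ} (hl0 : 0 ≤ l) (hl1 : l ≤ 1) :
    Fd E X (fun x => l * r x + (1 - l) * s x)
      = l * Fd E X r + (1 - l) * Fd E X s + Gf E l := by
  set φ : X → Bool := fun x => if r x = 0 then false else true with hφ
  have hpr : pushf φ r = dirac true := by
    funext b
    rw [pushf]
    cases b
    · rw [Finset.sum_eq_zero]
      · unfold dirac; simp
      · intro x _
        by_cases hx : r x = 0 <;> simp [hφ, hx]
    · unfold dirac
      simp only [if_pos rfl]
      rw [← hr.2]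
      refine Finset.sum_congr rfl fun x _ => ?_
      by_cases hx : r x = 0 <;> simp [hφ, hx]
  have hps : pushf φ s = dirac false := by
    funext b
    rw [pushf]
    cases b
    · unfold dirac
      simp only [if_pos rfl]
      rw [← hs.2]
      refine Finset.sum_congr rfl fun x _ => ?_
      by_cases hx : r x = 0
      · simp [hφ, hx]
      · have : s x = 0 := (hdisj x).resolve_left hx
        simp [hφ, hx, this]
    · rw [Finset.sum_eq_zero]
      · unfold dirac; simp
      · intro x _
        by_cases hx : r x = 0
        · simp [hφ, hx]
        · have : s x = 0 := (hdisj x).resolve_left hx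
          simp [hφ, hx, this]
  have hdisj' : ∀ b, pushf φ r b = 0 ∨ pushf φ s b = 0 := by
    intro b
    rw [hpr, hps]
    cases b
    · left; unfold dirac; simp
    · right; unfold dirac; simp
  have hstar := starAffine E haff φ hr hs hdisj hdisj' hl0 hl1
  rw [pushf_mix, hpr, hps, Fd_dirac E hpos, Fd_dirac E hpos] at hstar
  have hmixd : Fd E Bool (fun b => l * dirac true b + (1 - l) * dirac false b) = Gf E l := by
    unfold Gf
    congr 1
    funext b
    unfold dirac
    cases b <;> simp
  rw [hmixd] at hstar
  linarith [hstar]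

end
end EFC

namespace EFC
open Finset

noncomputable section
open Classical

variable {X Y Z : Type} (E : EntropyFunctor)

lemma exists_support_of_prob [Fintype X] {p : X → ℝ} (hp : IsProbDist p) :
    ∃ x, p x ≠ 0 := by
  by_contra h
  push_neg at h
  have : ∑ x, p x = 0 := Finset.sum_eq_zero fun x _ => h x
  rw [hp.2] at this
  norm_num at this

lemma dirac_of_card_one [Fintype X] {p : X → ℝ} (hp : IsProbDist p)
    (h1 : (Finset.univ.filter (fun x => p x ≠ 0)).card = 1) :
    ∃ x₀, p = dirac x₀ := by
  obtain ⟨x₀, hx₀⟩ := Finset.card_eq_one.mp h1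
  have hx₀mem : p x₀ ≠ 0 := by
    have : x₀ ∈ Finset.univ.filter (fun x => p x ≠ 0) := by rw [hx₀]; exact Finset.mem_singleton_self x₀
    exact (Finset.mem_filter.mp this).2
  have hzero : ∀ x, x ≠ x₀ → p x = 0 := by
    intro x hx
    by_contra hpx
    have : x ∈ Finset.univ.filter (fun x => p x ≠ 0) := Finset.mem_filter.mpr ⟨Finset.mem_univ x, hpx⟩
    rw [hx₀, Finset.mem_singleton] at this
    exact hx this
  have hval : p x₀ = 1 := by
    have := hp.2
    rw [Finset.sum_eq_single x₀ (fun b _ hb => hzero b hb)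
      (fun h => absurd (Finset.mem_univ x₀) h)] at this
    exact this
  refine ⟨x₀, funext fun x => ?_⟩
  unfold dirac
  by_cases hx : x = x₀
  · subst hx; simp [hval]
  · simp [hx, hzero x hx]

/-- Invariance of `F` under injective pushforwards. -/
lemma Fd_pushf_injective [Fintype X] [Fintype Z]
    (haff : E.OrthAffine) (hpos : E.NonnegVanishingOnPure)
    {ι : X → Z} (hι : Function.Injective ι) {p : X → ℝ} (hp : IsProbDist p) :
    Fd E Z (pushf ι p) = Fd E X p := by
  generalize hn : (Finset.univ.filter (fun x => p x ≠ 0)).card = n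
  induction n using Nat.strong_induction_on generalizing p with
  | _ n IH =>
  -- support is nonempty
  have hne : 1 ≤ n := by
    obtain ⟨x₀, hx₀⟩ := exists_support_of_prob hp
    rw [← hn]
    refine Finset.card_pos.mpr ⟨x₀, Finset.mem_filter.mpr ⟨Finset.mem_univ _, hx₀⟩⟩
  rcases eq_or_lt_of_le hne with h1 | h2
  · -- point mass
    obtain ⟨x₀, rfl⟩ := dirac_of_card_one hp (by omega)
    rw [pushf_dirac, Fd_dirac E hpos, Fd_dirac E hpos]
  · -- at least two support points
    obtain ⟨x₀, hx₀⟩ := exists_support_of_prob hp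
    set l : ℝ := p x₀ with hl
    have hl0 : 0 < l := lt_of_le_of_ne (hp.1 x₀) (Ne.symm hx₀)
    have hl1 : l < 1 := by
      by_contra hge
      push_neg at hge
      -- then p = dirac x₀, so support has card 1
      have hsum := hp.2
      have hrest : ∑ x ∈ Finset.univ.erase x₀, p x = 1 - l := by
        have := Finset.add_sum_erase Finset.univ p (Finset.mem_univ x₀)
        rw [hsum] at this
        linarith [this]
      have hrest0 : ∑ x ∈ Finset.univ.erase x₀, p x ≤ 0 := by
        rw [hrest]; linarith
      have hz : ∀ x ∈ Finset.univ.erase x₀, p x = 0 := by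
        intro x hx
        have hnn : ∀ x ∈ Finset.univ.erase x₀, 0 ≤ p x := fun x _ => hp.1 x
        by_contra hpx
        have : 0 < ∑ x ∈ Finset.univ.erase x₀, p x :=
          Finset.sum_pos' hnn ⟨x, hx, lt_of_le_of_ne (hp.1 x) (Ne.symm hpx)⟩
        linarith
    -- support ⊆ {x₀}
      have : Finset.univ.filter (fun x => p x ≠ 0) = {x₀} := by
        apply Finset.Subset.antisymm
        · intro x hx
          rw [Finset.mem_filter] at hx
          rw [Finset.mem_singleton]
          by_contra hne'
          exact hx.2 (hz x (Finset.mem_erase.mpr ⟨hne', Finset.mem_univ x⟩))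
        · intro x hx
          rw [Finset.mem_singleton] at hx
          subst hx
          exact Finset.mem_filter.mpr ⟨Finset.mem_univ _, hx₀⟩
      rw [this] at hn
      simp at hn
      omega
    set s : X → ℝ := fun x => if x = x₀ then 0 else p x / (1 - l) with hs
    have h1l : (0:ℝ) < 1 - l := by linarith
    have hssum : ∑ x, s x = 1 := by
      have : ∑ x, s x = (∑ x ∈ Finset.univ.erase x₀, p x) / (1 - l) := by
        rw [Finset.sum_div]
        rw [← Finset.sum_erase_add Finset.univ s (Finset.mem_univ x₀)]
        have : s x₀ = 0 := by simp [hs]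
        rw [this, add_zero]
        refine Finset.sum_congr rfl fun x hx => ?_
        have : x ≠ x₀ := (Finset.mem_erase.mp hx).1
        simp [hs, this]
      rw [this]
      have hrest : ∑ x ∈ Finset.univ.erase x₀, p x = 1 - l := by
        have h' := Finset.add_sum_erase Finset.univ p (Finset.mem_univ x₀)
        rw [hp.2] at h'
        linarith [h']
      rw [hrest]
      field_simp
    have hsprob : IsProbDist s := by
      refine ⟨fun x => ?_, hssum⟩
      simp only [hs]
      split_ifs
      · exact le_refl 0
      · exact div_nonneg (hp.1 x) h1l.le
    have hmix : p = fun x => l * dirac x₀ x + (1 - l) * s x := by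
      funext x
      by_cases hx : x = x₀
      · subst hx; simp [dirac, hs, hl]
      · simp only [dirac, hs, if_neg hx]
        field_simp
        ring
    have hdisj : ∀ x, dirac x₀ x = 0 ∨ s x = 0 := fun x => by
      by_cases hx : x = x₀
      · right; simp [hs, hx]
      · left; simp [dirac, hx]
    have hdisj' : ∀ z, pushf ι (dirac x₀) z = 0 ∨ pushf ι s z = 0 := by
      intro z
      rw [pushf_dirac]
      by_cases hz : z = ι x₀
      · right
        subst hz
        rw [pushf, Finset.sum_eq_zero]
        intro x _
        by_cases hx : ι x = ι x₀
        · have hxx := hι hx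
          subst hxx
          simp [hs]
        · simp [hx]
      · left; unfold dirac; simp [hz]
    have hcard : (Finset.univ.filter (fun x => s x ≠ 0)).card = n - 1 := by
      have hset : Finset.univ.filter (fun x => s x ≠ 0)
          = (Finset.univ.filter (fun x => p x ≠ 0)).erase x₀ := by
        ext x
        simp only [Finset.mem_filter, Finset.mem_erase, Finset.mem_univ, true_and]
        constructor
        · intro hsx
          by_cases hx : x = x₀
          · exact absurd (by simp [hs, hx]) hsx
          · refine ⟨hx, fun hpx => hsx ?_⟩
            simp [hs, hx, hpx]
        · rintro ⟨hx, hpx⟩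
          simp only [hs, if_neg hx]
          exact div_ne_zero hpx (ne_of_gt h1l)
      rw [hset, Finset.card_erase_of_mem, hn]
      exact Finset.mem_filter.mpr ⟨Finset.mem_univ _, hx₀⟩
    have hIH : Fd E Z (pushf ι s) = Fd E X s := IH (n-1) (by omega) hsprob hcard
    have hstar := starAffine E haff ι (isProbDist_dirac x₀) hsprob hdisj hdisj' hl0.le hl1.le
    rw [← hmix] at hstar
    rw [pushf_dirac, Fd_dirac E hpos, Fd_dirac E hpos, hIH] at hstar
    linarith [hstar]

lemma pushf_equiv_apply [Fintype X] [Fintype Z] (e : X ≃ Z) (p : X → ℝ) (z : Z) :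
    pushf (⇑e) p z = p (e.symm z) := by
  rw [pushf, Finset.sum_eq_single (e.symm z)]
  · simp
  · intro b _ hb
    rw [if_neg]
    intro h
    apply hb
    rw [← h]
    simp
  · intro h; exact absurd (Finset.mem_univ _) h

lemma Fd_equiv [Fintype X] [Fintype Z] (haff : E.OrthAffine) (hpos : E.NonnegVanishingOnPure)
    (e : X ≃ Z) {p : X → ℝ} (hp : IsProbDist p) :
    Fd E Z (pushf (⇑e) p) = Fd E X p :=
  Fd_pushf_injective E haff hpos e.injective hp

end
end EFC

namespace EFC
open Finset

noncomputable section
open Classical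

variable {X Y Z : Type} (E : EntropyFunctor)

def unif (n : ℕ) : Fin n → ℝ := fun _ => (n : ℝ)⁻¹

lemma isProbDist_unif {n : ℕ} (hn : 1 ≤ n) : IsProbDist (unif n) := by
  have hn' : (0:ℝ) < n := by exact_mod_cast hn
  constructor
  · intro x; exact inv_nonneg.mpr hn'.le
  · unfold unif
    rw [Finset.sum_const, Finset.card_univ, Fintype.card_fin, nsmul_eq_mul]
    field_simp

/-- Entropy of the uniform distribution. -/
def Lam (n : ℕ) : ℝ := Fd E (Fin n) (unif n)

lemma unif_one_eq_dirac : unif 1 = dirac (0 : Fin 1) := by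
  funext x
  unfold unif dirac
  simp [Subsingleton.elim x 0]

lemma Lam_one (hpos : E.NonnegVanishingOnPure) : Lam E 1 = 0 := by
  rw [Lam, unif_one_eq_dirac, Fd_dirac E hpos]

lemma Lam_nonneg (hpos : E.NonnegVanishingOnPure) {n : ℕ} (hn : 1 ≤ n) : 0 ≤ Lam E n :=
  Fd_nonneg E hpos (isProbDist_unif hn)

lemma pushf_inj_apply [Fintype X] [Fintype Z] {ι : X → Z} (hι : Function.Injective ι)
    (p : X → ℝ) (x : X) : pushf ι p (ι x) = p x := by
  rw [pushf, Finset.sum_eq_single x]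
  · simp
  · intro b _ hb; rw [if_neg (fun h => hb (hι h))]
  · intro h; exact absurd (Finset.mem_univ _) h

lemma pushf_inj_apply_ne [Fintype X] [Fintype Z] (ι : X → Z)
    (p : X → ℝ) {z : Z} (hz : ∀ x, ι x ≠ z) : pushf ι p z = 0 := by
  rw [pushf, Finset.sum_eq_zero]
  intro x _; rw [if_neg (hz x)]

/-- Splitting over a disjoint (sum-type) decomposition. -/
lemma Fd_sum_split [Fintype X] [Fintype Y]
    (haff : E.OrthAffine) (hpos : E.NonnegVanishingOnPure)
    {a : X → ℝ} {b : Y → ℝ} (ha : IsProbDist a) (hb : IsProbDist b)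
    {l : ℝ} (hl0 : 0 ≤ l) (hl1 : l ≤ 1) :
    Fd E (X ⊕ Y) (Sum.elim (fun x => l * a x) (fun y => (1 - l) * b y))
      = l * Fd E X a + (1 - l) * Fd E Y b + Gf E l := by
  set r : X ⊕ Y → ℝ := Sum.elim a (fun _ => 0) with hrdef
  set s : X ⊕ Y → ℝ := Sum.elim (fun _ => 0) b with hsdef
  have hr : pushf Sum.inl a = r := by
    funext z
    cases z with
    | inl x => rw [pushf_inj_apply Sum.inl_injective]; rfl
    | inr y => rw [pushf_inj_apply_ne Sum.inl a (fun x h => Sum.inl_ne_inr h)]; rfl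
  have hs : pushf Sum.inr b = s := by
    funext z
    cases z with
    | inl x => rw [pushf_inj_apply_ne Sum.inr b (fun x h => Sum.inr_ne_inl h)]; rfl
    | inr y => rw [pushf_inj_apply Sum.inr_injective]; rfl
  have hrprob : IsProbDist r := by rw [← hr]; exact isProbDist_pushf _ ha
  have hsprob : IsProbDist s := by rw [← hs]; exact isProbDist_pushf _ hb
  have hdisj : ∀ z, r z = 0 ∨ s z = 0 := by
    intro z
    cases z with
    | inl x => right; rfl
    | inr y => left; rfl
  have hgroup := grouping E haff hpos hrprob hsprob hdisj hl0 hl1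
  have hmix : (fun z => l * r z + (1 - l) * s z)
      = Sum.elim (fun x => l * a x) (fun y => (1 - l) * b y) := by
    funext z
    cases z with
    | inl x => show l * a x + (1 - l) * 0 = l * a x; ring
    | inr y => show l * 0 + (1 - l) * b y = (1 - l) * b y; ring
  rw [hmix] at hgroup
  have hFr : Fd E (X ⊕ Y) r = Fd E X a := by
    rw [← hr]; exact Fd_pushf_injective E haff hpos Sum.inl_injective ha
  have hFs : Fd E (X ⊕ Y) s = Fd E Y b := by
    rw [← hs]; exact Fd_pushf_injective E haff hpos Sum.inr_injective hb
  rw [hFr, hFs] at hgroup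
  exact hgroup

/-- Master identity `(M)`. -/
lemma Lam_add (haff : E.OrthAffine) (hpos : E.NonnegVanishingOnPure)
    {m n : ℕ} (hm : 1 ≤ m) (hn : 1 ≤ n) :
    Lam E (m + n) = ((m:ℝ)/(m+n)) * Lam E m + ((n:ℝ)/(m+n)) * Lam E n
      + Gf E ((m:ℝ)/(m+n)) := by
  have hmr : (0:ℝ) < m := by exact_mod_cast hm
  have hnr : (0:ℝ) < n := by exact_mod_cast hn
  have hmn : (0:ℝ) < (m:ℝ) + n := by linarith
  set l : ℝ := (m:ℝ)/((m:ℝ)+n) with hl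
  have hl0 : 0 ≤ l := div_nonneg hmr.le hmn.le
  have hl1 : l ≤ 1 := by rw [hl, div_le_one hmn]; linarith
  have h1l : 1 - l = (n:ℝ)/((m:ℝ)+n) := by rw [hl]; field_simp; ring
  have hsplit := Fd_sum_split E haff hpos (isProbDist_unif hm) (isProbDist_unif hn) hl0 hl1
  set P : Fin m ⊕ Fin n → ℝ :=
    Sum.elim (fun x => l * unif m x) (fun y => (1 - l) * unif n y) with hP
  have hPprob : IsProbDist P := by
    constructor
    · intro z
      cases z with
      | inl x => exact mul_nonneg hl0 (inv_nonneg.mpr hmr.le)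
      | inr y => exact mul_nonneg (by linarith) (inv_nonneg.mpr hnr.le)
    · rw [hP]
      rw [Fintype.sum_sum_type]
      simp only [Sum.elim_inl, Sum.elim_inr]
      rw [← Finset.mul_sum, ← Finset.mul_sum, (isProbDist_unif hm).2, (isProbDist_unif hn).2]
      ring
  have hpush : pushf (⇑(finSumFinEquiv : Fin m ⊕ Fin n ≃ Fin (m+n))) P = unif (m+n) := by
    funext z
    rw [pushf_equiv_apply]
    rcases h : (finSumFinEquiv : Fin m ⊕ Fin n ≃ Fin (m+n)).symm z with x | y
    · show l * unif m x = unif (m+n) (z)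
      rw [unif, unif, hl]
      push_cast
      field_simp
    · show (1 - l) * unif n y = unif (m+n) z
      rw [unif, unif, h1l]
      push_cast
      field_simp
  have heq := Fd_equiv E haff hpos (finSumFinEquiv : Fin m ⊕ Fin n ≃ Fin (m+n)) hPprob
  rw [hpush] at heq
  show Fd E (Fin (m+n)) (unif (m+n)) = _
  rw [heq, hsplit, h1l]
  rfl

/-- Recursion for `Λ`. -/
lemma Lam_rec (haff : E.OrthAffine) (hpos : E.NonnegVanishingOnPure)
    {n : ℕ} (hn : 1 ≤ n) :
    Lam E (n + 1) = ((n:ℝ)/(n+1)) * Lam E n + Gf E ((n:ℝ)/(n+1)) := by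
  have := Lam_add E haff hpos hn (le_refl 1)
  rw [Lam_one E hpos] at this
  push_cast at this ⊢
  linarith [this]

/-- `Λ` is completely additive. -/
lemma Lam_mul (haff : E.OrthAffine) (hpos : E.NonnegVanishingOnPure) :
    ∀ {k m : ℕ}, 1 ≤ k → 1 ≤ m → Lam E (k * m) = Lam E k + Lam E m := by
  intro k
  induction k with
  | zero => intro m h; omega
  | succ k IH =>
    intro m hk hm
    rcases Nat.eq_or_lt_of_le hk with h1 | h2
    · -- k + 1 = 1
      have : k = 0 := by omega
      subst this
      simp [Lam_one E hpos]
    · have hk1 : 1 ≤ k := by omega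
      have hkm : 1 ≤ k * m := Nat.one_le_iff_ne_zero.mpr (by positivity)
      have hsucc : (k + 1) * m = k * m + m := by ring
      rw [hsucc, Lam_add E haff hpos hkm hm, IH hk1 hm]
      have hrec := Lam_rec E haff hpos hk1
      have hmr : (0:ℝ) < m := by exact_mod_cast hm
      have hkr : (0:ℝ) < k := by exact_mod_cast hk1
      have e1 : ((k*m : ℕ):ℝ)/(((k*m:ℕ):ℝ) + (m:ℝ)) = (k:ℝ)/((k:ℝ)+1) := by
        push_cast
        rw [div_eq_div_iff (by positivity) (by positivity)]
        ring
      have e2 : ((m:ℕ):ℝ)/(((k*m:ℕ):ℝ) + (m:ℝ)) = 1/((k:ℝ)+1) := by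
        push_cast
        rw [div_eq_div_iff (by positivity) (by positivity)]
        ring
      have hsum1 : (k:ℝ)/((k:ℝ)+1) + 1/((k:ℝ)+1) = 1 := by field_simp
      rw [e1, e2, hrec]
      linear_combination (Lam E m) * hsum1

/-- `G` at rational points in terms of `Λ`. -/
lemma Gf_rat (haff : E.OrthAffine) (hpos : E.NonnegVanishingOnPure)
    {k n : ℕ} (hk0 : 0 < k) (hkn : k < n) :
    Gf E ((k:ℝ)/n) = Lam E n - ((k:ℝ)/n) * Lam E k - (((n-k : ℕ):ℝ)/n) * Lam E (n-k) := by
  have h1 : 1 ≤ k := hk0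
  have h2 : 1 ≤ n - k := by omega
  have := Lam_add E haff hpos h1 h2
  rw [show k + (n - k) = n by omega] at this
  rw [show ((k:ℝ) + ((n-k:ℕ):ℝ)) = (n:ℝ) by push_cast [Nat.cast_sub hkn.le]; ring] at this
  linarith [this]

lemma Gf_zero (hpos : E.NonnegVanishingOnPure) : Gf E 0 = 0 := by
  rw [Gf]
  have : (fun b : Bool => if b then (0:ℝ) else 1 - 0) = dirac false := by
    funext b
    cases b <;> simp [dirac]
  rw [this, Fd_dirac E hpos]

lemma Gf_one (hpos : E.NonnegVanishingOnPure) : Gf E 1 = 0 := by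
  rw [Gf]
  have : (fun b : Bool => if b then (1:ℝ) else 1 - 1) = dirac true := by
    funext b
    cases b <;> simp [dirac]
  rw [this, Fd_dirac E hpos]

end
end EFC

namespace EFC
open Finset Filter

noncomputable section
open Classical

variable (E : EntropyFunctor)

def h2 (x : ℝ) : ℝ := Real.negMulLog x + Real.negMulLog (1 - x)

lemma h2_continuous : Continuous h2 :=
  (Real.continuous_negMulLog).add
    (Real.continuous_negMulLog.comp (continuous_const.sub continuous_id))

lemma abs_squeeze {f g : ℕ → ℝ} (h0 : ∀ᶠ n in atTop, |f n| ≤ g n)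
    (hg : Tendsto g atTop (nhds 0)) : Tendsto f atTop (nhds 0) := by
  refine (tendsto_zero_iff_abs_tendsto_zero f).mpr ?_
  have habs : Tendsto (fun n => |f n|) atTop (nhds 0) :=
    squeeze_zero' (Filter.Eventually.of_forall fun n => abs_nonneg _) h0 hg
  exact habs

lemma isProbDist_bool {t : ℝ} (h0 : 0 ≤ t) (h1 : t ≤ 1) :
    IsProbDist (fun b : Bool => if b then t else 1 - t) := by
  constructor
  · intro b; cases b <;> simp <;> linarith
  · rw [Fintype.sum_bool]; simp

/-- Sequential continuity of `G`. -/
lemma Gf_tendsto (hcont : E.ContinuousOnStates) {lseq : ℕ → ℝ} {l : ℝ}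
    (h0 : ∀ k, 0 ≤ lseq k) (h1 : ∀ k, lseq k ≤ 1) (hl0 : 0 ≤ l) (hl1 : l ≤ 1)
    (hconv : Tendsto lseq atTop (nhds l)) :
    Tendsto (fun k => Gf E (lseq k)) atTop (nhds (Gf E l)) := by
  have := hcont (Bool → ℂ) ℂ (unitalHom _)
    (fun k => classicalState (fun b => if b then lseq k else 1 - lseq k))
    (classicalState (fun b => if b then l else 1 - l))
    (fun k => isState_classicalState (isProbDist_bool (h0 k) (h1 k)))
    (isState_classicalState (isProbDist_bool hl0 hl1)) ?_
  · exact this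
  · intro a
    simp only [classicalState_apply]
    apply tendsto_finset_sum
    intro b _
    have hC : Tendsto (fun k => ((lseq k : ℝ) : ℂ)) atTop (nhds ((l : ℝ) : ℂ)) :=
      (Complex.continuous_ofReal.tendsto l).comp hconv
    cases b
    · simp only [Bool.false_eq_true, if_false]
      have : Tendsto (fun k => ((1 - lseq k : ℝ) : ℂ)) atTop (nhds ((1 - l : ℝ) : ℂ)) :=
        (Complex.continuous_ofReal.tendsto (1 - l)).comp (tendsto_const_nhds.sub hconv)
      exact this.mul_const (a false)
    · simp only [if_true]
      exact hC.mul_const (a true)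

lemma gamma_tendsto (hcont : E.ContinuousOnStates) (hpos : E.NonnegVanishingOnPure) :
    Tendsto (fun n : ℕ => Gf E ((n : ℝ) / ((n : ℝ) + 1))) atTop (nhds 0) := by
  have h := Gf_tendsto E hcont (lseq := fun n : ℕ => (n : ℝ) / ((n : ℝ) + 1)) (l := 1)
    (fun k => div_nonneg (Nat.cast_nonneg k) (by positivity))
    (fun k => by
      rw [div_le_one (by positivity)]; linarith [Nat.cast_nonneg (α := ℝ) k])
    zero_le_one (le_refl 1) ?_
  · rwa [Gf_one E hpos] at h
  · exact tendsto_natCast_div_add_atTop (1 : ℝ)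

lemma Lam_sum_formula (haff : E.OrthAffine) (hpos : E.NonnegVanishingOnPure) :
    ∀ n : ℕ, 1 ≤ n → (n : ℝ) * Lam E n
      = ∑ k ∈ Finset.range n, ((k : ℝ) + 1) * Gf E ((k : ℝ) / ((k : ℝ) + 1)) := by
  intro n hn
  induction n with
  | zero => omega
  | succ n IH =>
    rcases Nat.eq_or_lt_of_le hn with h1 | h2
    · have : n = 0 := by omega
      subst this
      rw [Finset.sum_range_one]
      simp [Lam_one E hpos, Gf_zero E hpos]
    · have hn1 : 1 ≤ n := by omega
      have hrec := Lam_rec E haff hpos hn1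
      rw [Finset.sum_range_succ, ← IH hn1]
      have hnr : (0:ℝ) < (n:ℝ) + 1 := by positivity
      push_cast
      rw [hrec]
      field_simp

lemma Lam_div_tendsto (haff : E.OrthAffine) (hpos : E.NonnegVanishingOnPure)
    (hcont : E.ContinuousOnStates) :
    Tendsto (fun n : ℕ => Lam E n / (n : ℝ)) atTop (nhds 0) := by
  have hγ0 : Tendsto (fun k : ℕ => |Gf E ((k : ℝ) / ((k : ℝ) + 1))|) atTop (nhds 0) := by
    have h := gamma_tendsto E hcont hpos
    have := (tendsto_zero_iff_abs_tendsto_zero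
      (fun k : ℕ => Gf E ((k : ℝ) / ((k : ℝ) + 1)))).mp h
    exact this
  have hces : Tendsto (fun n : ℕ => (n : ℝ)⁻¹ * ∑ k ∈ Finset.range n,
      |Gf E ((k : ℝ) / ((k : ℝ) + 1))|) atTop (nhds 0) := by
    simpa using Filter.Tendsto.cesaro hγ0
  apply abs_squeeze _ hces
  rw [Filter.eventually_atTop]
  refine ⟨1, fun n hn => ?_⟩
  have hnr : (0:ℝ) < n := by exact_mod_cast hn
  have hform := Lam_sum_formula E haff hpos n hn
  have hrw : Lam E n / (n:ℝ) = ((n:ℝ) * Lam E n) / ((n:ℝ) * (n:ℝ)) := by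
    field_simp
  rw [hrw, hform, abs_div, abs_of_pos (by positivity : (0:ℝ) < (n:ℝ) * (n:ℝ)),
    div_le_iff₀ (by positivity : (0:ℝ) < (n:ℝ) * (n:ℝ))]
  have hbound : |∑ k ∈ Finset.range n, ((k:ℝ) + 1) * Gf E ((k : ℝ) / ((k : ℝ) + 1))|
      ≤ ∑ k ∈ Finset.range n, (n:ℝ) * |Gf E ((k : ℝ) / ((k : ℝ) + 1))| := by
    refine le_trans (Finset.abs_sum_le_sum_abs _ _) ?_
    refine Finset.sum_le_sum fun k hk => ?_
    rw [abs_mul]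
    have hk' : (k:ℝ) + 1 ≤ (n:ℝ) := by
      have := Finset.mem_range.mp hk
      exact_mod_cast this
    rw [abs_of_pos (by positivity : (0:ℝ) < (k:ℝ) + 1)]
    exact mul_le_mul_of_nonneg_right hk' (abs_nonneg _)
  refine le_trans hbound ?_
  rw [← Finset.mul_sum]
  have heq2 : (n:ℝ)⁻¹ * (∑ k ∈ Finset.range n, |Gf E ((k : ℝ) / ((k : ℝ) + 1))|) * ((n:ℝ) * (n:ℝ))
      = (n:ℝ) * ∑ k ∈ Finset.range n, |Gf E ((k : ℝ) / ((k : ℝ) + 1))| := by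
    field_simp
  rw [heq2]

lemma dLam_tendsto (haff : E.OrthAffine) (hpos : E.NonnegVanishingOnPure)
    (hcont : E.ContinuousOnStates) :
    Tendsto (fun n : ℕ => Lam E (n + 1) - Lam E n) atTop (nhds 0) := by
  have hdiv : Tendsto (fun n : ℕ => Lam E n / ((n : ℝ) + 1)) atTop (nhds 0) := by
    apply abs_squeeze (g := fun n : ℕ => |Lam E n / (n : ℝ)|)
    · rw [Filter.eventually_atTop]
      refine ⟨1, fun n hn => ?_⟩
      have hnr : (0:ℝ) < n := by exact_mod_cast hn
      have hL := Lam_nonneg E hpos hn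
      rw [abs_of_nonneg (by positivity), abs_of_nonneg (by positivity)]
      apply div_le_div_of_nonneg_left hL hnr
      linarith
    · have := (tendsto_zero_iff_abs_tendsto_zero
        (fun n : ℕ => Lam E n / (n : ℝ))).mp (Lam_div_tendsto E haff hpos hcont)
      exact this
  have heq : ∀ᶠ (n : ℕ) in atTop, Gf E ((n : ℝ) / ((n : ℝ) + 1)) - Lam E n / ((n : ℝ) + 1)
      = Lam E (n + 1) - Lam E n := by
    rw [Filter.eventually_atTop]
    refine ⟨1, fun n hn => ?_⟩
    have hrec := Lam_rec E haff hpos hn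
    have hnr : (0:ℝ) < (n:ℝ) + 1 := by positivity
    rw [hrec]
    field_simp
    ring
  have hlim := (gamma_tendsto E hcont hpos).sub hdiv
  rw [sub_zero] at hlim
  exact hlim.congr' heq

set_option maxHeartbeats 1000000 in
/-- The Erdős-type lemma: a completely additive function with vanishing increments is a
multiple of `log`. -/
lemma erdos {f : ℕ → ℝ} (hadd : ∀ m n, 1 ≤ m → 1 ≤ n → f (m * n) = f m + f n)
    (hd : Tendsto (fun n => f (n + 1) - f n) atTop (nhds 0)) {m : ℕ} (hm : 2 ≤ m) :
    Tendsto (fun n => f n / Real.log n) atTop (nhds (f m / Real.log m)) := by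
  have hmr : (2:ℝ) ≤ (m:ℝ) := by exact_mod_cast hm
  have hlogm : 0 < Real.log m := Real.log_pos (by linarith)
  obtain ⟨c, hfm⟩ : ∃ c : ℝ, f m = c * Real.log m :=
    ⟨f m / Real.log m, by field_simp⟩
  obtain ⟨K, hK0, hKm⟩ : ∃ K : ℝ, 0 ≤ K ∧ K * Real.log m = (m : ℝ) :=
    ⟨(m : ℝ) / Real.log m, div_nonneg (by linarith) hlogm.le, by field_simp⟩
  suffices h : Tendsto (fun n => f n / Real.log n) atTop (nhds c) by
    have hc' : c = f m / Real.log m := by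
      rw [hfm]; field_simp
    rwa [← hc']
  -- main estimate
  have main : ∀ ε : ℝ, 0 < ε → ∃ C : ℝ, 0 < C ∧ ∀ n : ℕ, 1 ≤ n →
      |f n - c * Real.log n| ≤ C + ε * K * Real.log n := by
    intro ε hε
    obtain ⟨N₁, hN₁⟩ := (Metric.tendsto_atTop.mp hd) ε hε
    obtain ⟨N₀, hN₀m, hN₀1, hN₀d, hN₀c⟩ : ∃ N₀ : ℕ, m ≤ N₀ ∧ 1 ≤ N₀ ∧
        (∀ j, N₀ ≤ j → |f (j + 1) - f j| ≤ ε) ∧ |c| ≤ ε * N₀ := by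
      refine ⟨max (max N₁ m) (Nat.ceil (|c| / ε) + 1), le_max_of_le_left (le_max_right _ _),
        ?_, ?_, ?_⟩
      · omega
      · intro j hj
        have hjN₁ : N₁ ≤ j := le_trans (le_max_of_le_left (le_max_left _ _)) hj
        have := hN₁ j hjN₁
        rw [Real.dist_eq, sub_zero] at this
        exact this.le
      · set N₀' := max (max N₁ m) (Nat.ceil (|c| / ε) + 1) with hN₀'
        have h1 : (|c| / ε) ≤ Nat.ceil (|c| / ε) := Nat.le_ceil _
        have h2 : (Nat.ceil (|c| / ε) : ℝ) ≤ (N₀' : ℝ) := by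
          have : Nat.ceil (|c| / ε) ≤ N₀' := le_trans (by omega) (le_max_right _ _)
          exact_mod_cast this
        have h3 := le_trans h1 h2
        calc |c| = (|c| / ε) * ε := by field_simp
          _ ≤ (N₀' : ℝ) * ε := mul_le_mul_of_nonneg_right h3 hε.le
          _ = ε * N₀' := by ring
    obtain ⟨C, hC0, hCbase⟩ : ∃ C : ℝ, 0 < C ∧ ∀ n : ℕ, n ≤ N₀ * m →
        |f n - c * Real.log n| ≤ C := by
      refine ⟨(∑ j ∈ Finset.range (N₀ * m + 1), |f j - c * Real.log j|) + 1, ?_, ?_⟩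
      · have : 0 ≤ ∑ j ∈ Finset.range (N₀ * m + 1), |f j - c * Real.log j| :=
          Finset.sum_nonneg fun j _ => abs_nonneg _
        linarith
      · intro n hn
        have hmem : n ∈ Finset.range (N₀ * m + 1) := Finset.mem_range.mpr (by omega)
        have h1 : |f n - c * Real.log n|
            ≤ ∑ j ∈ Finset.range (N₀ * m + 1), |f j - c * Real.log j| :=
          Finset.single_le_sum (f := fun j : ℕ => |f j - c * Real.log j|)
            (fun j _ => abs_nonneg _) hmem
        linarith
    refine ⟨C, hC0, ?_⟩
    intro n
    induction n using Nat.strong_induction_on with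
    | _ n IH =>
    intro hn1
    by_cases hsmall : n ≤ N₀ * m
    · have h1 := hCbase n hsmall
      have hlogn : 0 ≤ Real.log n := Real.log_nonneg (by exact_mod_cast hn1)
      nlinarith [mul_nonneg (mul_nonneg hε.le hK0) hlogn]
    · push_neg at hsmall
      set q : ℕ := n / m with hq
      have hm1 : 1 ≤ m := by omega
      have hqN₀ : N₀ ≤ q := by
        rw [hq]
        exact (Nat.le_div_iff_mul_le (by omega)).mpr (by omega)
      have hq1 : 1 ≤ q := le_trans hN₀1 hqN₀
      have hmq : m * q ≤ n := by rw [hq, Nat.mul_comm]; exact Nat.div_mul_le_self n m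
      have hnlt : n < m * q + m := by
        rw [hq]
        have h1 := Nat.div_add_mod n m
        have h2 := Nat.mod_lt n (show 0 < m by omega)
        omega
      have hqn : q < n := by
        rw [hq]
        exact Nat.div_lt_self (by omega) (by omega)
      -- telescoping
      have htel : f n - f (m * q) = ∑ j ∈ Finset.Ico (m * q) n, (f (j + 1) - f j) := by
        rw [Finset.sum_Ico_eq_sub _ hmq, Finset.sum_range_sub, Finset.sum_range_sub]
        ring
      have hsum : |f n - f (m * q)| ≤ ((m : ℝ) - 1) * ε := by
        rw [htel]
        refine le_trans (Finset.abs_sum_le_sum_abs _ _) ?_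
        have hcard : (Finset.Ico (m * q) n).card = n - m * q := Nat.card_Ico _ _
        have hbound : ∀ j ∈ Finset.Ico (m * q) n, |f (j + 1) - f j| ≤ ε := by
          intro j hj
          have hjmq : m * q ≤ j := (Finset.mem_Ico.mp hj).1
          have hN₀mq : N₀ ≤ m * q := le_trans hqN₀ (Nat.le_mul_of_pos_left q (by omega))
          exact hN₀d j (by omega)
        refine le_trans (Finset.sum_le_sum hbound) ?_
        rw [Finset.sum_const, hcard, nsmul_eq_mul]
        have : (n - m * q : ℕ) ≤ m - 1 := by omega
        have h' : ((n - m*q : ℕ) : ℝ) ≤ ((m - 1 : ℕ) : ℝ) := by exact_mod_cast this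
        have h'' : ((m - 1 : ℕ) : ℝ) = (m : ℝ) - 1 := by
          push_cast [Nat.cast_sub hm1]; ring
        nlinarith [h', h'', hε]
      have hfmq : f (m * q) = f m + f q := hadd m q hm1 hq1
      have hIH := IH q hqn hq1
      -- log bounds
      have hqr : (1:ℝ) ≤ (q:ℝ) := by exact_mod_cast hq1
      have hnr : (1:ℝ) ≤ (n:ℝ) := by exact_mod_cast hn1
      have hmr1 : (1:ℝ) ≤ (m:ℝ) := by linarith
      have hmqn : ((m:ℝ) * q) ≤ (n:ℝ) := by exact_mod_cast hmq
      have hnmq1 : (n:ℝ) < (m:ℝ) * q + m := by exact_mod_cast hnlt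
      have hlog1 : Real.log m + Real.log q ≤ Real.log n := by
        rw [← Real.log_mul (by linarith) (by linarith)]
        exact Real.log_le_log (by positivity) hmqn
      have hlog2 : Real.log n - Real.log m - Real.log q ≤ 1 / (q:ℝ) := by
        have h1 : Real.log n ≤ Real.log (m * (q + 1)) :=
          Real.log_le_log (by positivity) (by push_cast; linarith)
        rw [Real.log_mul (by linarith) (by linarith)] at h1
        have h2 : Real.log ((q:ℝ) + 1) - Real.log q ≤ 1 / (q:ℝ) := by
          rw [← Real.log_div (by linarith) (by linarith)]
          have h3 : ((q:ℝ) + 1) / q = 1 + 1/q := by field_simp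
          rw [h3]
          have := Real.log_le_sub_one_of_pos (show (0:ℝ) < 1 + 1/q by positivity)
          linarith
        linarith
      have hcbound : |c| * (Real.log n - Real.log m - Real.log q) ≤ ε := by
        have h0 : 0 ≤ Real.log n - Real.log m - Real.log q := by linarith
        have h1 : |c| * (Real.log n - Real.log m - Real.log q) ≤ |c| * (1/(q:ℝ)) :=
          mul_le_mul_of_nonneg_left hlog2 (abs_nonneg _)
        have hN₀r : (0:ℝ) < (N₀:ℝ) := by exact_mod_cast hN₀1
        have hqN₀r : (N₀:ℝ) ≤ (q:ℝ) := by exact_mod_cast hqN₀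
        have h2 : |c| * (1/(q:ℝ)) ≤ |c| * (1/(N₀:ℝ)) := by
          apply mul_le_mul_of_nonneg_left _ (abs_nonneg _)
          apply div_le_div_of_nonneg_left one_pos.le hN₀r hqN₀r
        have h3 : |c| * (1/(N₀:ℝ)) ≤ ε := by
          rw [mul_one_div, div_le_iff₀ hN₀r]
          linarith [hN₀c]
        linarith
      -- combine
      have key : |f n - c * Real.log n|
          ≤ |f q - c * Real.log q| + |f n - f (m*q)| + |c| * (Real.log n - Real.log m - Real.log q) := by
        have hexp : f n - c * Real.log n
            = (f q - c * Real.log q) + (f n - f (m * q))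
              - c * (Real.log n - Real.log m - Real.log q) := by
          rw [hfmq, hfm]; ring
        rw [hexp]
        calc |(f q - c * Real.log q) + (f n - f (m * q))
              - c * (Real.log n - Real.log m - Real.log q)|
            ≤ |(f q - c * Real.log q) + (f n - f (m * q))|
              + |c * (Real.log n - Real.log m - Real.log q)| := abs_sub _ _
          _ ≤ |f q - c * Real.log q| + |f n - f (m*q)|
              + |c * (Real.log n - Real.log m - Real.log q)| := by
                have := abs_add_le (f q - c * Real.log q) (f n - f (m * q))
                linarith
          _ ≤ _ := by
                rw [abs_mul]
                have h0 : 0 ≤ Real.log n - Real.log m - Real.log q := by linarith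
                rw [abs_of_nonneg h0]
      have hlogqn : Real.log q ≤ Real.log n - Real.log m := by linarith
      calc |f n - c * Real.log n|
          ≤ (C + ε * K * Real.log q) + ((m:ℝ) - 1) * ε + ε := by
            have := hcbound
            linarith [key, hIH, hsum]
        _ ≤ C + ε * K * Real.log n := by
            have : ε * K * Real.log q ≤ ε * K * (Real.log n - Real.log m) :=
              mul_le_mul_of_nonneg_left hlogqn (by positivity)
            have hKm' : ε * K * Real.log m = ε * (m:ℝ) := by
              rw [mul_assoc, hKm]
            nlinarith [this, hKm']
  -- conclude the limit
  rw [Metric.tendsto_atTop]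
  intro ε' hε'
  set ε : ℝ := ε' * Real.log m / (2 * (m:ℝ)) with hε
  have hεpos : 0 < ε := div_pos (mul_pos hε' hlogm) (by linarith)
  obtain ⟨C, hC0, hmain⟩ := main ε hεpos
  have hεK : ε * K = ε' / 2 := by
    rw [hε]
    rw [div_mul_eq_mul_div, div_eq_iff (by positivity : (2:ℝ) * (m:ℝ) ≠ 0)]
    calc ε' * Real.log ↑m * K = ε' * (K * Real.log ↑m) := by ring
      _ = ε' * (m:ℝ) := by rw [hKm]
      _ = ε' / 2 * (2 * ↑m) := by ring
  set R : ℝ := max 1 (4 * C / ε') with hR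
  refine ⟨Nat.ceil (Real.exp R) + 1, fun n hn => ?_⟩
  have hn1 : 1 ≤ n := by omega
  have hexpn : Real.exp R ≤ (n:ℝ) := by
    have h1 : Real.exp R ≤ (Nat.ceil (Real.exp R) : ℝ) := Nat.le_ceil _
    have h2 : (Nat.ceil (Real.exp R) : ℝ) ≤ (n:ℝ) := by
      exact_mod_cast le_trans (by omega) hn
    linarith
  have hnpos : (0:ℝ) < n := lt_of_lt_of_le (Real.exp_pos R) hexpn
  have hlogn : R ≤ Real.log n := (Real.le_log_iff_exp_le hnpos).mpr hexpn
  have hlogn1 : (1:ℝ) ≤ Real.log n := le_trans (le_max_left _ _) hlogn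
  have hlognpos : (0:ℝ) < Real.log n := by linarith
  have hest := hmain n hn1
  have habs : f n / Real.log n - c = (f n - c * Real.log n) / Real.log n := by
    field_simp
  rw [Real.dist_eq, habs, abs_div, abs_of_pos hlognpos]
  have h2 : (C + ε * K * Real.log n) / Real.log n = C / Real.log n + ε * K := by
    field_simp
  have h1 : |f n - c * Real.log n| / Real.log n ≤ (C + ε * K * Real.log n) / Real.log n :=
    (div_le_div_iff_of_pos_right hlognpos).mpr hest
  have h3 : C / Real.log n ≤ ε' / 4 := by
    rw [div_le_iff₀ hlognpos]
    have hlR : 4 * C / ε' ≤ Real.log n := le_trans (le_max_right _ _) hlogn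
    rw [div_le_iff₀ hε'] at hlR
    linarith
  rw [h2, hεK] at h1
  linarith

end
end EFC
namespace EFC
open Finset Filter

noncomputable section
open Classical

variable {X Y Z : Type} (E : EntropyFunctor)

/-- The normalizing constant. -/
def Cc : ℝ := Lam E 2 / Real.log 2

lemma Cc_nonneg (hpos : E.NonnegVanishingOnPure) : 0 ≤ Cc E :=
  div_nonneg (Lam_nonneg E hpos (by norm_num)) (Real.log_nonneg (by norm_num))

lemma Lam_eq_c_log (haff : E.OrthAffine) (hpos : E.NonnegVanishingOnPure)
    (hcont : E.ContinuousOnStates) {n : ℕ} (hn : 1 ≤ n) :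
    Lam E n = Cc E * Real.log n := by
  rcases Nat.eq_or_lt_of_le hn with h1 | h2
  · rw [← h1]
    simp [Lam_one E hpos]
  · have hn2 : 2 ≤ n := h2
    have hA := erdos (fun a b ha hb => Lam_mul E haff hpos ha hb)
      (dLam_tendsto E haff hpos hcont) hn2
    have hB := erdos (fun a b ha hb => Lam_mul E haff hpos ha hb)
      (dLam_tendsto E haff hpos hcont) (le_refl 2)
    have huniq := tendsto_nhds_unique hA hB
    have hlogn : (0:ℝ) < Real.log n := Real.log_pos (by exact_mod_cast h2)
    have hlog2 : (0:ℝ) < Real.log 2 := Real.log_pos (by norm_num)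
    have hcast : ((2:ℕ):ℝ) = (2:ℝ) := by norm_num
    rw [hcast] at huniq
    rw [div_eq_div_iff hlogn.ne' hlog2.ne'] at huniq
    rw [Cc, div_mul_eq_mul_div, eq_div_iff hlog2.ne']
    linarith [huniq]

lemma Gf_rat_c (haff : E.OrthAffine) (hpos : E.NonnegVanishingOnPure)
    (hcont : E.ContinuousOnStates) {k n : ℕ} (hk : k ≤ n) (hn : 1 ≤ n) :
    Gf E ((k : ℝ) / n) = Cc E * h2 ((k : ℝ) / n) := by
  have hnr : (0:ℝ) < n := by exact_mod_cast hn
  rcases Nat.eq_zero_or_pos k with hk0 | hk1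
  · subst hk0
    simp only [Nat.cast_zero, zero_div]
    rw [Gf_zero E hpos, h2]
    simp
  rcases eq_or_lt_of_le hk with hkn | hklt
  · subst hkn
    rw [div_self hnr.ne']
    rw [Gf_one E hpos, h2]
    simp
  · have hrat := Gf_rat E haff hpos hk1 hklt
    have hnk1 : 1 ≤ n - k := by omega
    rw [Lam_eq_c_log E haff hpos hcont hn, Lam_eq_c_log E haff hpos hcont hk1,
      Lam_eq_c_log E haff hpos hcont hnk1] at hrat
    rw [hrat]
    have hkr : (0:ℝ) < k := by exact_mod_cast hk1
    have hnkr : (0:ℝ) < ((n - k : ℕ) : ℝ) := by exact_mod_cast hnk1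
    have hcast : ((n - k : ℕ) : ℝ) = (n:ℝ) - (k:ℝ) := by
      push_cast [Nat.cast_sub hklt.le]
      ring
    have h1mk : 1 - (k:ℝ)/n = ((n-k:ℕ):ℝ)/n := by
      rw [hcast]
      field_simp
    rw [h2, h1mk]
    rw [Real.negMulLog, Real.negMulLog]
    rw [Real.log_div hkr.ne' hnr.ne', Real.log_div (by rw [hcast]; linarith [hcast ▸ hnkr]) hnr.ne']
    have hsum : (k:ℝ)/n + ((n-k:ℕ):ℝ)/n = 1 := by
      rw [hcast]; field_simp; ring
    linear_combination (-(Cc E * Real.log (n:ℝ))) * hsum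

/-- `G = c·h₂` on `[0,1]`. -/
lemma Gf_eq (haff : E.OrthAffine) (hpos : E.NonnegVanishingOnPure)
    (hcont : E.ContinuousOnStates) {x : ℝ} (h0 : 0 ≤ x) (h1 : x ≤ 1) :
    Gf E x = Cc E * h2 x := by
  set q : ℕ → ℝ := fun k => ((Nat.floor (x * k) : ℕ) : ℝ) / (k : ℝ) with hqdef
  have hq0 : ∀ k, 0 ≤ q k := fun k => div_nonneg (Nat.cast_nonneg _) (Nat.cast_nonneg _)
  have hfloor_le : ∀ k : ℕ, 1 ≤ k → ((Nat.floor (x * k) : ℕ) : ℝ) ≤ (k : ℝ) := by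
    intro k hk
    have hkr : (0:ℝ) < k := by exact_mod_cast hk
    have h := Nat.floor_le (by positivity : (0:ℝ) ≤ x * k)
    nlinarith
  have hq1 : ∀ k, q k ≤ 1 := by
    intro k
    rcases Nat.eq_zero_or_pos k with h | h
    · subst h; simp [hqdef]
    · have hkr : (0:ℝ) < k := by exact_mod_cast h
      rw [hqdef, div_le_one hkr]
      exact hfloor_le k h
  have hconv : Tendsto q atTop (nhds x) := by
    apply tendsto_of_tendsto_of_tendsto_of_le_of_le'
      (g := fun k : ℕ => x - 1/(k:ℝ)) (h := fun _ : ℕ => x)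
    · have h1div : Tendsto (fun k : ℕ => 1/(k:ℝ)) atTop (nhds 0) := by
        simpa using tendsto_one_div_atTop_nhds_zero_nat (𝕜 := ℝ)
      have hconst : Tendsto (fun _ : ℕ => x) atTop (nhds x) := tendsto_const_nhds
      have := hconst.sub h1div
      simpa using this
    · exact tendsto_const_nhds
    · rw [Filter.eventually_atTop]
      refine ⟨1, fun k hk => ?_⟩
      have hkr : (0:ℝ) < k := by exact_mod_cast hk
      have h := Nat.sub_one_lt_floor (x * k)
      rw [hqdef]
      rw [le_div_iff₀ hkr]
      have hexp : (x - 1/(k:ℝ)) * k = x * k - 1 := by field_simp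
      linarith [h, hexp.le, hexp.ge]
    · rw [Filter.eventually_atTop]
      refine ⟨1, fun k hk => ?_⟩
      have hkr : (0:ℝ) < k := by exact_mod_cast hk
      have h := Nat.floor_le (by positivity : (0:ℝ) ≤ x * k)
      rw [hqdef, div_le_iff₀ hkr]
      nlinarith
  have hA := Gf_tendsto E hcont hq0 hq1 h0 h1 hconv
  have hB : Tendsto (fun k => Cc E * h2 (q k)) atTop (nhds (Cc E * h2 x)) :=
    (((h2_continuous.tendsto x).comp hconv)).const_mul (Cc E)
  have hAeq : (fun k => Gf E (q k)) = fun k => Cc E * h2 (q k) := by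
    funext k
    rcases Nat.eq_zero_or_pos k with h | h
    · have : q k = (0:ℝ)/(1:ℕ) := by subst h; simp [hqdef]
      rw [this, show ((0:ℝ)/(1:ℕ) : ℝ) = ((0:ℕ):ℝ)/((1:ℕ):ℝ) by norm_num]
      exact Gf_rat_c E haff hpos hcont (by norm_num) (le_refl 1)
    · have hle : Nat.floor (x * k) ≤ k := by
        have := hfloor_le k h
        exact_mod_cast this
      exact Gf_rat_c E haff hpos hcont hle h
  rw [hAeq] at hA
  exact tendsto_nhds_unique hA hB

lemma shannon_dirac [Fintype X] (x₀ : X) : shannonEntropy (dirac x₀) = 0 := by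
  rw [shannonEntropy]
  apply Finset.sum_eq_zero
  intro x _
  unfold dirac
  split_ifs <;> simp

/-- `F = c · H` on all classical distributions. -/
lemma Fd_eq_shannon [Fintype X] (haff : E.OrthAffine) (hpos : E.NonnegVanishingOnPure)
    (hcont : E.ContinuousOnStates) {p : X → ℝ} (hp : IsProbDist p) :
    Fd E X p = Cc E * shannonEntropy p := by
  generalize hn : (Finset.univ.filter (fun x => p x ≠ 0)).card = n
  induction n using Nat.strong_induction_on generalizing p with
  | _ n IH =>
  have hne : 1 ≤ n := by
    obtain ⟨x₀, hx₀⟩ := exists_support_of_prob hp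
    rw [← hn]
    exact Finset.card_pos.mpr ⟨x₀, Finset.mem_filter.mpr ⟨Finset.mem_univ _, hx₀⟩⟩
  rcases eq_or_lt_of_le hne with h1 | hgt2
  · obtain ⟨x₀, rfl⟩ := dirac_of_card_one hp (by omega)
    rw [Fd_dirac E hpos, shannon_dirac]
    ring
  · obtain ⟨x₀, hx₀⟩ := exists_support_of_prob hp
    set l : ℝ := p x₀ with hl
    have hl0 : 0 < l := lt_of_le_of_ne (hp.1 x₀) (Ne.symm hx₀)
    have hl1 : l < 1 := by
      by_contra hge
      push_neg at hge
      have hsum := hp.2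
      have hrest : ∑ x ∈ Finset.univ.erase x₀, p x = 1 - l := by
        have := Finset.add_sum_erase Finset.univ p (Finset.mem_univ x₀)
        rw [hsum] at this
        linarith [this]
      have hz : ∀ x ∈ Finset.univ.erase x₀, p x = 0 := by
        intro x hx
        by_contra hpx
        have : 0 < ∑ x ∈ Finset.univ.erase x₀, p x :=
          Finset.sum_pos' (fun x _ => hp.1 x) ⟨x, hx, lt_of_le_of_ne (hp.1 x) (Ne.symm hpx)⟩
        linarith
      have : Finset.univ.filter (fun x => p x ≠ 0) = {x₀} := by
        apply Finset.Subset.antisymm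
        · intro x hx
          rw [Finset.mem_filter] at hx
          rw [Finset.mem_singleton]
          by_contra hne'
          exact hx.2 (hz x (Finset.mem_erase.mpr ⟨hne', Finset.mem_univ x⟩))
        · intro x hx
          rw [Finset.mem_singleton] at hx
          subst hx
          exact Finset.mem_filter.mpr ⟨Finset.mem_univ _, hx₀⟩
      rw [this] at hn
      simp at hn
      omega
    set s : X → ℝ := fun x => if x = x₀ then 0 else p x / (1 - l) with hs
    have h1l : (0:ℝ) < 1 - l := by linarith
    have hrest : ∑ x ∈ Finset.univ.erase x₀, p x = 1 - l := by
      have h' := Finset.add_sum_erase Finset.univ p (Finset.mem_univ x₀)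
      rw [hp.2] at h'
      linarith [h']
    have hserase : ∀ x ∈ Finset.univ.erase x₀, s x = p x / (1 - l) := by
      intro x hx
      have : x ≠ x₀ := (Finset.mem_erase.mp hx).1
      simp [hs, this]
    have hssum : ∑ x, s x = 1 := by
      rw [← Finset.sum_erase_add Finset.univ s (Finset.mem_univ x₀)]
      have hsx₀ : s x₀ = 0 := by simp [hs]
      rw [hsx₀, add_zero]
      rw [Finset.sum_congr rfl hserase, ← Finset.sum_div, hrest]
      field_simp
    have hsprob : IsProbDist s := by
      refine ⟨fun x => ?_, hssum⟩
      simp only [hs]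
      split_ifs
      · exact le_refl 0
      · exact div_nonneg (hp.1 x) h1l.le
    have hmix : p = fun x => l * dirac x₀ x + (1 - l) * s x := by
      funext x
      by_cases hx : x = x₀
      · subst hx; simp [dirac, hs, hl]
      · simp only [dirac, hs, if_neg hx]
        field_simp
        ring
    have hdisj : ∀ x, dirac x₀ x = 0 ∨ s x = 0 := fun x => by
      by_cases hx : x = x₀
      · right; simp [hs, hx]
      · left; simp [dirac, hx]
    have hcard : (Finset.univ.filter (fun x => s x ≠ 0)).card = n - 1 := by
      have hset : Finset.univ.filter (fun x => s x ≠ 0)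
          = (Finset.univ.filter (fun x => p x ≠ 0)).erase x₀ := by
        ext x
        simp only [Finset.mem_filter, Finset.mem_erase, Finset.mem_univ, true_and]
        constructor
        · intro hsx
          by_cases hx : x = x₀
          · exact absurd (by simp [hs, hx]) hsx
          · refine ⟨hx, fun hpx => hsx ?_⟩
            simp [hs, hx, hpx]
        · rintro ⟨hx, hpx⟩
          simp only [hs, if_neg hx]
          exact div_ne_zero hpx (ne_of_gt h1l)
      rw [hset, Finset.card_erase_of_mem, hn]
      exact Finset.mem_filter.mpr ⟨Finset.mem_univ _, hx₀⟩
    have hIH : Fd E X s = Cc E * shannonEntropy s := IH (n-1) (by omega) hsprob hcard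
    have hgroup := grouping E haff hpos (isProbDist_dirac x₀) hsprob hdisj hl0.le hl1.le
    rw [← hmix, Fd_dirac E hpos, hIH, Gf_eq E haff hpos hcont hl0.le hl1.le] at hgroup
    -- Shannon split
    have hshannon : shannonEntropy p = (1 - l) * shannonEntropy s + h2 l := by
      rw [shannonEntropy, ← Finset.sum_erase_add Finset.univ _ (Finset.mem_univ x₀)]
      have hterm : ∀ x ∈ Finset.univ.erase x₀,
          Real.negMulLog (p x) = s x * Real.negMulLog (1 - l) + (1 - l) * Real.negMulLog (s x) := by
        intro x hx
        have hxne : x ≠ x₀ := (Finset.mem_erase.mp hx).1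
        have hpx : p x = (1 - l) * s x := by
          simp only [hs, if_neg hxne]
          field_simp
        rw [hpx, Real.negMulLog_mul]
      rw [Finset.sum_congr rfl hterm, Finset.sum_add_distrib]
      rw [← Finset.sum_mul, ← Finset.mul_sum]
      have hsum1 : ∑ x ∈ Finset.univ.erase x₀, s x = 1 := by
        have := hssum
        rw [← Finset.sum_erase_add Finset.univ s (Finset.mem_univ x₀)] at this
        have hsx₀ : s x₀ = 0 := by simp [hs]
        rw [hsx₀, add_zero] at this
        exact this
      have hsum2 : ∑ x ∈ Finset.univ.erase x₀, Real.negMulLog (s x) = shannonEntropy s := by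
        rw [shannonEntropy, ← Finset.sum_erase_add Finset.univ _ (Finset.mem_univ x₀)]
        have hsx₀ : s x₀ = 0 := by simp [hs]
        rw [hsx₀, Real.negMulLog_zero, add_zero]
      rw [hsum1, hsum2, one_mul, h2]
      ring
    rw [hgroup, hshannon]
    ring

end
end EFC

/-- Let `H` be a continuous, orthogonally affine fibred functor on
finite-dimensional unital C*-algebras with `H_A(ω) ≥ 0` for all states and `H_A(ω) = 0` on
pure states. Then there is a constant `c ≥ 0` such that for every unital `*`-homomorphism
`f : ℂ^Y → ℂ^X` of commutative algebras and every state with distribution `p` whose pullback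
along `f` has distribution `q`, `H_f(ω) = c (H(p) - H(q))` (Shannon entropies). -/
theorem entropyFunctor_classical_characterization (E : EntropyFunctor)
    (hcont : E.ContinuousOnStates)
    (haff : E.OrthAffine)
    (hpos : E.NonnegVanishingOnPure) :
    ∃ c : ℝ, 0 ≤ c ∧
      ∀ (X : Type) [Fintype X] (Y : Type) [Fintype Y]
        (f : (Y → ℂ) →⋆ₐ[ℂ] (X → ℂ)) (p : X → ℝ) (q : Y → ℝ),
        IsProbDist p → IsProbDist q →
        (classicalState p).comp f.toAlgHom.toLinearMap = classicalState q →
        E.H (X → ℂ) (Y → ℂ) f (classicalState p)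
          = c * (shannonEntropy p - shannonEntropy q) := by
  refine ⟨EFC.Cc E, EFC.Cc_nonneg E hpos, ?_⟩
  intro X _ Y _ f p q hp hq hpull
  rw [EFC.lemA E f hp hpull, EFC.Fd_eq_shannon E haff hpos hcont hp,
    EFC.Fd_eq_shannon E haff hpos hcont hq]
  ring
end

section
/- Let X, Y be finite sets, and let f : ⊕_{y∈Y} M_{n_y}(ℂ) → ⊕_{x∈X} M_{m_x}(ℂ) be the unital *-homomorphism with multiplicities c_{xy} ∈ ℤ_{≥0} (so m_x = Σ_y c_{xy} n_y) given by f(⊕_y B_y) = ⊕_x ⊞_y (1_{c_{xy}} ⊗ B_y) (block-diagonal with B_y repeated c_{xy} times in the x-th summand). Let ω be the state on ⊕_x M_{m_x}(ℂ) with data (p, {ρ_x}) and let ω∘f have data (q, {σ_y}). Suppose there exist positive semidefinite matrices τ_{yx} ∈ M_{c_{xy}}(ℂ) such that tr(Σ_{x∈X} τ_{yx}) = 1 for every y with q_y ≠ 0, and p_x ρ_x = ⊞_{y∈Y} (τ_{yx} ⊗ q_y σ_y) for every x ∈ X. Then S(ω) − S(ω∘f) = Σ_{y : q_y ≠ 0}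 q_y S(⊞_{x∈X} τ_{yx}) ≥ 0, where ⊞_{x} τ_{yx} is viewed as a density matrix. -/
open scoped ComplexOrder

/-- The state on `⊕ₓ M_{ι x}(ℂ)` with data `(p, ρ)`: `a ↦ ∑ₓ pₓ tr(ρₓ aₓ)`. -/
noncomputable def stateOfData {X : Type*} [Fintype X] {ι : X → Type*} [∀ x, Fintype (ι x)]
    (p : X → ℝ) (ρ : ∀ x, Matrix (ι x) (ι x) ℂ) :
    (∀ x, Matrix (ι x) (ι x) ℂ) →ₗ[ℂ] ℂ where
  toFun a := ∑ x, (p x : ℂ) * (ρ x * a x).trace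
  map_add' a b := by
    simp [Matrix.mul_add, Matrix.trace_add, mul_add, Finset.sum_add_distrib]
  map_smul' c a := by
    simp only [Pi.smul_apply, Matrix.mul_smul, Matrix.trace_smul, smul_eq_mul,
      RingHom.id_apply, Finset.mul_sum]
    exact Finset.sum_congr rfl fun x _ => by ring

/-- `(p, ρ)` is valid state data: `p` is a probability distribution and each `ρ x` is a
density matrix. -/
def IsStateData {X : Type*} [Fintype X] {ι : X → Type*} [∀ x, Fintype (ι x)]
    (p : X → ℝ) (ρ : ∀ x, Matrix (ι x) (ι x) ℂ) : Prop :=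
  IsProbDist p ∧ ∀ x, IsDensityMatrix (ρ x)

/-- Segal entropy of the state with data `(p, ρ)`:
`S(ω) = -∑ₓ pₓ log pₓ - ∑ₓ pₓ tr(ρₓ log ρₓ)`. -/
noncomputable def segalEntropy {X : Type*} [Fintype X] {ι : X → Type*} [∀ x, Fintype (ι x)]
    [∀ x, DecidableEq (ι x)] (p : X → ℝ) (ρ : ∀ x, Matrix (ι x) (ι x) ℂ) : ℝ :=
  shannonEntropy p + ∑ x, p x * vnEntropy (ρ x)

open Kronecker

namespace Disint

open Polynomial
open scoped Matrix

variable {ι : Type*} [Fintype ι] [DecidableEq ι]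

lemma charpoly_diagonal_aux (d : ι → ℂ) :
    (Matrix.diagonal d).charpoly = ∏ i, (X - C (d i)) := by
  have h : Matrix.charmatrix (Matrix.diagonal d)
      = Matrix.diagonal (fun i => (X : ℂ[X]) - C (d i)) := by
    ext i j
    by_cases h : i = j
    · subst h; simp
    · simp [Matrix.charmatrix_apply_ne _ _ _ h, Matrix.diagonal_apply_ne _ h]
  rw [Matrix.charpoly, h, Matrix.det_diagonal]

lemma charpoly_conj_aux (U A : Matrix ι ι ℂ) (hU : U * star U = 1) :
    (U * A * star U).charpoly = A.charpoly := by
  have hch : ∀ M : Matrix ι ι ℂ, Matrix.charmatrix M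
      = Matrix.diagonal (fun _ => (X : ℂ[X])) - M.map C := by
    intro M; ext i j
    by_cases h : i = j
    · subst h; simp [Matrix.charmatrix_apply_eq, Matrix.map_apply]
    · simp [Matrix.charmatrix_apply_ne _ _ _ h, Matrix.diagonal_apply_ne _ h, Matrix.map_apply]
  have hmap : ∀ (P Q : Matrix ι ι ℂ), (P * Q).map (C : ℂ →+* ℂ[X])
      = P.map C * Q.map C := fun P Q => Matrix.map_mul (f := (C : ℂ →+* ℂ[X]))
  have h1 : (U.map (C : ℂ →+* ℂ[X])) * ((star U).map C) = 1 := by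
    rw [← hmap, hU, Matrix.map_one _ (map_zero C) (map_one C)]
  have key : Matrix.charmatrix (U * A * star U)
      = U.map C * Matrix.charmatrix A * (star U).map C := by
    rw [hch, hch, Matrix.mul_sub, Matrix.sub_mul]
    congr 1
    · have hdiag : Matrix.diagonal (fun _ : ι => (X : ℂ[X]))
          = Matrix.scalar ι (X : ℂ[X]) := rfl
      rw [hdiag]
      rw [← (Matrix.scalar_commute (X : ℂ[X]) (fun r => Commute.all _ _) (U.map C)).eq,
        Matrix.mul_assoc, h1, Matrix.mul_one]
    · rw [← hmap, ← hmap]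
  rw [Matrix.charpoly, Matrix.charpoly, key, Matrix.det_mul, Matrix.det_mul]
  have h2 : (U.map (C : ℂ →+* ℂ[X])).det * ((star U).map C).det = 1 := by
    rw [← Matrix.det_mul, h1, Matrix.det_one]
  calc (U.map C).det * (Matrix.charmatrix A).det * ((star U).map C).det
      = (Matrix.charmatrix A).det * ((U.map C).det * ((star U).map C).det) := by ring
    _ = (Matrix.charmatrix A).det := by rw [h2, mul_one]

lemma roots_charpoly_aux {M : Matrix ι ι ℂ} (d : ι → ℝ) (U : Matrix ι ι ℂ)
    (hU : U * star U = 1)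
    (hMeq : M = U * Matrix.diagonal (fun i => (d i : ℂ)) * star U) :
    M.charpoly.roots = Finset.univ.val.map (fun i => (d i : ℂ)) := by
  rw [hMeq, charpoly_conj_aux _ _ hU, charpoly_diagonal_aux]
  have h : (∏ i, (X - C ((d i : ℂ))))
      = ((Finset.univ.val.map fun i => (d i : ℂ)).map fun a => X - C a).prod := by
    rw [Multiset.map_map]
    rfl
  rw [h, Polynomial.roots_multiset_prod_X_sub_C]

lemma spectral_decomp {M : Matrix ι ι ℂ} (hM : M.IsHermitian) :
    ∃ U : Matrix ι ι ℂ, U * star U = 1 ∧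
      M = U * Matrix.diagonal (fun i => (hM.eigenvalues i : ℂ)) * star U :=
  ⟨hM.eigenvectorUnitary, Matrix.mem_unitaryGroup_iff.mp hM.eigenvectorUnitary.2,
    hM.spectral_theorem⟩

lemma sum_f_eigen {M : Matrix ι ι ℂ} (hM : M.IsHermitian)
    (d : ι → ℝ) (U : Matrix ι ι ℂ) (hU : U * star U = 1)
    (hMeq : M = U * Matrix.diagonal (fun i => (d i : ℂ)) * star U)
    (f : ℝ → ℝ) : ∑ i, f (hM.eigenvalues i) = ∑ i, f (d i) := by
  obtain ⟨V, hV, hMV⟩ := spectral_decomp hM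
  have h1 := roots_charpoly_aux hM.eigenvalues V hV hMV
  have h2 := roots_charpoly_aux d U hU hMeq
  have h3 : Finset.univ.val.map (fun i => ((hM.eigenvalues i : ℝ) : ℂ))
      = Finset.univ.val.map (fun i => (d i : ℂ)) := h1.symm.trans h2
  have h4 := congrArg (Multiset.map (fun z : ℂ => f z.re)) h3
  rw [Multiset.map_map, Multiset.map_map] at h4
  have h5 := congrArg Multiset.sum h4
  simp only [Function.comp, Complex.ofReal_re] at h5
  rw [Finset.sum_eq_multiset_sum, Finset.sum_eq_multiset_sum]
  exact h5

lemma re_trace_eq_sum_eigen {M : Matrix ι ι ℂ} (hM : M.IsHermitian) :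
    M.trace.re = ∑ i, hM.eigenvalues i := by
  obtain ⟨U, hU, hMeq⟩ := spectral_decomp hM
  have h : M.trace = ∑ i, ((hM.eigenvalues i : ℝ) : ℂ) := by
    conv_lhs => rw [hMeq]
    rw [Matrix.trace_mul_cycle, mul_eq_one_comm.mp hU, Matrix.one_mul,
      Matrix.trace_diagonal]
  rw [h, Complex.re_sum]
  simp

lemma vnEntropy_of_isHermitian {M : Matrix ι ι ℂ} (hM : M.IsHermitian) :
    vnEntropy M = ∑ i, Real.negMulLog (hM.eigenvalues i) := dif_pos hM

lemma isHermitian_real_smul {M : Matrix ι ι ℂ} (hM : M.IsHermitian) (r : ℝ) :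
    ((r : ℂ) • M).IsHermitian := by
  rw [Matrix.IsHermitian, Matrix.conjTranspose_smul, hM.eq]
  congr 1
  simp

lemma vnEntropy_real_smul {M : Matrix ι ι ℂ} (hM : M.IsHermitian) (r : ℝ) :
    vnEntropy ((r : ℂ) • M) = r * vnEntropy M + M.trace.re * Real.negMulLog r := by
  obtain ⟨U, hU, hMeq⟩ := spectral_decomp hM
  have heq : (r : ℂ) • M
      = U * Matrix.diagonal (fun i => ((r * hM.eigenvalues i : ℝ) : ℂ)) * star U := by
    conv_lhs => rw [hMeq]
    rw [← smul_mul_assoc, ← mul_smul_comm]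
    congr 2
    ext i j
    rcases eq_or_ne i j with rfl | hij
    · simp [Matrix.smul_apply, Complex.ofReal_mul]
    · simp [Matrix.diagonal_apply_ne _ hij]
  rw [vnEntropy_of_isHermitian (isHermitian_real_smul hM r),
    sum_f_eigen (isHermitian_real_smul hM r) _ U hU heq Real.negMulLog,
    vnEntropy_of_isHermitian hM, re_trace_eq_sum_eigen hM]
  simp_rw [Real.negMulLog_mul]
  rw [Finset.sum_add_distrib, ← Finset.sum_mul, ← Finset.mul_sum]
  ring

section Kron

variable {κ μ : Type*} [Fintype κ] [DecidableEq κ] [Fintype μ] [DecidableEq μ]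

lemma kron_conjTranspose (A : Matrix κ κ ℂ) (B : Matrix μ μ ℂ) :
    (A ⊗ₖ B)ᴴ = Aᴴ ⊗ₖ Bᴴ := by
  ext i j
  simp [Matrix.conjTranspose_apply, mul_comm]

lemma vnEntropy_kronecker {A : Matrix κ κ ℂ} {B : Matrix μ μ ℂ}
    (hA : A.IsHermitian) (hB : B.IsHermitian) :
    vnEntropy (A ⊗ₖ B) = A.trace.re * vnEntropy B + B.trace.re * vnEntropy A := by
  obtain ⟨U, hU, hAeq⟩ := spectral_decomp hA
  obtain ⟨V, hV, hBeq⟩ := spectral_decomp hB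
  have hK : (A ⊗ₖ B).IsHermitian := by
    rw [Matrix.IsHermitian, kron_conjTranspose, hA.eq, hB.eq]
  have hstar : star (U ⊗ₖ V) = star U ⊗ₖ star V := by
    rw [Matrix.star_eq_conjTranspose, kron_conjTranspose, ← Matrix.star_eq_conjTranspose,
      ← Matrix.star_eq_conjTranspose]
  have hUV : (U ⊗ₖ V) * star (U ⊗ₖ V) = 1 := by
    rw [hstar, ← Matrix.mul_kronecker_mul, hU, hV, Matrix.one_kronecker_one]
  have heq : A ⊗ₖ B = (U ⊗ₖ V)
      * Matrix.diagonal (fun ij : κ × μ =>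
          ((hA.eigenvalues ij.1 * hB.eigenvalues ij.2 : ℝ) : ℂ))
      * star (U ⊗ₖ V) := by
    have h2 : Matrix.diagonal (fun ij : κ × μ =>
          ((hA.eigenvalues ij.1 * hB.eigenvalues ij.2 : ℝ) : ℂ))
        = (Matrix.diagonal fun i => ((hA.eigenvalues i : ℝ) : ℂ))
          ⊗ₖ (Matrix.diagonal fun j => ((hB.eigenvalues j : ℝ) : ℂ)) := by
      rw [Matrix.diagonal_kronecker_diagonal]
      congr 1
      funext ij
      push_cast
      ring
    rw [hstar, h2, ← Matrix.mul_kronecker_mul, ← Matrix.mul_kronecker_mul, ← hAeq, ← hBeq]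
  rw [vnEntropy_of_isHermitian hK,
    sum_f_eigen hK _ _ hUV heq Real.negMulLog,
    vnEntropy_of_isHermitian hA, vnEntropy_of_isHermitian hB,
    re_trace_eq_sum_eigen hA, re_trace_eq_sum_eigen hB]
  have hinner : ∀ i, ∑ j, Real.negMulLog (hA.eigenvalues i * hB.eigenvalues j)
      = (∑ j, hB.eigenvalues j) * Real.negMulLog (hA.eigenvalues i)
        + hA.eigenvalues i * ∑ j, Real.negMulLog (hB.eigenvalues j) := by
    intro i
    simp_rw [Real.negMulLog_mul]
    rw [Finset.sum_add_distrib, ← Finset.sum_mul, ← Finset.mul_sum]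
  rw [Fintype.sum_prod_type]
  simp_rw [hinner]
  rw [Finset.sum_add_distrib, ← Finset.mul_sum, ← Finset.sum_mul]
  ring

end Kron

section Block

variable {o : Type*} {κ : o → Type*} [Fintype o] [DecidableEq o]
  [∀ i, Fintype (κ i)] [∀ i, DecidableEq (κ i)]

lemma isHermitian_blockDiagonal' {B : ∀ i, Matrix (κ i) (κ i) ℂ}
    (hB : ∀ i, (B i).IsHermitian) : (Matrix.blockDiagonal' B).IsHermitian := by
  rw [Matrix.IsHermitian, Matrix.blockDiagonal'_conjTranspose]
  exact congrArg _ (funext fun i => (hB i).eq)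

lemma vnEntropy_blockDiagonal' {B : ∀ i, Matrix (κ i) (κ i) ℂ}
    (hB : ∀ i, (B i).IsHermitian) :
    vnEntropy (Matrix.blockDiagonal' B) = ∑ i, vnEntropy (B i) := by
  choose U hU hBeq using fun i => spectral_decomp (hB i)
  have hU' : Matrix.blockDiagonal' U * star (Matrix.blockDiagonal' U) = 1 := by
    rw [Matrix.star_eq_conjTranspose, Matrix.blockDiagonal'_conjTranspose,
      ← Matrix.blockDiagonal'_mul]
    have h1 : (fun i => U i * (U i)ᴴ) = (1 : ∀ i : o, Matrix (κ i) (κ i) ℂ) := by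
      funext i
      rw [← Matrix.star_eq_conjTranspose]
      simpa using hU i
    rw [h1, Matrix.blockDiagonal'_one]
  have heq : Matrix.blockDiagonal' B = Matrix.blockDiagonal' U
      * Matrix.diagonal (fun ik : Σ i, κ i => (((hB ik.1).eigenvalues ik.2 : ℝ) : ℂ))
      * star (Matrix.blockDiagonal' U) := by
    rw [Matrix.star_eq_conjTranspose, Matrix.blockDiagonal'_conjTranspose,
      ← Matrix.blockDiagonal'_diagonal (fun i k => (((hB i).eigenvalues k : ℝ) : ℂ)),
      ← Matrix.blockDiagonal'_mul, ← Matrix.blockDiagonal'_mul]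
    exact congrArg _ (funext fun i => by
      rw [← Matrix.star_eq_conjTranspose, ← hBeq i])
  rw [vnEntropy_of_isHermitian (isHermitian_blockDiagonal' hB),
    sum_f_eigen (isHermitian_blockDiagonal' hB) _ _ hU' heq Real.negMulLog]
  rw [← Finset.univ_sigma_univ, Finset.sum_sigma]
  exact Finset.sum_congr rfl fun i _ => (vnEntropy_of_isHermitian (hB i)).symm

end Block

end Disint

/-- Suppose `f : ⊕_y M_{n y} → ⊕_x M_{m x}` (with multiplicities `c x y`,
so that the `x`-th summand is indexed by `Σ y, Fin (c x y) × Fin (n y)`) is given by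
`f(⊕_y B_y) = ⊕_x ⊞_y (1_{c x y} ⊗ B_y)`, `ω` has data `(p, ρ)` and `ω ∘ f` has data
`(q, σ)`. If a disintegration exists, i.e. there are positive semidefinite
`τ y x ∈ M_{c x y}(ℂ)` with `tr(∑ₓ τ y x) = 1` whenever `q y ≠ 0` and
`pₓ ρₓ = ⊞_y (τ y x ⊗ q_y σ_y)`, then
`S(ω) - S(ω ∘ f) = ∑_{y : q y ≠ 0} q_y S(⊞ₓ τ y x) ≥ 0`. -/
theorem disintegration_entropy_change_nonneg
    {X Y : Type*} [Fintype X] [Fintype Y] [DecidableEq X] [DecidableEq Y]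
    (n : Y → ℕ) (c : X → Y → ℕ)
    (p : X → ℝ)
    (ρ : ∀ x, Matrix ((y : Y) × (Fin (c x y) × Fin (n y)))
                     ((y : Y) × (Fin (c x y) × Fin (n y))) ℂ)
    (hpρ : IsStateData p ρ)
    (q : Y → ℝ) (σ : ∀ y, Matrix (Fin (n y)) (Fin (n y)) ℂ)
    (hqσ : IsStateData q σ)
    (hpull : ∀ B : ∀ y, Matrix (Fin (n y)) (Fin (n y)) ℂ,
      stateOfData p ρ (fun x => Matrix.blockDiagonal'
        (fun y => (1 : Matrix (Fin (c x y)) (Fin (c x y)) ℂ) ⊗ₖ B y))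
        = stateOfData q σ B)
    (τ : ∀ y x, Matrix (Fin (c x y)) (Fin (c x y)) ℂ)
    (hτ : ∀ y x, (τ y x).PosSemidef)
    (hτtr : ∀ y, q y ≠ 0 → ∑ x, (τ y x).trace = 1)
    (hdis : ∀ x, (p x : ℂ) • ρ x
      = Matrix.blockDiagonal' (fun y => τ y x ⊗ₖ ((q y : ℂ) • σ y))) :
    segalEntropy p ρ - segalEntropy q σ
      = ∑ y ∈ Finset.univ.filter (fun y => q y ≠ 0),
          q y * vnEntropy (Matrix.blockDiagonal' (fun x => τ y x)) ∧
    0 ≤ segalEntropy p ρ - segalEntropy q σ := by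
  classical
  obtain ⟨⟨hp0, hp1⟩, hρ⟩ := hpρ
  obtain ⟨⟨hq0, hq1⟩, hσ⟩ := hqσ
  have hρh : ∀ x, (ρ x).IsHermitian := fun x => (hρ x).1.1
  have hσh : ∀ y, (σ y).IsHermitian := fun y => (hσ y).1.1
  have hτh : ∀ y x, (τ y x).IsHermitian := fun y x => (hτ y x).1
  have hρtr : ∀ x, (ρ x).trace.re = 1 := fun x => by rw [(hρ x).2]; simp
  have hσtr : ∀ y, (σ y).trace.re = 1 := fun y => by rw [(hσ y).2]; simp
  have hqσh : ∀ y, ((q y : ℂ) • σ y).IsHermitian := fun y =>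
    Disint.isHermitian_real_smul (hσh y) (q y)
  have hqσtr : ∀ y, ((q y : ℂ) • σ y).trace.re = q y := fun y => by
    rw [Matrix.trace_smul, (hσ y).2, smul_eq_mul, mul_one, Complex.ofReal_re]
  have hsegρ : ∑ x, vnEntropy ((p x : ℂ) • ρ x) = segalEntropy p ρ := by
    have h : ∀ x : X, vnEntropy ((p x : ℂ) • ρ x)
        = p x * vnEntropy (ρ x) + Real.negMulLog (p x) := fun x => by
      rw [Disint.vnEntropy_real_smul (hρh x) (p x), hρtr x, one_mul]
    rw [Finset.sum_congr rfl fun x _ => h x, Finset.sum_add_distrib]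
    unfold segalEntropy shannonEntropy
    ring
  have hsegσ : ∑ y, vnEntropy ((q y : ℂ) • σ y) = segalEntropy q σ := by
    have h : ∀ y : Y, vnEntropy ((q y : ℂ) • σ y)
        = q y * vnEntropy (σ y) + Real.negMulLog (q y) := fun y => by
      rw [Disint.vnEntropy_real_smul (hσh y) (q y), hσtr y, one_mul]
    rw [Finset.sum_congr rfl fun y _ => h y, Finset.sum_add_distrib]
    unfold segalEntropy shannonEntropy
    ring
  have hB : ∀ x, vnEntropy ((p x : ℂ) • ρ x)
      = ∑ y, ((τ y x).trace.re * vnEntropy ((q y : ℂ) • σ y) + q y * vnEntropy (τ y x)) := by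
    intro x
    rw [hdis x, Disint.vnEntropy_blockDiagonal' (fun y => by
      rw [Matrix.IsHermitian, Disint.kron_conjTranspose, (hτh y x).eq, (hqσh y).eq])]
    exact Finset.sum_congr rfl fun y _ => by
      rw [Disint.vnEntropy_kronecker (hτh y x) (hqσh y), hqσtr y]
  have hsumτ : ∀ y, q y ≠ 0 → ∑ x, (τ y x).trace.re = 1 := by
    intro y hy
    have h := congrArg Complex.re (hτtr y hy)
    rwa [Complex.re_sum, Complex.one_re] at h
  have hzero : ∀ y, q y = 0 → vnEntropy ((q y : ℂ) • σ y) = 0 := by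
    intro y hy
    rw [Disint.vnEntropy_real_smul (hσh y) (q y), hy]
    simp
  have hC : ∑ x, vnEntropy ((p x : ℂ) • ρ x)
      = ∑ y, vnEntropy ((q y : ℂ) • σ y) + ∑ y, q y * ∑ x, vnEntropy (τ y x) := by
    calc ∑ x, vnEntropy ((p x : ℂ) • ρ x)
        = ∑ y, ∑ x, ((τ y x).trace.re * vnEntropy ((q y : ℂ) • σ y)
            + q y * vnEntropy (τ y x)) := by
          rw [Finset.sum_congr rfl fun x _ => hB x]
          exact Finset.sum_comm
      _ = ∑ y, (vnEntropy ((q y : ℂ) • σ y) + q y * ∑ x, vnEntropy (τ y x)) := by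
          refine Finset.sum_congr rfl fun y _ => ?_
          rw [Finset.sum_add_distrib, ← Finset.sum_mul, ← Finset.mul_sum]
          by_cases hy : q y = 0
          · rw [hzero y hy]
            ring
          · rw [hsumτ y hy, one_mul]
      _ = _ := Finset.sum_add_distrib
  have hkey : segalEntropy p ρ - segalEntropy q σ = ∑ y, q y * ∑ x, vnEntropy (τ y x) := by
    rw [← hsegρ, ← hsegσ, hC]
    ring
  have hblock : ∀ y, vnEntropy (Matrix.blockDiagonal' (fun x => τ y x))
      = ∑ x, vnEntropy (τ y x) := fun y => Disint.vnEntropy_blockDiagonal' (fun x => hτh y x)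
  have hfilter : ∑ y ∈ Finset.univ.filter (fun y => q y ≠ 0),
        q y * vnEntropy (Matrix.blockDiagonal' (fun x => τ y x))
      = ∑ y, q y * ∑ x, vnEntropy (τ y x) := by
    have h1 : ∑ y ∈ Finset.univ.filter (fun y => q y ≠ 0),
          q y * vnEntropy (Matrix.blockDiagonal' (fun x => τ y x))
        = ∑ y, q y * vnEntropy (Matrix.blockDiagonal' (fun x => τ y x)) := by
      apply Finset.sum_filter_of_ne
      intro y _ h hq
      exact h (by rw [hq, zero_mul])
    rw [h1]
    exact Finset.sum_congr rfl fun y _ => by rw [hblock y]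
  have hnonneg : 0 ≤ segalEntropy p ρ - segalEntropy q σ := by
    rw [hkey]
    apply Finset.sum_nonneg
    intro y _
    by_cases hy : q y = 0
    · rw [hy, zero_mul]
    · apply mul_nonneg (hq0 y)
      apply Finset.sum_nonneg
      intro x _
      rw [Disint.vnEntropy_of_isHermitian (hτh y x)]
      apply Finset.sum_nonneg
      intro i _
      refine Real.negMulLog_nonneg ((hτ y x).eigenvalues_nonneg i) ?_
      have htr : (hτh y x).eigenvalues i ≤ (τ y x).trace.re := by
        rw [Disint.re_trace_eq_sum_eigen (hτh y x)]
        exact Finset.single_le_sum (fun j _ => (hτ y x).eigenvalues_nonneg j)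
          (Finset.mem_univ i)
      have htr2 : (τ y x).trace.re ≤ 1 := by
        rw [← hsumτ y hy]
        have hnn : ∀ x' ∈ Finset.univ, (0 : ℝ) ≤ (τ y x').trace.re := by
          intro x' _
          rw [Disint.re_trace_eq_sum_eigen (hτh y x')]
          exact Finset.sum_nonneg fun j _ => (hτ y x').eigenvalues_nonneg j
        exact Finset.single_le_sum hnn (Finset.mem_univ x)
      linarith
  exact ⟨hkey.trans hfilter.symm, hnonneg⟩
end
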